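/- arXiv:0710.0768 — 7 statements merged into one kernel-verified Lean document; each statement's English description precedes it below -/
import Mathlib

section
/- Let ψ ∈ ℋ₁ be an eigenvector of the Floquet (monodromy) operator U(T,0), i.e. U(T,0)ψ = λψ for some λ ∈ ℂ (necessarily |λ| = 1). Then the function F_ψ(t) := ‖H(t)U(t,0)ψ‖_{−1} = sup{ |q(t)(U(t,0)ψ, g)| : g ∈ ℋ₁, ‖g‖₁ ≤ 1 } is bounded on ℝ: sup_{t∈ℝ} F_ψ(t) < ∞. -/
open Filter

/-- The form norm `‖u‖₁ = (‖u‖² + q(0)(u,u))^{1/2}` associated with the form family `q`. -/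
noncomputable def formNorm {ℋ : Type*} [NormedAddCommGroup ℋ] [InnerProductSpace ℂ ℋ]
    (q : ℝ → ℋ → ℋ → ℂ) (u : ℋ) : ℝ :=
  Real.sqrt (‖u‖ ^ 2 + (q 0 u u).re)

/-- Auxiliary type synonym: the form domain `D1` regarded as a bare type, on which the
`ℋ₁` norm will be installed. -/
def H1Aux {ℋ : Type*} [NormedAddCommGroup ℋ] [InnerProductSpace ℂ ℋ]
    (D1 : Submodule ℂ ℋ) : Type _ := ↥D1

set_option maxHeartbeats 1600000 in
/-- if `ψ ∈ ℋ₁` is an eigenvector of the monodromy operator `U(T,0)`, then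
`F_ψ(t) = ‖H(t)U(t,0)ψ‖₋₁ = sup{ |q(t)(U(t,0)ψ,g)| : g ∈ ℋ₁, ‖g‖₁ ≤ 1 }` is bounded on ℝ. -/
theorem stmt_3
    {ℋ : Type*} [NormedAddCommGroup ℋ] [InnerProductSpace ℂ ℋ] [CompleteSpace ℋ]
    [SecondCountableTopology ℋ]
    (T : ℝ) (hT : 0 < T)
    -- the family of closed densely defined positive forms q(t) with common domain D1 = ℋ₁
    (D1 : Submodule ℂ ℋ) (hD1dense : Dense (D1 : Set ℋ))
    (q : ℝ → ℋ → ℋ → ℂ)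
    (hq_smul : ∀ t : ℝ, ∀ c : ℂ, ∀ u v : ℋ, u ∈ D1 → v ∈ D1 →
      q t (c • u) v = (starRingEnd ℂ) c * q t u v)
    (hq_add : ∀ t : ℝ, ∀ u u' v : ℋ, u ∈ D1 → u' ∈ D1 → v ∈ D1 →
      q t (u + u') v = q t u v + q t u' v)
    (hq_herm : ∀ t : ℝ, ∀ u v : ℋ, u ∈ D1 → v ∈ D1 → q t u v = (starRingEnd ℂ) (q t v u))
    (hq_pos : ∀ t : ℝ, ∀ u : ℋ, u ∈ D1 → 0 ≤ (q t u u).re ∧ (q t u u).im = 0)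
    (hq_per : ∀ t : ℝ, ∀ u v : ℋ, q (t + T) u v = q t u v)
    (hq_closed : ∀ t : ℝ, ∀ u : ℕ → ℋ, (∀ n, u n ∈ D1) → ∀ L : ℋ,
      Tendsto u atTop (nhds L) →
      (∀ ε > (0 : ℝ), ∃ N, ∀ m ≥ N, ∀ n ≥ N,
        ‖u m - u n‖ ^ 2 + (q t (u m - u n) (u m - u n)).re < ε) →
      L ∈ D1 ∧ Tendsto (fun n => (q t (u n - L) (u n - L)).re) atTop (nhds 0))
    -- assumption (1): C⁻¹(H(0)+1) ≤ H(t) ≤ C(H(0)+1), C ≥ 1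
    (C : ℝ) (hC : 1 ≤ C)
    (hcomp : ∀ t : ℝ, ∀ u : ℋ, u ∈ D1 →
      C⁻¹ * ((q 0 u u).re + ‖u‖ ^ 2) ≤ (q t u u).re ∧
        (q t u u).re ≤ C * ((q 0 u u).re + ‖u‖ ^ 2))
    -- assumption (2): t ↦ H(t)⁻¹ is norm-differentiable and ‖√H(t)(d/dt H(t)⁻¹)√H(t)‖ ≤ C,
    -- where R t = H(t)⁻¹, R' its norm derivative and sqH t = √H(t) on D1
    (R R' : ℝ → ℋ →L[ℂ] ℋ)
    (hRD1 : ∀ t : ℝ, ∀ v : ℋ, R t v ∈ D1)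
    (hRinv : ∀ t : ℝ, ∀ v : ℋ, ∀ u ∈ D1, q t u (R t v) = (inner ℂ u v : ℂ))
    (hR' : ∀ t : ℝ, HasDerivAt R (R' t) t)
    (sqH : ℝ → ℋ → ℋ)
    (hsqH : ∀ t : ℝ, ∀ u v : ℋ, u ∈ D1 → v ∈ D1 →
      (inner ℂ (sqH t u) (sqH t v) : ℂ) = q t u v)
    (hsqHsym : ∀ t : ℝ, ∀ u v : ℋ, u ∈ D1 → v ∈ D1 →
      (inner ℂ (sqH t u) v : ℂ) = inner ℂ u (sqH t v))
    (hsqHbound : ∀ t : ℝ, ∀ u v : ℋ, u ∈ D1 → v ∈ D1 →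
      ‖(inner ℂ (sqH t u) (R' t (sqH t v)) : ℂ)‖ ≤ C * ‖u‖ * ‖v‖)
    -- the propagator U(t,s) of Theorem II.27 of Simon (quadratic forms)
    (U : ℝ → ℝ → ℋ →L[ℂ] ℋ)
    (hUcont : ∀ ψ : ℋ, Continuous fun p : ℝ × ℝ => U p.1 p.2 ψ)
    (hUnorm : ∀ t s : ℝ, ∀ ψ : ℋ, ‖U t s ψ‖ = ‖ψ‖)
    (hUid : ∀ t : ℝ, U t t = 1)
    (hUck : ∀ t r s : ℝ, (U t r).comp (U r s) = U t s)
    (hUper : ∀ t s : ℝ, U (t + T) (s + T) = U t s)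
    (hUD1 : ∀ t : ℝ, ∀ ψ ∈ D1, U t 0 ψ ∈ D1)
    -- point 1: ℋ₁-weak continuity of the trajectories
    (hweakcont : ∀ ψ₀ ∈ D1, ∀ g ∈ D1,
      Continuous fun t => (inner ℂ g (U t 0 ψ₀) : ℂ) + q 0 g (U t 0 ψ₀))
    -- point 2: the weak Schrödinger equation −i d/dt ⟨g, ψ(t)⟩ + q(t)(g, ψ(t)) = 0
    (hweakSchr : ∀ ψ₀ ∈ D1, ∀ g ∈ D1, ∀ t : ℝ,
      HasDerivAt (fun τ => (inner ℂ g (U τ 0 ψ₀) : ℂ)) (-(Complex.I * q t g (U t 0 ψ₀))) t)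
    -- point 3: lim_{t→s} ‖(ψ(t)−ψ(s))/(t−s) + iH(t)ψ(t)‖₋₁ = 0
    (hcond3 : ∀ ψ₀ ∈ D1, ∀ s : ℝ,
      Tendsto (fun t =>
          sSup {r : ℝ | ∃ g ∈ D1, formNorm q g ≤ 1 ∧
            r = ‖((t - s)⁻¹ : ℝ) • ((inner ℂ (U t 0 ψ₀ - U s 0 ψ₀) g : ℂ))
                  - Complex.I * q t (U t 0 ψ₀) g‖})
        (nhdsWithin s {s}ᶜ) (nhds 0))
    -- ψ ∈ ℋ₁ is an eigenvector of the Floquet operator U(T,0)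
    (ψ : ℋ) (hψ : ψ ∈ D1) (lam : ℂ) (heig : U T 0 ψ = lam • ψ) :
    ∃ M : ℝ, ∀ t : ℝ, ∀ g ∈ D1, formNorm q g ≤ 1 → ‖q t (U t 0 ψ) g‖ ≤ M := by
  classical
  -- Trivial case ψ = 0
  by_cases hψ0 : ψ = 0
  · refine ⟨0, fun t g hg _ => ?_⟩
    have h0 : q t (U t 0 ψ) g = 0 := by
      rw [hψ0, map_zero]
      have h := hq_smul t 0 g g hg hg
      simpa using h
    simp [h0]
  -- |λ| = 1
  have hψn : ‖ψ‖ ≠ 0 := by simpa using hψ0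
  have hlam : ‖lam‖ = 1 := by
    have h1 : ‖U T 0 ψ‖ = ‖ψ‖ := hUnorm T 0 ψ
    rw [heig, norm_smul] at h1
    exact mul_right_cancel₀ hψn (by rw [h1, one_mul])
  have hφD1 : ∀ t : ℝ, U t 0 ψ ∈ D1 := fun t => hUD1 t ψ hψ
  -- periodicity of the trajectory up to the eigenvalue phase
  have hφper : ∀ t : ℝ, U (t + T) 0 ψ = lam • U t 0 ψ := by
    intro t
    have h1 : U (t + T) 0 ψ = U (t + T) T (U T 0 ψ) := by
      rw [← hUck (t + T) T 0]; rfl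
    have h2 : U (t + T) T = U t 0 := by
      have h := hUper t 0; rwa [zero_add] at h
    rw [h1, heig, map_smul, h2]
  -- periodicity of t ↦ ‖q t (U t 0 ψ) g‖
  have hper_norm : ∀ g ∈ D1, Function.Periodic (fun t => ‖q t (U t 0 ψ) g‖) T := by
    intro g hg t
    simp only
    rw [hq_per, hφper, hq_smul t lam _ g (hφD1 t) hg, norm_mul, RCLike.norm_conj, hlam, one_mul]
  -- reduction to [0, T]
  have hred : ∀ t : ℝ, ∃ s ∈ Set.Icc (0:ℝ) T, ∀ g ∈ D1,
      ‖q t (U t 0 ψ) g‖ = ‖q s (U s 0 ψ) g‖ := by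
    intro t
    refine ⟨t - (⌊t / T⌋ : ℝ) * T, ?_, ?_⟩
    · have hf1 : ((⌊t / T⌋ : ℝ)) ≤ t / T := Int.floor_le _
      have hf2 : t / T < (⌊t / T⌋ : ℝ) + 1 := Int.lt_floor_add_one _
      have hm1 : (⌊t / T⌋ : ℝ) * T ≤ (t / T) * T :=
        mul_le_mul_of_nonneg_right hf1 hT.le
      have hm2 : (t / T) * T ≤ ((⌊t / T⌋ : ℝ) + 1) * T :=
        mul_le_mul_of_nonneg_right hf2.le hT.le
      rw [div_mul_cancel₀ _ hT.ne'] at hm1 hm2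
      constructor <;> [linarith; nlinarith]
    · intro g hg
      exact ((hper_norm g hg).sub_int_mul_eq ⌊t / T⌋).symm
  -- orthogonality to the dense domain implies zero
  have horth : ∀ d : ℋ, (∀ g ∈ D1, (inner ℂ d g : ℂ) = 0) → d = 0 := by
    intro d hd
    have hclosed : IsClosed {x : ℋ | (inner ℂ d x : ℂ) = 0} :=
      isClosed_eq (continuous_const.inner continuous_id) continuous_const
    have hall : (inner ℂ d d : ℂ) = 0 := by
      have hx : d ∈ closure (D1 : Set ℋ) := by
        rw [hD1dense.closure_eq]; exact Set.mem_univ d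
      exact closure_minimal (fun y hy => hd y hy) hclosed hx
    exact inner_self_eq_zero.mp hall
  -- linearity of sqH 0 on D1
  have hS_add : ∀ u v : ℋ, u ∈ D1 → v ∈ D1 → sqH 0 (u + v) = sqH 0 u + sqH 0 v := by
    intro u v hu hv
    have key : ∀ g ∈ D1,
        (inner ℂ (sqH 0 (u + v) - sqH 0 u - sqH 0 v) g : ℂ) = 0 := by
      intro g hg
      rw [inner_sub_left, inner_sub_left, hsqHsym 0 (u + v) g (D1.add_mem hu hv) hg,
        hsqHsym 0 u g hu hg, hsqHsym 0 v g hv hg, inner_add_left]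
      ring
    have h := horth _ key
    rw [sub_sub, sub_eq_zero] at h
    exact h
  have hS_smul : ∀ (c : ℂ) (u : ℋ), u ∈ D1 → sqH 0 (c • u) = c • sqH 0 u := by
    intro c u hu
    have key : ∀ g ∈ D1, (inner ℂ (sqH 0 (c • u) - c • sqH 0 u) g : ℂ) = 0 := by
      intro g hg
      rw [inner_sub_left, hsqHsym 0 (c • u) g (D1.smul_mem c hu) hg, inner_smul_left,
        inner_smul_left, hsqHsym 0 u g hu hg]
      ring
    have h := horth _ key
    rwa [sub_eq_zero] at h
  have hS_sub : ∀ u v : ℋ, u ∈ D1 → v ∈ D1 → sqH 0 (u - v) = sqH 0 u - sqH 0 v := by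
    intro u v hu hv
    have h1 : u - v = u + (-1 : ℂ) • v := by
      rw [neg_smul, one_smul, ← sub_eq_add_neg]
    rw [h1, hS_add u _ hu (D1.smul_mem _ hv), hS_smul (-1) v hv, neg_smul, one_smul,
      ← sub_eq_add_neg]
  -- ‖sqH t u‖² = Re q t u u
  have hsqsq : ∀ (t : ℝ) (u : ℋ), u ∈ D1 → ‖sqH t u‖ ^ 2 = (q t u u).re := by
    intro t u hu
    have h := hsqH t u u hu hu
    have h2 : RCLike.re (inner ℂ (sqH t u) (sqH t u) : ℂ) = ‖sqH t u‖ ^ 2 :=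
      inner_self_eq_norm_sq _
    rw [RCLike.re_to_complex] at h2
    rw [← h]
    exact h2.symm
  -- the Hilbert space ℋ₁ as a type synonym of D1 with the form norm
  letI : AddCommGroup (H1Aux D1) := inferInstanceAs (AddCommGroup ↥D1)
  letI : Module ℂ (H1Aux D1) := inferInstanceAs (Module ℂ ↥D1)
  let vl : H1Aux D1 → ↥D1 := fun u => u
  let mk : ↥D1 → H1Aux D1 := fun u => u
  let cv : H1Aux D1 → ℋ := fun u => ((vl u : ↥D1) : ℋ)
  -- the embedding J : ℋ₁ → ℋ × ℋ, J u = (u, sqH 0 u)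
  let J : H1Aux D1 →ₗ[ℂ] ℋ × ℋ :=
    { toFun := fun u => (cv u, sqH 0 (cv u))
      map_add' := by
        intro a b
        refine Prod.ext rfl ?_
        show sqH 0 (cv a + cv b) = sqH 0 (cv a) + sqH 0 (cv b)
        exact hS_add (cv a) (cv b) (vl a).2 (vl b).2
      map_smul' := by
        intro c a
        refine Prod.ext rfl ?_
        show sqH 0 (c • cv a) = c • sqH 0 (cv a)
        exact hS_smul c (cv a) (vl a).2 }
  have hJinj : Function.Injective J := by
    intro a b h
    exact Subtype.ext (congrArg Prod.fst h)
  letI : NormedAddCommGroup (H1Aux D1) :=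
    NormedAddCommGroup.induced (H1Aux D1) (ℋ × ℋ) J hJinj
  letI : NormedSpace ℂ (H1Aux D1) := NormedSpace.induced ℂ (H1Aux D1) (ℋ × ℋ) J
  have hnorm : ∀ u : H1Aux D1, ‖u‖ = max ‖cv u‖ ‖sqH 0 (cv u)‖ := fun u => rfl
  have hD1dist : ∀ a b : H1Aux D1,
      dist a b = max ‖cv a - cv b‖ ‖sqH 0 (cv a) - sqH 0 (cv b)‖ := by
    intro a b
    rw [dist_eq_norm, hnorm (a - b)]
    have h1 : cv (a - b) = cv a - cv b := rfl
    rw [h1, hS_sub (cv a) (cv b) (vl a).2 (vl b).2]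
  -- completeness of ℋ₁
  letI : CompleteSpace (H1Aux D1) := by
    apply Metric.complete_of_cauchySeq_tendsto
    intro u hu
    have hv : CauchySeq fun n => cv (u n) := by
      rw [Metric.cauchySeq_iff] at hu ⊢
      intro ε hε
      obtain ⟨N, hN⟩ := hu ε hε
      refine ⟨N, fun m hm n hn => lt_of_le_of_lt ?_ (hN m hm n hn)⟩
      rw [dist_eq_norm, hD1dist]
      exact le_max_left _ _
    obtain ⟨L, hL⟩ := cauchySeq_tendsto_of_complete hv
    have hcau : ∀ ε > (0:ℝ), ∃ N, ∀ m ≥ N, ∀ n ≥ N,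
        ‖cv (u m) - cv (u n)‖ ^ 2
          + (q 0 (cv (u m) - cv (u n)) (cv (u m) - cv (u n))).re < ε := by
      intro ε hε
      have hε2 : (0:ℝ) < ε / 2 := by linarith
      obtain ⟨N, hN⟩ := Metric.cauchySeq_iff.mp hu (Real.sqrt (ε / 2))
        (Real.sqrt_pos.mpr hε2)
      refine ⟨N, fun m hm n hn => ?_⟩
      have hd := hN m hm n hn
      rw [hD1dist] at hd
      have h1 : ‖cv (u m) - cv (u n)‖ < Real.sqrt (ε / 2) :=
        lt_of_le_of_lt (le_max_left _ _) hd
      have h2 : ‖sqH 0 (cv (u m)) - sqH 0 (cv (u n))‖ < Real.sqrt (ε / 2) :=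
        lt_of_le_of_lt (le_max_right _ _) hd
      have h3 : (q 0 (cv (u m) - cv (u n)) (cv (u m) - cv (u n))).re
          = ‖sqH 0 (cv (u m)) - sqH 0 (cv (u n))‖ ^ 2 := by
        rw [← hS_sub _ _ (vl (u m)).2 (vl (u n)).2,
          ← hsqsq 0 _ (D1.sub_mem (vl (u m)).2 (vl (u n)).2)]
      have hsq := Real.sq_sqrt hε2.le
      rw [h3]
      nlinarith [norm_nonneg (cv (u m) - cv (u n)),
        norm_nonneg (sqH 0 (cv (u m)) - sqH 0 (cv (u n))), Real.sqrt_nonneg (ε / 2)]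
    obtain ⟨hLD1, hq0t⟩ := hq_closed 0 (fun n => cv (u n)) (fun n => (vl (u n)).2) L hL hcau
    refine ⟨mk ⟨L, hLD1⟩, ?_⟩
    rw [tendsto_iff_dist_tendsto_zero]
    have t1 : Tendsto (fun n => ‖cv (u n) - L‖) atTop (nhds 0) :=
      tendsto_iff_norm_sub_tendsto_zero.mp hL
    have t2 : Tendsto (fun n => ‖sqH 0 (cv (u n)) - sqH 0 L‖) atTop (nhds 0) := by
      have h4 : ∀ n, ‖sqH 0 (cv (u n)) - sqH 0 L‖
          = Real.sqrt ((q 0 (cv (u n) - L) (cv (u n) - L)).re) := by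
        intro n
        rw [← hS_sub _ _ (vl (u n)).2 hLD1, ← hsqsq 0 _ (D1.sub_mem (vl (u n)).2 hLD1),
          Real.sqrt_sq (norm_nonneg _)]
      simp only [h4]
      have h5 := hq0t.sqrt
      rwa [Real.sqrt_zero] at h5
    have h6 := t1.max t2
    rw [max_self] at h6
    refine Tendsto.congr (fun n => ?_) h6
    rw [hD1dist]
  -- the Riesz functionals ℓ t of the trajectory in ℋ₁
  let ℓ : ℝ → H1Aux D1 →L[ℂ] ℂ := fun t =>
    LinearMap.mkContinuous
      { toFun := fun g => (inner ℂ (U t 0 ψ) (cv g) : ℂ)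
          + (inner ℂ (sqH 0 (U t 0 ψ)) (sqH 0 (cv g)) : ℂ)
        map_add' := by
          intro a b
          show (inner ℂ (U t 0 ψ) (cv a + cv b) : ℂ)
              + (inner ℂ (sqH 0 (U t 0 ψ)) (sqH 0 (cv a + cv b)) : ℂ) = _
          rw [hS_add (cv a) (cv b) (vl a).2 (vl b).2, inner_add_right, inner_add_right]
          ring
        map_smul' := by
          intro c a
          show (inner ℂ (U t 0 ψ) (c • cv a) : ℂ)
              + (inner ℂ (sqH 0 (U t 0 ψ)) (sqH 0 (c • cv a)) : ℂ) = _
          rw [hS_smul c (cv a) (vl a).2, inner_smul_right, inner_smul_right,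
            RingHom.id_apply, smul_eq_mul]
          ring }
      (‖U t 0 ψ‖ + ‖sqH 0 (U t 0 ψ)‖)
      (by
        intro g
        have hb1 : ‖(inner ℂ (U t 0 ψ) (cv g) : ℂ)‖ ≤ ‖U t 0 ψ‖ * ‖g‖ := by
          refine le_trans (norm_inner_le_norm _ _) ?_
          refine mul_le_mul_of_nonneg_left ?_ (norm_nonneg _)
          rw [hnorm]; exact le_max_left _ _
        have hb2 : ‖(inner ℂ (sqH 0 (U t 0 ψ)) (sqH 0 (cv g)) : ℂ)‖
            ≤ ‖sqH 0 (U t 0 ψ)‖ * ‖g‖ := by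
          refine le_trans (norm_inner_le_norm _ _) ?_
          refine mul_le_mul_of_nonneg_left ?_ (norm_nonneg _)
          rw [hnorm]; exact le_max_right _ _
        calc ‖(inner ℂ (U t 0 ψ) (cv g) : ℂ) + (inner ℂ (sqH 0 (U t 0 ψ)) (sqH 0 (cv g)) : ℂ)‖
            ≤ ‖(inner ℂ (U t 0 ψ) (cv g) : ℂ)‖
              + ‖(inner ℂ (sqH 0 (U t 0 ψ)) (sqH 0 (cv g)) : ℂ)‖ := norm_add_le _ _
          _ ≤ ‖U t 0 ψ‖ * ‖g‖ + ‖sqH 0 (U t 0 ψ)‖ * ‖g‖ := add_le_add hb1 hb2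
          _ = (‖U t 0 ψ‖ + ‖sqH 0 (U t 0 ψ)‖) * ‖g‖ := by ring)
  -- pointwise boundedness on [0, T] via weak ℋ₁-continuity
  have hpt : ∀ g : H1Aux D1, ∃ Cg : ℝ, ∀ i : Set.Icc (0:ℝ) T, ‖ℓ (i : ℝ) g‖ ≤ Cg := by
    intro g
    have hcont : Continuous fun t =>
        (inner ℂ (cv g) (U t 0 ψ) : ℂ) + q 0 (cv g) (U t 0 ψ) :=
      hweakcont ψ hψ (cv g) (vl g).2
    have heqn : ∀ t : ℝ, ‖ℓ t g‖
        = ‖(inner ℂ (cv g) (U t 0 ψ) : ℂ) + q 0 (cv g) (U t 0 ψ)‖ := by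
      intro t
      have h1 : ℓ t g = (starRingEnd ℂ)
          ((inner ℂ (cv g) (U t 0 ψ) : ℂ) + q 0 (cv g) (U t 0 ψ)) := by
        show (inner ℂ (U t 0 ψ) (cv g) : ℂ)
            + (inner ℂ (sqH 0 (U t 0 ψ)) (sqH 0 (cv g)) : ℂ) = _
        rw [map_add]
        congr 1
        · exact (inner_conj_symm (U t 0 ψ) (cv g)).symm
        · rw [hsqH 0 (U t 0 ψ) (cv g) (hφD1 t) (vl g).2]
          exact hq_herm 0 (U t 0 ψ) (cv g) (hφD1 t) (vl g).2
      rw [h1, RCLike.norm_conj]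
    have hcn : Continuous fun t =>
        ‖(inner ℂ (cv g) (U t 0 ψ) : ℂ) + q 0 (cv g) (U t 0 ψ)‖ := hcont.norm
    obtain ⟨t0, _, ht0⟩ := isCompact_Icc.exists_isMaxOn (Set.nonempty_Icc.mpr hT.le)
      hcn.continuousOn
    refine ⟨‖(inner ℂ (cv g) (U t0 0 ψ) : ℂ) + q 0 (cv g) (U t0 0 ψ)‖, fun i => ?_⟩
    rw [heqn]
    exact ht0 i.2
  obtain ⟨K, hK⟩ := banach_steinhaus (g := fun i : Set.Icc (0:ℝ) T => ℓ (i : ℝ)) hpt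
  have hK0 : (0:ℝ) ≤ K :=
    le_trans (norm_nonneg _) (hK ⟨0, Set.left_mem_Icc.mpr hT.le⟩)
  -- uniform ℋ₁ bound for the trajectory on [0, T]
  have hEn : ∀ t ∈ Set.Icc (0:ℝ) T, ‖U t 0 ψ‖ ≤ K ∧ ‖sqH 0 (U t 0 ψ)‖ ≤ K := by
    intro t ht
    set a := ‖U t 0 ψ‖ with ha
    set b := ‖sqH 0 (U t 0 ψ)‖ with hb
    have h1 : ℓ t (mk ⟨U t 0 ψ, hφD1 t⟩) = ((a ^ 2 + b ^ 2 : ℝ) : ℂ) := by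
      show (inner ℂ (U t 0 ψ) (U t 0 ψ) : ℂ)
          + (inner ℂ (sqH 0 (U t 0 ψ)) (sqH 0 (U t 0 ψ)) : ℂ) = _
      rw [inner_self_eq_norm_sq_to_K, inner_self_eq_norm_sq_to_K]
      push_cast
      rw [ha, hb]
      exact rfl
    have h2 : ‖ℓ t (mk ⟨U t 0 ψ, hφD1 t⟩)‖ ≤ K * ‖mk ⟨U t 0 ψ, hφD1 t⟩‖ := by
      refine le_trans ((ℓ t).le_opNorm _) (mul_le_mul_of_nonneg_right ?_ (norm_nonneg _))
      exact hK ⟨t, ht⟩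
    have h3 : ‖mk ⟨U t 0 ψ, hφD1 t⟩‖ = max a b := hnorm _
    have h4 : ‖ℓ t (mk ⟨U t 0 ψ, hφD1 t⟩)‖ = a ^ 2 + b ^ 2 := by
      rw [h1, Complex.norm_real, Real.norm_eq_abs, abs_of_nonneg (by positivity)]
    have h5 : a ^ 2 + b ^ 2 ≤ K * max a b := by rw [← h4, ← h3]; exact h2
    have hmax : max a b ≤ K := by
      by_contra hcon
      push_neg at hcon
      have hmpos : 0 < max a b := lt_of_le_of_lt hK0 hcon
      rcases max_cases a b with ⟨hc, -⟩ | ⟨hc, -⟩ <;> rw [hc] at h5 hcon hmpos <;>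
        nlinarith [norm_nonneg (U t 0 ψ), norm_nonneg (sqH 0 (U t 0 ψ))]
    exact ⟨le_trans (le_max_left a b) hmax, le_trans (le_max_right a b) hmax⟩
  -- main bound on [0, T]
  have hmain : ∀ t ∈ Set.Icc (0:ℝ) T, ∀ g ∈ D1, formNorm q g ≤ 1 →
      ‖q t (U t 0 ψ) g‖ ≤ C * K ^ 2 + C := by
    intro t ht g hg hgn
    have hCS : ‖q t (U t 0 ψ) g‖ ≤ ‖sqH t (U t 0 ψ)‖ * ‖sqH t g‖ := by
      rw [← hsqH t _ g (hφD1 t) hg]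
      exact norm_inner_le_norm _ _
    have hq0φ : (q 0 (U t 0 ψ) (U t 0 ψ)).re = ‖sqH 0 (U t 0 ψ)‖ ^ 2 :=
      (hsqsq 0 _ (hφD1 t)).symm
    have hEt := hEn t ht
    have hA : ‖sqH t (U t 0 ψ)‖ ^ 2 ≤ C * (K ^ 2 + K ^ 2) := by
      rw [hsqsq t _ (hφD1 t)]
      refine le_trans (hcomp t _ (hφD1 t)).2 ?_
      rw [hq0φ]
      have h6 : ‖sqH 0 (U t 0 ψ)‖ ^ 2 + ‖U t 0 ψ‖ ^ 2 ≤ K ^ 2 + K ^ 2 := by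
        nlinarith [norm_nonneg (U t 0 ψ), norm_nonneg (sqH 0 (U t 0 ψ)), hEt.1, hEt.2]
      nlinarith [h6]
    have hB : ‖sqH t g‖ ^ 2 ≤ C := by
      rw [hsqsq t g hg]
      refine le_trans (hcomp t g hg).2 ?_
      have hqnn : 0 ≤ (q 0 g g).re := (hq_pos 0 g hg).1
      have hnn : (0:ℝ) ≤ ‖g‖ ^ 2 + (q 0 g g).re := by positivity
      have hgn' : ‖g‖ ^ 2 + (q 0 g g).re ≤ 1 := by
        have hx := Real.sq_sqrt hnn
        have hfn : Real.sqrt (‖g‖ ^ 2 + (q 0 g g).re) ≤ 1 := hgn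
        nlinarith [Real.sqrt_nonneg (‖g‖ ^ 2 + (q 0 g g).re)]
      nlinarith
    nlinarith [hCS, hA, hB, norm_nonneg (sqH t (U t 0 ψ)), norm_nonneg (sqH t g),
      sq_nonneg (‖sqH t (U t 0 ψ)‖ - ‖sqH t g‖), hC]
  clear hK hpt hEn
  refine ⟨C * K ^ 2 + C, fun t g hg hgn => ?_⟩
  obtain ⟨s, hs, hfs⟩ := hred t
  rw [hfs g hg]
  exact hmain s hs g hg hgn
end

section
/- Suppose the Floquet operator U(T,0) has a pure point spectrum and admits an orthonormal basis ℬ of ℋ consisting of eigenvectors of U(T,0) all belonging to ℋ₁. Then for every initial state ψ ∈ span ℬ (finite linear combinations of vectors from ℬ), the energy is bounded in the course of time: sup_{t∈ℝ} |q(t)(U(t,0)ψ, U(t,0)ψ)| < ∞. -/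
open Filter

/-- Type synonym for the form domain `ℋ₁`, used to carry the form-norm structures. -/
def H1Space {ℋ : Type*} [NormedAddCommGroup ℋ] [InnerProductSpace ℂ ℋ]
    (D1 : Submodule ℂ ℋ) : Type _ := {x : ℋ // x ∈ D1}

/-- if the Floquet operator `U(T,0)` has pure point spectrum, with an
orthonormal (Hilbert) basis `b` of eigenvectors lying in `ℋ₁`, then for every
`ψ ∈ span b` the energy `|q(t)(U(t,0)ψ, U(t,0)ψ)|` is bounded in time. -/
theorem stmt_4
    {ℋ : Type*} [NormedAddCommGroup ℋ] [InnerProductSpace ℂ ℋ] [CompleteSpace ℋ]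
    [SecondCountableTopology ℋ]
    (T : ℝ) (hT : 0 < T)
    -- the family of closed densely defined positive forms q(t) with common domain D1 = ℋ₁
    (D1 : Submodule ℂ ℋ) (hD1dense : Dense (D1 : Set ℋ))
    (q : ℝ → ℋ → ℋ → ℂ)
    (hq_smul : ∀ t : ℝ, ∀ c : ℂ, ∀ u v : ℋ, u ∈ D1 → v ∈ D1 →
      q t (c • u) v = (starRingEnd ℂ) c * q t u v)
    (hq_add : ∀ t : ℝ, ∀ u u' v : ℋ, u ∈ D1 → u' ∈ D1 → v ∈ D1 →
      q t (u + u') v = q t u v + q t u' v)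
    (hq_herm : ∀ t : ℝ, ∀ u v : ℋ, u ∈ D1 → v ∈ D1 → q t u v = (starRingEnd ℂ) (q t v u))
    (hq_pos : ∀ t : ℝ, ∀ u : ℋ, u ∈ D1 → 0 ≤ (q t u u).re ∧ (q t u u).im = 0)
    (hq_per : ∀ t : ℝ, ∀ u v : ℋ, q (t + T) u v = q t u v)
    (hq_closed : ∀ t : ℝ, ∀ u : ℕ → ℋ, (∀ n, u n ∈ D1) → ∀ L : ℋ,
      Tendsto u atTop (nhds L) →
      (∀ ε > (0 : ℝ), ∃ N, ∀ m ≥ N, ∀ n ≥ N,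
        ‖u m - u n‖ ^ 2 + (q t (u m - u n) (u m - u n)).re < ε) →
      L ∈ D1 ∧ Tendsto (fun n => (q t (u n - L) (u n - L)).re) atTop (nhds 0))
    -- assumption (1): C⁻¹(H(0)+1) ≤ H(t) ≤ C(H(0)+1), C ≥ 1
    (C : ℝ) (hC : 1 ≤ C)
    (hcomp : ∀ t : ℝ, ∀ u : ℋ, u ∈ D1 →
      C⁻¹ * ((q 0 u u).re + ‖u‖ ^ 2) ≤ (q t u u).re ∧
        (q t u u).re ≤ C * ((q 0 u u).re + ‖u‖ ^ 2))
    -- assumption (2): t ↦ H(t)⁻¹ is norm-differentiable and ‖√H(t)(d/dt H(t)⁻¹)√H(t)‖ ≤ C,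
    -- where R t = H(t)⁻¹, R' its norm derivative and sqH t = √H(t) on D1
    (R R' : ℝ → ℋ →L[ℂ] ℋ)
    (hRD1 : ∀ t : ℝ, ∀ v : ℋ, R t v ∈ D1)
    (hRinv : ∀ t : ℝ, ∀ v : ℋ, ∀ u ∈ D1, q t u (R t v) = (inner ℂ u v : ℂ))
    (hR' : ∀ t : ℝ, HasDerivAt R (R' t) t)
    (sqH : ℝ → ℋ → ℋ)
    (hsqH : ∀ t : ℝ, ∀ u v : ℋ, u ∈ D1 → v ∈ D1 →
      (inner ℂ (sqH t u) (sqH t v) : ℂ) = q t u v)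
    (hsqHsym : ∀ t : ℝ, ∀ u v : ℋ, u ∈ D1 → v ∈ D1 →
      (inner ℂ (sqH t u) v : ℂ) = inner ℂ u (sqH t v))
    (hsqHbound : ∀ t : ℝ, ∀ u v : ℋ, u ∈ D1 → v ∈ D1 →
      ‖(inner ℂ (sqH t u) (R' t (sqH t v)) : ℂ)‖ ≤ C * ‖u‖ * ‖v‖)
    -- the propagator U(t,s) of Theorem II.27 of Simon (quadratic forms)
    (U : ℝ → ℝ → ℋ →L[ℂ] ℋ)
    (hUcont : ∀ ψ : ℋ, Continuous fun p : ℝ × ℝ => U p.1 p.2 ψ)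
    (hUnorm : ∀ t s : ℝ, ∀ ψ : ℋ, ‖U t s ψ‖ = ‖ψ‖)
    (hUid : ∀ t : ℝ, U t t = 1)
    (hUck : ∀ t r s : ℝ, (U t r).comp (U r s) = U t s)
    (hUper : ∀ t s : ℝ, U (t + T) (s + T) = U t s)
    (hUD1 : ∀ t : ℝ, ∀ ψ ∈ D1, U t 0 ψ ∈ D1)
    -- point 1: ℋ₁-weak continuity of the trajectories
    (hweakcont : ∀ ψ₀ ∈ D1, ∀ g ∈ D1,
      Continuous fun t => (inner ℂ g (U t 0 ψ₀) : ℂ) + q 0 g (U t 0 ψ₀))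
    -- point 2: the weak Schrödinger equation −i d/dt ⟨g, ψ(t)⟩ + q(t)(g, ψ(t)) = 0
    (hweakSchr : ∀ ψ₀ ∈ D1, ∀ g ∈ D1, ∀ t : ℝ,
      HasDerivAt (fun τ => (inner ℂ g (U τ 0 ψ₀) : ℂ)) (-(Complex.I * q t g (U t 0 ψ₀))) t)
    -- point 3: lim_{t→s} ‖(ψ(t)−ψ(s))/(t−s) + iH(t)ψ(t)‖₋₁ = 0
    (hcond3 : ∀ ψ₀ ∈ D1, ∀ s : ℝ,
      Tendsto (fun t =>
          sSup {r : ℝ | ∃ g ∈ D1, formNorm q g ≤ 1 ∧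
            r = ‖((t - s)⁻¹ : ℝ) • ((inner ℂ (U t 0 ψ₀ - U s 0 ψ₀) g : ℂ))
                  - Complex.I * q t (U t 0 ψ₀) g‖})
        (nhdsWithin s {s}ᶜ) (nhds 0))
    -- a Hilbert basis of eigenvectors of U(T,0), all in ℋ₁
    {ι : Type*} (b : HilbertBasis ι ℂ ℋ)
    (hbD1 : ∀ i, b i ∈ D1)
    (hbeig : ∀ i, ∃ c : ℂ, U T 0 (b i) = c • b i)
    -- an initial state from the (finite) span of the basis
    (ψ : ℋ) (hψ : ψ ∈ Submodule.span ℂ (Set.range fun i => b i)) :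
    ∃ M : ℝ, ∀ t : ℝ, ‖q t (U t 0 ψ) (U t 0 ψ)‖ ≤ M := by
  classical
  have hspan_le : Submodule.span ℂ (Set.range fun i => b i) ≤ D1 :=
    Submodule.span_le.mpr (by rintro _ ⟨i, rfl⟩; exact hbD1 i)
  have hψD1 : ψ ∈ D1 := hspan_le hψ
  -- second-slot (sesqui)linearity of the forms
  have hq_add₂ : ∀ t : ℝ, ∀ u v v' : ℋ, u ∈ D1 → v ∈ D1 → v' ∈ D1 →
      q t u (v + v') = q t u v + q t u v' := by
    intro t u v v' hu hv hv'
    rw [hq_herm t u (v + v') hu (D1.add_mem hv hv'), hq_add t v v' u hv hv' hu, map_add,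
      ← hq_herm t u v hu hv, ← hq_herm t u v' hu hv']
  have hq_smul₂ : ∀ t : ℝ, ∀ c : ℂ, ∀ u v : ℋ, u ∈ D1 → v ∈ D1 →
      q t u (c • v) = c * q t u v := by
    intro t c u v hu hv
    rw [hq_herm t u (c • v) hu (D1.smul_mem c hv), hq_smul t c v u hv hu, map_mul,
      Complex.conj_conj, ← hq_herm t u v hu hv]
  have hq_zero₂ : ∀ t : ℝ, ∀ u : ℋ, u ∈ D1 → q t u 0 = 0 := by
    intro t u hu
    have h := hq_add₂ t u 0 0 hu D1.zero_mem D1.zero_mem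
    rw [add_zero] at h
    exact (add_eq_left).mp h.symm
  -- the T-shift property of the propagator, for all integer multiples
  have hshift : ∀ n : ℤ, ∀ t s : ℝ, U (t + n * T) (s + n * T) = U t s := by
    intro n
    induction n using Int.induction_on with
    | zero => intro t s; push_cast; simp
    | succ k ih =>
      intro t s
      push_cast
      have e1 : t + ((k : ℝ) + 1) * T = (t + (k : ℝ) * T) + T := by ring
      have e2 : s + ((k : ℝ) + 1) * T = (s + (k : ℝ) * T) + T := by ring
      rw [e1, e2, hUper]
      have := ih t s
      push_cast at this
      exact this
    | pred k ih =>
      intro t s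
      push_cast
      have h := hUper (t + (-(k : ℝ) - 1) * T) (s + (-(k : ℝ) - 1) * T)
      have e1 : t + (-(k : ℝ) - 1) * T + T = t + (-(k : ℝ)) * T := by ring
      have e2 : s + (-(k : ℝ) - 1) * T + T = s + (-(k : ℝ)) * T := by ring
      rw [e1, e2] at h
      have hih := ih t s
      push_cast at hih
      rw [← h]
      exact hih
  -- bound for a single eigenvector of the Floquet operator
  have hbasisBound : ∀ g ∈ D1, ∀ v : ℋ, v ∈ D1 → (∃ c : ℂ, U T 0 v = c • v) →
      ∃ K : ℝ, ∀ s : ℝ, ‖(inner ℂ g (U s 0 v) : ℂ) + q 0 g (U s 0 v)‖ ≤ K := by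
    intro g hg v hv hveig
    by_cases hv0 : v = 0
    · refine ⟨0, fun s => ?_⟩
      rw [hv0, map_zero, inner_zero_right, hq_zero₂ 0 g hg, add_zero, norm_zero]
    obtain ⟨c, hc⟩ := hveig
    have hcnorm : ‖c‖ = 1 := by
      have h1 : ‖U T 0 v‖ = ‖v‖ := hUnorm T 0 v
      rw [hc, norm_smul] at h1
      have hvne : ‖v‖ ≠ 0 := norm_ne_zero_iff.mpr hv0
      field_simp at h1
      tauto
    have hc0 : c ≠ 0 := by
      intro h; rw [h, norm_zero] at hcnorm; norm_num at hcnorm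
    -- the integer-power eigenvalue relation
    have heig : ∀ n : ℤ, U ((n : ℝ) * T) 0 v = c ^ n • v := by
      intro n
      induction n using Int.induction_on with
      | zero => push_cast; simp [hUid]
      | succ k ih =>
        push_cast
        push_cast at ih
        have hck : U (((k : ℝ) + 1) * T) T (U T 0 v) = U (((k : ℝ) + 1) * T) 0 v := by
          rw [← ContinuousLinearMap.comp_apply, hUck]
        have hsh : U (((k : ℝ) + 1) * T) T = U ((k : ℝ) * T) 0 := by
          have h := hUper ((k : ℝ) * T) 0
          have e1 : (k : ℝ) * T + T = ((k : ℝ) + 1) * T := by ring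
          have e2 : (0 : ℝ) + T = T := by ring
          rw [e1, e2] at h
          exact h
        rw [← hck, hc, map_smul, hsh, ih, smul_smul]
        congr 1
        rw [zpow_add_one₀ hc0]
        ring
      | pred k ih =>
        push_cast
        push_cast at ih
        have hck : U ((-(k : ℝ)) * T) T (U T 0 v) = U ((-(k : ℝ)) * T) 0 v := by
          rw [← ContinuousLinearMap.comp_apply, hUck]
        have hsh : U ((-(k : ℝ)) * T) T = U ((-(k : ℝ) - 1) * T) 0 := by
          have h := hUper ((-(k : ℝ) - 1) * T) 0
          have e1 : (-(k : ℝ) - 1) * T + T = (-(k : ℝ)) * T := by ring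
          have e2 : (0 : ℝ) + T = T := by ring
          rw [e1, e2] at h
          exact h
        have key : c ^ (-(k : ℤ)) • v = c • U ((-(k : ℝ) - 1) * T) 0 v := by
          rw [← ih, ← hck, hc, map_smul, hsh]
        have hres : U ((-(k : ℝ) - 1) * T) 0 v = (c⁻¹ * c ^ (-(k : ℤ))) • v := by
          rw [mul_smul, key, smul_smul, inv_mul_cancel₀ hc0, one_smul]
        rw [hres]
        congr 1
        rw [zpow_sub_one₀ hc0]
        ring
    -- continuity bound on one period
    have hFc : Continuous fun τ : ℝ =>
        (inner ℂ g (U τ 0 v) : ℂ) + q 0 g (U τ 0 v) :=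
      hweakcont v hv g hg
    obtain ⟨K, hK⟩ := (isCompact_Icc (a := (0:ℝ)) (b := T)).exists_bound_of_continuousOn
      hFc.continuousOn
    refine ⟨K, fun s => ?_⟩
    -- decompose s = t + n T with t ∈ [0, T]
    set n : ℤ := ⌊s / T⌋ with hn
    set t : ℝ := s - (n : ℝ) * T with htdef
    have ht0 : 0 ≤ t := Int.sub_floor_div_mul_nonneg s hT
    have htT : t < T := Int.sub_floor_div_mul_lt s hT
    have hs : s = t + (n : ℝ) * T := by rw [htdef]; ring
    have hU1 : U s 0 v = c ^ n • U t 0 v := by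
      rw [hs]
      have h1 : U (t + (n : ℝ) * T) ((n : ℝ) * T) (U ((n : ℝ) * T) 0 v)
          = U (t + (n : ℝ) * T) 0 v := by
        rw [← ContinuousLinearMap.comp_apply, hUck]
      have h2 : U (t + (n : ℝ) * T) ((n : ℝ) * T) = U t 0 := by
        have h := hshift n t 0
        rw [zero_add] at h
        exact h
      rw [← h1, heig n, map_smul, h2]
    have hwD1 : U t 0 v ∈ D1 := hUD1 t v hv
    have hval : (inner ℂ g (U s 0 v) : ℂ) + q 0 g (U s 0 v)
        = c ^ n * ((inner ℂ g (U t 0 v) : ℂ) + q 0 g (U t 0 v)) := by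
      rw [hU1, inner_smul_right, hq_smul₂ 0 (c ^ n) g (U t 0 v) hg hwD1]
      ring
    rw [hval, norm_mul, norm_zpow, hcnorm, one_zpow, one_mul]
    exact hK t ⟨ht0, le_of_lt htT⟩
  -- THE KEY CLAIM: for any φ in the span of the eigenbasis and any g ∈ D1, the
  -- "weak ℋ₁" pairing of g with the trajectory of φ is bounded over ALL times.
  have hKey : ∀ g ∈ D1, ∃ K : ℝ, ∀ s : ℝ,
      ‖(inner ℂ g (U s 0 ψ) : ℂ) + q 0 g (U s 0 ψ)‖ ≤ K := by
    intro g hg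
    clear hψD1
    induction hψ using Submodule.span_induction with
    | mem x hx =>
      obtain ⟨i, rfl⟩ := hx
      exact hbasisBound g hg _ (hbD1 i) (hbeig i)
    | zero =>
      refine ⟨0, fun s => ?_⟩
      rw [map_zero, inner_zero_right, hq_zero₂ 0 g hg, add_zero, norm_zero]
    | add x y hx hy ihx ihy =>
      obtain ⟨K1, h1⟩ := ihx
      obtain ⟨K2, h2⟩ := ihy
      refine ⟨K1 + K2, fun s => ?_⟩
      have hxD : U s 0 x ∈ D1 := hUD1 s x (hspan_le hx)
      have hyD : U s 0 y ∈ D1 := hUD1 s y (hspan_le hy)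
      have hval : (inner ℂ g (U s 0 (x + y)) : ℂ) + q 0 g (U s 0 (x + y))
          = ((inner ℂ g (U s 0 x) : ℂ) + q 0 g (U s 0 x))
            + ((inner ℂ g (U s 0 y) : ℂ) + q 0 g (U s 0 y)) := by
        rw [map_add, inner_add_right, hq_add₂ 0 g (U s 0 x) (U s 0 y) hg hxD hyD]
        ring
      rw [hval]
      exact (norm_add_le _ _).trans (add_le_add (h1 s) (h2 s))
    | smul a x hx ihx =>
      obtain ⟨K, h⟩ := ihx
      refine ⟨‖a‖ * K, fun s => ?_⟩
      have hxD : U s 0 x ∈ D1 := hUD1 s x (hspan_le hx)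
      have hval : (inner ℂ g (U s 0 (a • x)) : ℂ) + q 0 g (U s 0 (a • x))
          = a * ((inner ℂ g (U s 0 x) : ℂ) + q 0 g (U s 0 x)) := by
        rw [map_smul, inner_smul_right, hq_smul₂ 0 a g (U s 0 x) hg hxD]
        ring
      rw [hval, norm_mul]
      exact mul_le_mul_of_nonneg_left (h s) (norm_nonneg a)
  -- Build the Hilbert space ℋ₁ on the type synonym
  letI : AddCommGroup (H1Space D1) := inferInstanceAs (AddCommGroup D1)
  letI : Module ℂ (H1Space D1) := inferInstanceAs (Module ℂ D1)
  letI core : InnerProductSpace.Core ℂ (H1Space D1) :=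
  { inner := fun u v => (inner ℂ u.1 v.1 : ℂ) + q 0 u.1 v.1
    conj_inner_symm := by
      intro x y
      show (starRingEnd ℂ) ((inner ℂ y.1 x.1 : ℂ) + q 0 y.1 x.1)
          = (inner ℂ x.1 y.1 : ℂ) + q 0 x.1 y.1
      rw [map_add, inner_conj_symm, ← hq_herm 0 x.1 y.1 x.2 y.2]
    re_inner_nonneg := by
      intro x
      show 0 ≤ ((inner ℂ x.1 x.1 : ℂ) + q 0 x.1 x.1).re
      rw [Complex.add_re]
      have h1 : (0:ℝ) ≤ (inner ℂ x.1 x.1 : ℂ).re := by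
        have := inner_self_nonneg (𝕜 := ℂ) (x := x.1)
        simpa using this
      have h2 := (hq_pos 0 x.1 x.2).1
      linarith
    add_left := by
      intro x y z
      show (inner ℂ (x.1 + y.1) z.1 : ℂ) + q 0 (x.1 + y.1) z.1
          = ((inner ℂ x.1 z.1 : ℂ) + q 0 x.1 z.1) + ((inner ℂ y.1 z.1 : ℂ) + q 0 y.1 z.1)
      rw [inner_add_left, hq_add 0 x.1 y.1 z.1 x.2 y.2 z.2]
      ring
    smul_left := by
      intro x y r
      show (inner ℂ (r • x.1) y.1 : ℂ) + q 0 (r • x.1) y.1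
          = (starRingEnd ℂ) r * ((inner ℂ x.1 y.1 : ℂ) + q 0 x.1 y.1)
      rw [inner_smul_left, hq_smul 0 r x.1 y.1 x.2 y.2]
      ring
    definite := by
      intro x hx
      have hre : ((inner ℂ x.1 x.1 : ℂ) + q 0 x.1 x.1).re = 0 := by
        rw [show ((inner ℂ x.1 x.1 : ℂ) + q 0 x.1 x.1) = 0 from hx]
        rfl
      rw [Complex.add_re] at hre
      have h1 : (inner ℂ x.1 x.1 : ℂ).re = ‖x.1‖ ^ 2 := by
        have := inner_self_eq_norm_sq (𝕜 := ℂ) x.1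
        simpa using this
      have h2 := (hq_pos 0 x.1 x.2).1
      have h3 : ‖x.1‖ ^ 2 ≤ 0 := by rw [← h1]; linarith
      have h4 : x.1 = 0 := by
        have := sq_nonneg ‖x.1‖
        have h5 : ‖x.1‖ ^ 2 = 0 := le_antisymm h3 this
        have h6 : ‖x.1‖ = 0 := by nlinarith [norm_nonneg x.1]
        exact norm_eq_zero.mp h6
      exact Subtype.ext h4 }
  letI : NormedAddCommGroup (H1Space D1) :=
    InnerProductSpace.Core.toNormedAddCommGroup (𝕜 := ℂ) (F := H1Space D1)
  letI : InnerProductSpace ℂ (H1Space D1) := InnerProductSpace.ofCore core.toCore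
  have hinner_expand : ∀ y z : H1Space D1,
      (inner ℂ y z : ℂ) = (inner ℂ y.1 z.1 : ℂ) + q 0 y.1 z.1 := fun _ _ => rfl
  have hnormsq : ∀ x : H1Space D1, ‖x‖ ^ 2 = ‖x.1‖ ^ 2 + (q 0 x.1 x.1).re := by
    intro x
    have h1 : ‖x‖ ^ 2 = RCLike.re (inner ℂ x x) := (inner_self_eq_norm_sq x).symm
    have h2 : (inner ℂ x x) = (inner ℂ x.1 x.1 : ℂ) + q 0 x.1 x.1 := rfl
    rw [h1, h2]
    have h3 : RCLike.re ((inner ℂ x.1 x.1 : ℂ) + q 0 x.1 x.1)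
        = (inner ℂ x.1 x.1 : ℂ).re + (q 0 x.1 x.1).re := by
      simp [Complex.add_re]
    rw [h3]
    have h4 : (inner ℂ x.1 x.1 : ℂ).re = ‖x.1‖ ^ 2 := by
      have := inner_self_eq_norm_sq (𝕜 := ℂ) x.1
      simpa using this
    rw [h4]
  letI : CompleteSpace (H1Space D1) := by
    apply Metric.complete_of_cauchySeq_tendsto
    intro u hu
    have hcau : ∀ ε > (0:ℝ), ∃ N, ∀ m ≥ N, ∀ n ≥ N, ‖u m - u n‖ < ε := by
      intro ε hε
      obtain ⟨N, hN⟩ := Metric.cauchySeq_iff.mp hu ε hε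
      exact ⟨N, fun m hm n hn => by
        have := hN m hm n hn; rwa [dist_eq_norm] at this⟩
    have hle : ∀ x : H1Space D1, ‖x.1‖ ≤ ‖x‖ := by
      intro x
      have h := hnormsq x
      nlinarith [(hq_pos 0 x.1 x.2).1, norm_nonneg x, norm_nonneg x.1]
    have hcauH : CauchySeq fun n => (u n).1 := by
      rw [Metric.cauchySeq_iff]
      intro ε hε
      obtain ⟨N, hN⟩ := hcau ε hε
      refine ⟨N, fun m hm n hn => ?_⟩
      have h1 : dist (u m).1 (u n).1 = ‖(u m - u n).1‖ := by rw [dist_eq_norm]; rfl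
      rw [h1]
      exact lt_of_le_of_lt (hle (u m - u n)) (hN m hm n hn)
    obtain ⟨L, hL⟩ := cauchySeq_tendsto_of_complete hcauH
    have hcond : ∀ ε > (0:ℝ), ∃ N, ∀ m ≥ N, ∀ n ≥ N,
        ‖(u m).1 - (u n).1‖ ^ 2
          + (q 0 ((u m).1 - (u n).1) ((u m).1 - (u n).1)).re < ε := by
      intro ε hε
      obtain ⟨N, hN⟩ := hcau (Real.sqrt ε) (Real.sqrt_pos.mpr hε)
      refine ⟨N, fun m hm n hn => ?_⟩
      have h1 : ‖(u m).1 - (u n).1‖ ^ 2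
          + (q 0 ((u m).1 - (u n).1) ((u m).1 - (u n).1)).re = ‖u m - u n‖ ^ 2 :=
        (hnormsq (u m - u n)).symm
      rw [h1]
      have h2 := hN m hm n hn
      nlinarith [norm_nonneg (u m - u n), Real.sq_sqrt hε.le, Real.sqrt_nonneg ε]
    obtain ⟨hLD1, hql⟩ := hq_closed 0 (fun n => (u n).1) (fun n => (u n).2) L hL hcond
    set Lh : H1Space D1 := ⟨L, hLD1⟩ with hLhdef
    refine ⟨Lh, ?_⟩
    rw [tendsto_iff_norm_sub_tendsto_zero]
    have h1 : Tendsto (fun n => ‖(u n).1 - L‖ ^ 2) atTop (nhds 0) := by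
      have := (tendsto_iff_norm_sub_tendsto_zero.mp hL).pow 2
      simpa using this
    have hsum := (h1.add hql).sqrt
    rw [add_zero, Real.sqrt_zero] at hsum
    have heq : ∀ n : ℕ, ‖u n - Lh‖
        = Real.sqrt (‖(u n).1 - L‖ ^ 2 + (q 0 ((u n).1 - L) ((u n).1 - L)).re) := by
      intro n
      have h3 : ‖u n - Lh‖ = Real.sqrt (‖u n - Lh‖ ^ 2) :=
        (Real.sqrt_sq (norm_nonneg _)).symm
      have h4 : ‖u n - Lh‖ ^ 2 = ‖(u n - Lh).1‖ ^ 2 + (q 0 (u n - Lh).1 (u n - Lh).1).re :=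
        hnormsq (u n - Lh)
      have h5 : (u n - Lh).1 = (u n).1 - L := rfl
      rw [h3, h4, h5]
    simpa only [heq] using hsum
  -- Banach–Steinhaus on ℋ₁ for the family of pairings with the trajectory
  set Ψ : ℝ → H1Space D1 := fun s => ⟨U s 0 ψ, hUD1 s ψ hψD1⟩ with hΨdef
  have hΨ1 : ∀ s : ℝ, (Ψ s).1 = U s 0 ψ := fun s => rfl
  have hpt : ∀ x : H1Space D1, ∃ K : ℝ, ∀ s : ℝ,
      ‖(innerSL ℂ (Ψ s)) x‖ ≤ K := by
    intro x
    obtain ⟨K, hK⟩ := hKey x.1 x.2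
    refine ⟨K, fun s => ?_⟩
    have hval : (innerSL ℂ (Ψ s)) x
        = (inner ℂ (U s 0 ψ) x.1 : ℂ) + q 0 (U s 0 ψ) x.1 := by
      rw [innerSL_apply_apply]
      exact hinner_expand (Ψ s) x
    have hconj : (inner ℂ (U s 0 ψ) x.1 : ℂ) + q 0 (U s 0 ψ) x.1
        = (starRingEnd ℂ) ((inner ℂ x.1 (U s 0 ψ) : ℂ) + q 0 x.1 (U s 0 ψ)) := by
      rw [map_add, inner_conj_symm, ← hq_herm 0 (U s 0 ψ) x.1 (hUD1 s ψ hψD1) x.2]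
    rw [hval, hconj, RCLike.norm_conj]
    exact hK s
  obtain ⟨M, hM⟩ :=
    banach_steinhaus (g := fun s : ℝ => innerSL ℂ (Ψ s)) hpt
  have hΨnorm : ∀ s : ℝ, ‖Ψ s‖ ≤ max M 0 := by
    intro s
    have h := hM s
    rw [innerSL_apply_norm] at h
    exact h.trans (le_max_left _ _)
  refine ⟨C * (max M 0) ^ 2, fun t => ?_⟩
  have hw : U t 0 ψ ∈ D1 := hUD1 t ψ hψD1
  have him := (hq_pos t (U t 0 ψ) hw).2
  have hre := (hq_pos t (U t 0 ψ) hw).1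
  have habs : ‖q t (U t 0 ψ) (U t 0 ψ)‖ = (q t (U t 0 ψ) (U t 0 ψ)).re := by
    have h1 : q t (U t 0 ψ) (U t 0 ψ) = ((q t (U t 0 ψ) (U t 0 ψ)).re : ℂ) :=
      Complex.ext (by simp) (by simp [him])
    rw [h1, Complex.norm_real, Real.norm_eq_abs, abs_of_nonneg hre, Complex.ofReal_re]
  rw [habs]
  have h2 := (hcomp t (U t 0 ψ) hw).2
  have h3 : (q 0 (U t 0 ψ) (U t 0 ψ)).re + ‖U t 0 ψ‖ ^ 2 = ‖Ψ t‖ ^ 2 := by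
    rw [hnormsq (Ψ t), hΨ1 t]
    ring
  have h4 : ‖Ψ t‖ ^ 2 ≤ (max M 0) ^ 2 :=
    pow_le_pow_left₀ (norm_nonneg _) (hΨnorm t) 2
  calc (q t (U t 0 ψ) (U t 0 ψ)).re
      ≤ C * ((q 0 (U t 0 ψ) (U t 0 ψ)).re + ‖U t 0 ψ‖ ^ 2) := h2
    _ = C * ‖Ψ t‖ ^ 2 := by rw [h3]
    _ ≤ C * (max M 0) ^ 2 :=
        mul_le_mul_of_nonneg_left h4 (le_trans zero_le_one hC)
end

section
/- Let X, Y be bounded operators and A, B bounded Hermitian operators on a complex Hilbert space ℋ such that AX − XB = Y. If there exist two disjoint closed intervals of ℝ containing respectively the spectrum of A and the spectrum of B, then ‖X‖ ≤ ‖Y‖ / dist(Spec(A), Spec(B)), where dist(Spec(A), Spec(B)) = inf{ |a − b| : a ∈ Spec(A), b ∈ Spec(B) }. -/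
lemma key_lemma {ℋ : Type*} [NormedAddCommGroup ℋ] [InnerProductSpace ℂ ℋ]
    [CompleteSpace ℋ] [Nontrivial ℋ]
    (A B X Y : ℋ →L[ℂ] ℋ) (hA : IsSelfAdjoint A) (hB : IsSelfAdjoint B)
    (hEq : A * X - X * B = Y)
    (h : sSup (spectrum ℝ B) < sInf (spectrum ℝ A)) :
    ‖X‖ ≤ ‖Y‖ / (sInf (spectrum ℝ A) - sSup (spectrum ℝ B)) := by
  have hBne : (spectrum ℝ B).Nonempty := hB.spectrum_nonempty
  have hAc : IsCompact (spectrum ℝ A) := spectrum.isCompact A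
  have hBc : IsCompact (spectrum ℝ B) := spectrum.isCompact B
  set α : ℝ := sInf (spectrum ℝ A) with hα
  set c : ℝ := sInf (spectrum ℝ B) with hc
  set d : ℝ := sSup (spectrum ℝ B) with hd
  have hcd : c ≤ d := csInf_le_csSup hBne hBc.bddBelow hBc.bddAbove
  set μ : ℝ := (c + d) / 2 with hμ
  set ρ : ℝ := (d - c) / 2 with hρdef
  set δ : ℝ := α - d with hδdef
  have hδ : 0 < δ := by rw [hδdef]; linarith
  have hρ : 0 ≤ ρ := by rw [hρdef]; linarith
  have hδρ : 0 < δ + ρ := by linarith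
  -- bounds on spectra
  have hAlow : ∀ x ∈ spectrum ℝ A, α ≤ x := fun x hx => csInf_le hAc.bddBelow hx
  have hBlow : ∀ x ∈ spectrum ℝ B, c ≤ x := fun x hx => csInf_le hBc.bddBelow hx
  have hBhigh : ∀ x ∈ spectrum ℝ B, x ≤ d := fun x hx => le_csSup hBc.bddAbove hx
  clear_value α c d μ ρ δ
  have hδρne : (δ + ρ) ≠ 0 := ne_of_gt hδρ
  have hδne : δ ≠ 0 := ne_of_gt hδ
  set A' : ℋ →L[ℂ] ℋ := A - algebraMap ℝ (ℋ →L[ℂ] ℋ) μ with hA'def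
  set B' : ℋ →L[ℂ] ℋ := B - algebraMap ℝ (ℋ →L[ℂ] ℋ) μ with hB'def
  have hA'cfc : cfc (fun x : ℝ => x - μ) A = A' := by
    rw [cfc_sub _ _ A, cfc_id' ℝ A, cfc_const μ A]
  have hB'cfc : cfc (fun x : ℝ => x - μ) B = B' := by
    rw [cfc_sub _ _ B, cfc_id' ℝ B, cfc_const μ B]
  have hB'norm : ‖B'‖ ≤ ρ := by
    rw [← hB'cfc]
    apply norm_cfc_le hρ
    intro x hx
    rw [Real.norm_eq_abs, abs_le]
    constructor
    · have := hBlow x hx; rw [hμ] at *; rw [hρdef]; linarith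
    · have := hBhigh x hx; rw [hμ] at *; rw [hρdef]; linarith
  have hspecA : ∀ x ∈ spectrum ℝ A, δ + ρ ≤ x - μ := by
    intro x hx
    have := hAlow x hx
    rw [hδdef, hρdef, hμ]
    linarith
  have hcont : ContinuousOn (fun x : ℝ => (x - μ)⁻¹) (spectrum ℝ A) := by
    apply ContinuousOn.inv₀ (by fun_prop)
    intro x hx
    have := hspecA x hx
    exact ne_of_gt (lt_of_lt_of_le hδρ this)
  set R : ℋ →L[ℂ] ℋ := cfc (fun x : ℝ => (x - μ)⁻¹) A with hRdef
  have hRnorm : ‖R‖ ≤ (δ + ρ)⁻¹ := by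
    apply norm_cfc_le (by positivity)
    intro x hx
    have h1 := hspecA x hx
    rw [Real.norm_eq_abs, abs_of_nonneg (inv_nonneg.mpr (by linarith))]
    gcongr
  have hRA' : R * A' = 1 := by
    rw [← hA'cfc, hRdef, ← cfc_mul _ _ A hcont (by fun_prop)]
    have heqon : (spectrum ℝ A).EqOn (fun x : ℝ => (x - μ)⁻¹ * (x - μ)) (fun _ : ℝ => 1) := by
      intro x hx
      have h1 := hspecA x hx
      have : x - μ ≠ 0 := ne_of_gt (lt_of_lt_of_le hδρ h1)
      field_simp
    rw [cfc_congr heqon, cfc_const_one ℝ A]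
  have hEq' : A' * X - X * B' = Y := by
    have hcomm : algebraMap ℝ (ℋ →L[ℂ] ℋ) μ * X = X * algebraMap ℝ (ℋ →L[ℂ] ℋ) μ :=
      Algebra.commutes μ X
    calc A' * X - X * B' = A * X - X * B
          - (algebraMap ℝ (ℋ →L[ℂ] ℋ) μ * X - X * algebraMap ℝ (ℋ →L[ℂ] ℋ) μ) := by
          simp only [hA'def, hB'def, sub_mul, mul_sub]; abel
      _ = A * X - X * B := by rw [hcomm]; simp
      _ = Y := hEq
  have hXrec : X = R * Y + R * X * B' := by
    have h1 : A' * X = Y + X * B' := by rw [← hEq']; abel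
    calc X = (R * A') * X := by rw [hRA', one_mul]
      _ = R * (A' * X) := by rw [mul_assoc]
      _ = R * (Y + X * B') := by rw [h1]
      _ = R * Y + R * X * B' := by rw [mul_add, mul_assoc]
  have hiter : ∀ n : ℕ,
      X = (∑ k ∈ Finset.range n, R ^ (k + 1) * Y * B' ^ k) + R ^ n * X * B' ^ n := by
    intro n
    induction n with
    | zero => simp
    | succ n ih =>
      have hrem : R ^ n * X * B' ^ n
          = R ^ (n + 1) * Y * B' ^ n + R ^ (n + 1) * X * B' ^ (n + 1) := by
        conv_lhs => rw [hXrec]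
        rw [pow_succ R n, pow_succ' B' n]
        noncomm_ring
      rw [Finset.sum_range_succ]
      calc X = (∑ k ∈ Finset.range n, R ^ (k + 1) * Y * B' ^ k) + R ^ n * X * B' ^ n := ih
        _ = _ := by rw [hrem]; abel
  set q : ℝ := ρ / (δ + ρ) with hqdef
  have hq0 : 0 ≤ q := by positivity
  have hq1 : q < 1 := by rw [hqdef, div_lt_one hδρ]; linarith
  have hbound : ∀ n : ℕ, ‖X‖ ≤ ‖Y‖ / δ + q ^ n * ‖X‖ := by
    intro n
    have hterm : ∀ k : ℕ, ‖R ^ (k + 1) * Y * B' ^ k‖ ≤ (δ + ρ)⁻¹ * ‖Y‖ * q ^ k := by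
      intro k
      calc ‖R ^ (k + 1) * Y * B' ^ k‖ ≤ ‖R ^ (k + 1)‖ * ‖Y‖ * ‖B' ^ k‖ := by
            exact (norm_mul_le _ _).trans (by gcongr; exact norm_mul_le _ _)
        _ ≤ ((δ + ρ)⁻¹) ^ (k + 1) * ‖Y‖ * ρ ^ k := by
            gcongr
            · exact (norm_pow_le _ _).trans (pow_le_pow_left₀ (norm_nonneg _) hRnorm _)
            · exact (norm_pow_le _ _).trans (pow_le_pow_left₀ (norm_nonneg _) hB'norm _)
        _ = (δ + ρ)⁻¹ * ‖Y‖ * q ^ k := by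
            rw [hqdef, div_eq_mul_inv, mul_pow, pow_succ]
            ring
    have hrem : ‖R ^ n * X * B' ^ n‖ ≤ q ^ n * ‖X‖ := by
      calc ‖R ^ n * X * B' ^ n‖ ≤ ‖R ^ n‖ * ‖X‖ * ‖B' ^ n‖ :=
            (norm_mul_le _ _).trans (by gcongr; exact norm_mul_le _ _)
        _ ≤ ((δ + ρ)⁻¹) ^ n * ‖X‖ * ρ ^ n := by
            gcongr
            · exact (norm_pow_le _ _).trans (pow_le_pow_left₀ (norm_nonneg _) hRnorm _)
            · exact (norm_pow_le _ _).trans (pow_le_pow_left₀ (norm_nonneg _) hB'norm _)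
        _ = q ^ n * ‖X‖ := by rw [hqdef, div_eq_mul_inv, mul_pow]; ring
    have hgeom : (∑ k ∈ Finset.range n, q ^ k) ≤ (1 - q)⁻¹ := by
      have hpos : (0:ℝ) < 1 - q := by linarith
      rw [inv_eq_one_div, le_div_iff₀ hpos]
      have hmul : (∑ k ∈ Finset.range n, q ^ k) * (1 - q) = 1 - q ^ n := by
        linear_combination -geom_sum_mul q n
      rw [hmul]
      linarith [pow_nonneg hq0 n]
    have hsum : ‖∑ k ∈ Finset.range n, R ^ (k + 1) * Y * B' ^ k‖ ≤ ‖Y‖ / δ := by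
      calc ‖∑ k ∈ Finset.range n, R ^ (k + 1) * Y * B' ^ k‖
          ≤ ∑ k ∈ Finset.range n, ‖R ^ (k + 1) * Y * B' ^ k‖ := norm_sum_le _ _
        _ ≤ ∑ k ∈ Finset.range n, (δ + ρ)⁻¹ * ‖Y‖ * q ^ k :=
            Finset.sum_le_sum fun k _ => hterm k
        _ = (δ + ρ)⁻¹ * ‖Y‖ * ∑ k ∈ Finset.range n, q ^ k := by rw [Finset.mul_sum]
        _ ≤ (δ + ρ)⁻¹ * ‖Y‖ * (1 - q)⁻¹ := by gcongr
        _ = ‖Y‖ / δ := by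
            rw [hqdef]
            have h1q : 1 - ρ / (δ + ρ) = δ / (δ + ρ) := by field_simp; ring
            rw [h1q, inv_div, div_eq_mul_inv (‖Y‖)]
            field_simp
    calc ‖X‖ = ‖(∑ k ∈ Finset.range n, R ^ (k + 1) * Y * B' ^ k) + R ^ n * X * B' ^ n‖ := by
          rw [← hiter n]
      _ ≤ ‖∑ k ∈ Finset.range n, R ^ (k + 1) * Y * B' ^ k‖ + ‖R ^ n * X * B' ^ n‖ :=
          norm_add_le _ _
      _ ≤ ‖Y‖ / δ + q ^ n * ‖X‖ := add_le_add hsum hrem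
  have h0 : Filter.Tendsto (fun n : ℕ => q ^ n * ‖X‖) Filter.atTop (nhds 0) := by
    simpa using
      (tendsto_pow_atTop_nhds_zero_of_lt_one hq0 hq1).mul (tendsto_const_nhds (x := ‖X‖))
  have hlim : Filter.Tendsto (fun n : ℕ => ‖Y‖ / δ + q ^ n * ‖X‖) Filter.atTop
      (nhds (‖Y‖ / δ)) := by
    simpa using (tendsto_const_nhds (x := ‖Y‖ / δ)).add h0
  exact ge_of_tendsto' hlim hbound

/-- Let X, Y be bounded operators and A, B bounded Hermitian operators on a
complex Hilbert space ℋ such that AX − XB = Y. If there exist two disjoint closed intervals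
of ℝ containing respectively Spec(A) and Spec(B), then
‖X‖ ≤ ‖Y‖ / dist(Spec(A), Spec(B)). -/
theorem stmt_7 {ℋ : Type*} [NormedAddCommGroup ℋ] [InnerProductSpace ℂ ℋ]
    [CompleteSpace ℋ] [Nontrivial ℋ]
    (A B X Y : ℋ →L[ℂ] ℋ) (hA : IsSelfAdjoint A) (hB : IsSelfAdjoint B)
    (hEq : A.comp X - X.comp B = Y)
    (hSep : ∃ a b c d : ℝ, spectrum ℝ A ⊆ Set.Icc a b ∧ spectrum ℝ B ⊆ Set.Icc c d ∧
      Disjoint (Set.Icc a b) (Set.Icc c d)) :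
    ‖X‖ ≤ ‖Y‖ / sInf {r : ℝ | ∃ a ∈ spectrum ℝ A, ∃ b ∈ spectrum ℝ B, r = |a - b|} := by
  obtain ⟨a, b, c, d, hSA, hSB, hdisj⟩ := hSep
  have hEqm : A * X - X * B = Y := hEq
  have hAne : (spectrum ℝ A).Nonempty := hA.spectrum_nonempty
  have hBne : (spectrum ℝ B).Nonempty := hB.spectrum_nonempty
  have hAc : IsCompact (spectrum ℝ A) := spectrum.isCompact A
  have hBc : IsCompact (spectrum ℝ B) := spectrum.isCompact B
  obtain ⟨x₀, hx₀⟩ := hAne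
  obtain ⟨y₀, hy₀⟩ := hBne
  have hx₀' := hSA hx₀
  have hy₀' := hSB hy₀
  have hAne : (spectrum ℝ A).Nonempty := ⟨x₀, hx₀⟩
  have hBne : (spectrum ℝ B).Nonempty := ⟨y₀, hy₀⟩
  have hab : a ≤ b := hx₀'.1.trans hx₀'.2
  have hcd : c ≤ d := hy₀'.1.trans hy₀'.2
  have hAhigh : ∀ x ∈ spectrum ℝ A, x ≤ b := fun x hx => (hSA hx).2
  have hAlow : ∀ x ∈ spectrum ℝ A, a ≤ x := fun x hx => (hSA hx).1
  have hBhigh : ∀ x ∈ spectrum ℝ B, x ≤ d := fun x hx => (hSB hx).2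
  have hBlow : ∀ x ∈ spectrum ℝ B, c ≤ x := fun x hx => (hSB hx).1
  have hcases : b < c ∨ d < a := by
    by_contra hcon
    push_neg at hcon
    obtain ⟨h1, h2⟩ := hcon
    exact (Set.not_disjoint_iff.mpr
      ⟨max a c, Set.mem_Icc.mpr ⟨le_max_left a c, max_le hab h1⟩,
        Set.mem_Icc.mpr ⟨le_max_right a c, max_le h2 hcd⟩⟩) hdisj
  rcases hcases with hbc | hda
  · -- spectrum of A lies below spectrum of B : use adjoints (star)
    have hlt : sSup (spectrum ℝ A) < sInf (spectrum ℝ B) := by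
      have h1 : sSup (spectrum ℝ A) ≤ b := csSup_le hAne hAhigh
      have h2 : c ≤ sInf (spectrum ℝ B) := le_csInf hBne hBlow
      linarith
    have hEq2 : B * (star X) - (star X) * A = -(star Y) := by
      have h1 := congrArg star hEqm
      rw [star_sub, star_mul, star_mul, hA.star_eq, hB.star_eq] at h1
      rw [← h1]
      abel
    have hX := key_lemma B A (star X) (-(star Y)) hB hA hEq2 hlt
    rw [norm_star, norm_neg, norm_star] at hX
    have hmemA : sSup (spectrum ℝ A) ∈ spectrum ℝ A := hAc.sSup_mem hAne
    have hmemB : sInf (spectrum ℝ B) ∈ spectrum ℝ B := hBc.sInf_mem hBne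
    have hδmem : sInf (spectrum ℝ B) - sSup (spectrum ℝ A)
        ∈ {r : ℝ | ∃ a ∈ spectrum ℝ A, ∃ b ∈ spectrum ℝ B, r = |a - b|} := by
      refine ⟨sSup (spectrum ℝ A), hmemA, sInf (spectrum ℝ B), hmemB, ?_⟩
      rw [abs_sub_comm, abs_of_pos (by linarith)]
    have hlb : ∀ r ∈ {r : ℝ | ∃ a ∈ spectrum ℝ A, ∃ b ∈ spectrum ℝ B, r = |a - b|},
        sInf (spectrum ℝ B) - sSup (spectrum ℝ A) ≤ r := by
      rintro r ⟨x, hx, y, hy, rfl⟩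
      have h1 : x ≤ sSup (spectrum ℝ A) := le_csSup hAc.bddAbove hx
      have h2 : sInf (spectrum ℝ B) ≤ y := csInf_le hBc.bddBelow hy
      calc sInf (spectrum ℝ B) - sSup (spectrum ℝ A) ≤ y - x := by linarith
        _ ≤ |x - y| := by rw [abs_sub_comm]; exact le_abs_self _
    have hSinf : sInf {r : ℝ | ∃ a ∈ spectrum ℝ A, ∃ b ∈ spectrum ℝ B, r = |a - b|}
        = sInf (spectrum ℝ B) - sSup (spectrum ℝ A) :=
      le_antisymm (csInf_le ⟨_, fun r hr => hlb r hr⟩ hδmem) (le_csInf ⟨_, hδmem⟩ hlb)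
    rw [hSinf]
    exact hX
  · -- spectrum of B lies below spectrum of A : direct case
    have hlt : sSup (spectrum ℝ B) < sInf (spectrum ℝ A) := by
      have h1 : sSup (spectrum ℝ B) ≤ d := csSup_le hBne hBhigh
      have h2 : a ≤ sInf (spectrum ℝ A) := le_csInf hAne hAlow
      linarith
    have hX := key_lemma A B X Y hA hB hEqm hlt
    have hmemA : sInf (spectrum ℝ A) ∈ spectrum ℝ A := hAc.sInf_mem hAne
    have hmemB : sSup (spectrum ℝ B) ∈ spectrum ℝ B := hBc.sSup_mem hBne
    have hδmem : sInf (spectrum ℝ A) - sSup (spectrum ℝ B)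
        ∈ {r : ℝ | ∃ a ∈ spectrum ℝ A, ∃ b ∈ spectrum ℝ B, r = |a - b|} := by
      refine ⟨sInf (spectrum ℝ A), hmemA, sSup (spectrum ℝ B), hmemB, ?_⟩
      rw [abs_of_pos (by linarith)]
    have hlb : ∀ r ∈ {r : ℝ | ∃ a ∈ spectrum ℝ A, ∃ b ∈ spectrum ℝ B, r = |a - b|},
        sInf (spectrum ℝ A) - sSup (spectrum ℝ B) ≤ r := by
      rintro r ⟨x, hx, y, hy, rfl⟩
      have h1 : sInf (spectrum ℝ A) ≤ x := csInf_le hAc.bddBelow hx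
      have h2 : y ≤ sSup (spectrum ℝ B) := le_csSup hBc.bddAbove hy
      calc sInf (spectrum ℝ A) - sSup (spectrum ℝ B) ≤ x - y := by linarith
        _ ≤ |x - y| := le_abs_self _
    have hSinf : sInf {r : ℝ | ∃ a ∈ spectrum ℝ A, ∃ b ∈ spectrum ℝ B, r = |a - b|}
        = sInf (spectrum ℝ A) - sSup (spectrum ℝ B) :=
      le_antisymm (csInf_le ⟨_, fun r hr => hlb r hr⟩ hδmem) (le_csInf ⟨_, hδmem⟩ hlb)
    rw [hSinf]
    exact hX
end

section
/- Assume the Floquet decomposition U(t,0) = U_F(t)e^{−itH_F} is continuously differentiable in the strong sense. Then for all s, t ∈ ℝ and every ψ ∈ Dom(H(0)), U(t,s)ψ ∈ Dom(H(0)), U(t,s)H(s)ψ − H(t)U(t,s)ψ is well defined, and ‖H(t)U(t,s)ψ − U(t,s)H(s)ψ‖ ≤ 2‖S_F‖·‖ψ‖, where ‖S_F‖ = sup_{t∈ℝ} ‖S_F(t)‖; i.e., H(t)U(t,s) − U(t,s)H(s) extends to a bounded operator on ℋ of norm at most 2‖S_F‖. -/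
open Filter Topology

open Filter Topology

section AuxLemmas

variable {ℋ : Type*} [NormedAddCommGroup ℋ] [InnerProductSpace ℂ ℋ]

lemma aux_tendsto (V : ℝ → ℋ →L[ℂ] ℋ) (hiso : ∀ a (ψ : ℋ), ‖V a ψ‖ = ‖ψ‖)
    {l : Filter ℝ} {g : ℝ → ℋ} {x y : ℋ}
    (hg : Tendsto g l (𝓝 x)) (hVc : Tendsto (fun a => V a x) l (𝓝 y)) :
    Tendsto (fun a => V a (g a)) l (𝓝 y) := by
  have h0 : Tendsto (fun a => V a (g a) - V a x) l (𝓝 0) := by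
    rw [tendsto_zero_iff_norm_tendsto_zero]
    have e : (fun a => ‖V a (g a) - V a x‖) = fun a => ‖g a - x‖ := by
      funext a; rw [← map_sub, hiso]
    rw [e]
    exact tendsto_iff_norm_sub_tendsto_zero.mp hg
  have h1 := h0.add hVc
  rw [zero_add] at h1
  refine h1.congr fun a => ?_
  abel

lemma aux_shift {f : ℝ → ℋ} {d : ℋ} (c : ℝ) (h : HasDerivAt f d c) :
    HasDerivAt (fun a => f (c + a)) d 0 := by
  have h' : HasDerivAt f d (c + 0) := by rwa [add_zero]
  exact h'.comp_const_add c 0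

lemma aux_prod (V : ℝ → ℋ →L[ℂ] ℋ) (hiso : ∀ a (ψ : ℋ), ‖V a ψ‖ = ‖ψ‖)
    {u : ℝ → ℋ} {σ : ℝ} {Vd u' : ℋ}
    (hVc : Tendsto (fun a => V a u') (𝓝 σ) (𝓝 (V σ u')))
    (hVd : HasDerivAt (fun a => V a (u σ)) Vd σ)
    (hu : HasDerivAt u u' σ) :
    HasDerivAt (fun a => V a (u a)) (V σ u' + Vd) σ := by
  rw [hasDerivAt_iff_tendsto_slope] at hVd hu ⊢
  have key : ∀ a, slope (fun b => V b (u b)) σ a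
      = V a (slope u σ a) + slope (fun b => V b (u σ)) σ a := by
    intro a
    rw [slope_def_module, slope_def_module, slope_def_module,
      (V a).map_smul_of_tower, map_sub, ← smul_add, sub_add_sub_cancel]
  have h1 : Tendsto (fun a => V a (slope u σ a)) (𝓝[≠] σ) (𝓝 (V σ u')) :=
    aux_tendsto V hiso hu (hVc.mono_left nhdsWithin_le_nhds)
  exact Tendsto.congr (fun a => (key a).symm) (h1.add hVd)

end AuxLemmas


/-- if the Floquet decomposition is continuously differentiable in the strong
sense then, for all `s, t` and every `ψ ∈ Dom H(0)`, `U(t,s)ψ ∈ Dom H(0)` and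
`‖H(t)U(t,s)ψ − U(t,s)H(s)ψ‖ ≤ 2‖S_F‖‖ψ‖`, where `M` is any bound with
`‖S_F(t)‖ ≤ M` for all `t` (so that `sup_t ‖S_F(t)‖ ≤ M`); i.e. `H(t)U(t,s) − U(t,s)H(s)`
extends to a bounded operator on ℋ of norm at most `2‖S_F‖`. -/
theorem stmt_8
    {ℋ : Type*} [NormedAddCommGroup ℋ] [InnerProductSpace ℂ ℋ] [CompleteSpace ℋ]
    [SecondCountableTopology ℋ]
    (T : ℝ) (hT : 0 < T)
    -- the family H(t) of self-adjoint operators with common domain D0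
    (D0 : Submodule ℂ ℋ) (hD0dense : Dense (D0 : Set ℋ))
    (Hop : ℝ → ↥D0 →ₗ[ℂ] ℋ)
    (hHsym : ∀ t : ℝ, ∀ u v : ↥D0, (inner ℂ (Hop t u) (v : ℋ) : ℂ) = inner ℂ (u : ℋ) (Hop t v))
    (hHmax : ∀ t : ℝ, ∀ v w : ℋ,
      (∀ u : ↥D0, (inner ℂ (Hop t u) v : ℂ) = inner ℂ (u : ℋ) w) → v ∈ D0)
    (hHper : ∀ t : ℝ, Hop (t + T) = Hop t)
    -- the propagator U(t,s)
    (U : ℝ → ℝ → ℋ →L[ℂ] ℋ)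
    (hUcont : ∀ ψ : ℋ, Continuous fun p : ℝ × ℝ => U p.1 p.2 ψ)
    (hUnorm : ∀ t s : ℝ, ∀ ψ : ℋ, ‖U t s ψ‖ = ‖ψ‖)
    (hUid : ∀ t : ℝ, U t t = 1)
    (hUck : ∀ t r s : ℝ, (U t r).comp (U r s) = U t s)
    (hUper : ∀ t s : ℝ, U (t + T) (s + T) = U t s)
    (hUdom : ∀ t s : ℝ, ∀ ψ ∈ D0, U t s ψ ∈ D0)
    (hSchr : ∀ (s : ℝ) (ψ : ℋ) (hψ : ψ ∈ D0) (t : ℝ),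
      HasDerivAt (fun τ => U τ s ψ)
        ((-Complex.I) • (Hop t ⟨U t s ψ, hUdom t s ψ hψ⟩ : ℋ)) t)
    -- the self-adjoint operator H_F with domain DF and its unitary group E t = e^{-itH_F}
    (DF : Submodule ℂ ℋ) (hDFdense : Dense (DF : Set ℋ))
    (HF : ↥DF →ₗ[ℂ] ℋ)
    (hHFsym : ∀ u v : ↥DF, (inner ℂ (HF u) (v : ℋ) : ℂ) = inner ℂ (u : ℋ) (HF v))
    (hHFmax : ∀ v w : ℋ, (∀ u : ↥DF, (inner ℂ (HF u) v : ℂ) = inner ℂ (u : ℋ) w) → v ∈ DF)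
    (E : ℝ → ℋ →L[ℂ] ℋ)
    (hE0 : E 0 = 1)
    (hEgrp : ∀ t s : ℝ, (E t).comp (E s) = E (t + s))
    (hEnorm : ∀ t : ℝ, ∀ ψ : ℋ, ‖E t ψ‖ = ‖ψ‖)
    (hEcont : ∀ ψ : ℋ, Continuous fun t => E t ψ)
    (hEdom : ∀ t : ℝ, ∀ ψ ∈ DF, E t ψ ∈ DF)
    (hEderiv : ∀ (ψ : ℋ) (hψ : ψ ∈ DF) (t : ℝ),
      HasDerivAt (fun τ => E τ ψ) ((-Complex.I) • (HF ⟨E t ψ, hEdom t ψ hψ⟩ : ℋ)) t)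
    (hMonodromy : U T 0 = E T)
    -- the Floquet decomposition U(t,0) = U_F(t) e^{-itH_F}, U_F(t) = U(t,0) E(-t), is
    -- continuously differentiable in the strong sense, with bounded Hermitian S_F(t) and
    -- derivative ∂_t U_F(t)ψ = -i U_F(t) (S_F(t) ψ) for every ψ ∈ ℋ
    (SF : ℝ → ℋ →L[ℂ] ℋ)
    (hSFsa : ∀ t : ℝ, IsSelfAdjoint (SF t))
    (hUFderiv : ∀ (ψ : ℋ) (t : ℝ),
      HasDerivAt (fun τ => U τ 0 (E (-τ) ψ))
        ((-Complex.I) • (U t 0 (E (-t) (SF t ψ)))) t)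
    (hSFcont : ∀ ψ : ℋ, Continuous fun t => U t 0 (E (-t) (SF t ψ)))
 :
    ∀ M : ℝ, (∀ t : ℝ, ‖SF t‖ ≤ M) → ∀ s t : ℝ,
      (∀ ψ ∈ D0, U t s ψ ∈ D0) ∧
      ∃ Z : ℋ →L[ℂ] ℋ, ‖Z‖ ≤ 2 * M ∧
        ∀ (ψ : ℋ) (hψ : ψ ∈ D0) (h : U t s ψ ∈ D0),
          Z ψ = Hop t ⟨U t s ψ, h⟩ - U t s (Hop s ⟨ψ, hψ⟩) := by
  intro M hM s t
  have hM0 : 0 ≤ M := le_trans (norm_nonneg (SF 0)) (hM 0)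
  -- pointwise versions of the algebraic identities
  have hEap : ∀ a b : ℝ, ∀ x : ℋ, E a (E b x) = E (a + b) x := fun a b x => by
    rw [← hEgrp a b]; rfl
  have hE0ap : ∀ x : ℋ, E 0 x = x := fun x => by rw [hE0]; rfl
  have hUap : ∀ a b c : ℝ, ∀ x : ℋ, U a b (U b c x) = U a c x := fun a b c x => by
    rw [← hUck a b c]; rfl
  have hUidap : ∀ a : ℝ, ∀ x : ℋ, U a a x = x := fun a x => by rw [hUid]; rfl
  -- continuity of the propagator in each variable
  have hUc1 : ∀ (b : ℝ) (x : ℋ), Continuous fun a => U a b x := fun b x =>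
    (hUcont x).comp (continuous_id.prodMk continuous_const)
  have hUc2 : ∀ (a : ℝ) (x : ℋ), Continuous fun b => U a b x := fun a x =>
    (hUcont x).comp (continuous_const.prodMk continuous_id)
  -- strong continuity of U_F and of its inverse
  have hVfcont : ∀ (x : ℋ) (σ : ℝ),
      Tendsto (fun a => U a 0 (E (-a) x)) (𝓝 σ) (𝓝 (U σ 0 (E (-σ) x))) := fun x σ =>
    aux_tendsto (fun a => U a 0) (fun a ψ => hUnorm a 0 ψ)
      (((hEcont x).comp continuous_neg).tendsto σ) ((hUc1 0 (E (-σ) x)).tendsto σ)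
  have hVicont : ∀ (x : ℋ) (σ : ℝ),
      Tendsto (fun a => E a (U 0 a x)) (𝓝 σ) (𝓝 (E σ (U 0 σ x))) := fun x σ =>
    aux_tendsto E (fun a ψ => hEnorm a ψ) ((hUc2 0 x).tendsto σ)
      ((hEcont (U 0 σ x)).tendsto σ)
  -- strong derivative of the inverse of U_F
  have hViD : ∀ (x : ℋ) (σ : ℝ),
      HasDerivAt (fun a => E a (U 0 a x)) (Complex.I • SF σ (E σ (U 0 σ x))) σ := by
    intro x σ
    set y := E σ (U 0 σ x) with hy
    have hxy : U σ 0 (E (-σ) y) = x := by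
      rw [hy, hEap, show (-σ + σ : ℝ) = 0 by ring, hE0ap, hUap, hUidap]
    rw [hasDerivAt_iff_tendsto_slope]
    have key : ∀ a, slope (fun b => E b (U 0 b x)) σ a
        = E a (U 0 a ((a - σ)⁻¹ • (U σ 0 (E (-σ) y) - U a 0 (E (-a) y)))) := by
      intro a
      rw [slope_def_module, (U 0 a).map_smul_of_tower, (E a).map_smul_of_tower]
      congr 1
      rw [map_sub, map_sub, hxy, hUap, hUidap, hEap, show (a + -a : ℝ) = 0 by ring, hE0ap]
    have hslope : Tendsto (fun a => (a - σ)⁻¹ • (U σ 0 (E (-σ) y) - U a 0 (E (-a) y)))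
        (𝓝[≠] σ) (𝓝 (Complex.I • (U σ 0 (E (-σ) (SF σ y))))) := by
      have hd := hasDerivAt_iff_tendsto_slope.mp (hUFderiv y σ)
      have := hd.neg
      rw [show -((-Complex.I) • (U σ 0 (E (-σ) (SF σ y))))
          = Complex.I • (U σ 0 (E (-σ) (SF σ y))) by rw [← neg_smul, neg_neg]] at this
      refine this.congr fun a => ?_
      rw [slope_def_module, ← smul_neg, neg_sub]
    have hlim := aux_tendsto (fun a => (E a).comp (U 0 a))
      (fun a ψ => by simp only [ContinuousLinearMap.comp_apply]; rw [hEnorm, hUnorm])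
      hslope ((hVicont (Complex.I • (U σ 0 (E (-σ) (SF σ y)))) σ).mono_left
        nhdsWithin_le_nhds)
    have hfin : E σ (U 0 σ (Complex.I • (U σ 0 (E (-σ) (SF σ y)))))
        = Complex.I • SF σ y := by
      rw [map_smul, map_smul, hUap, hUidap, hEap, show (σ + -σ : ℝ) = 0 by ring, hE0ap]
    rw [hfin] at hlim
    exact Tendsto.congr (fun a => (key a).symm) hlim
  -- strong derivative of a ↦ U(t+a, s+a)ψ, for every ψ
  have hWD : ∀ ψ : ℋ, HasDerivAt (fun a => U (t + a) 0 (U 0 (s + a) ψ))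
      ((-Complex.I) • (U t 0 (E (-t) (SF t (E t (U 0 s ψ)))))
        + Complex.I • (U t 0 (E (-s) (SF s (E s (U 0 s ψ)))))) 0 := by
    intro ψ
    have hu : HasDerivAt (fun a => E (s + a) (U 0 (s + a) ψ))
        (Complex.I • SF s (E s (U 0 s ψ))) 0 := aux_shift s (hViD ψ s)
    have hVd : HasDerivAt
        (fun a => ((U (t + a) 0).comp ((E (-(t + a))).comp (E (t - s))))
          (E (s + 0) (U 0 (s + 0) ψ)))
        ((-Complex.I) • (U t 0 (E (-t)
          (SF t (E (t - s) (E (s + 0) (U 0 (s + 0) ψ))))))) 0 :=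
      aux_shift t (hUFderiv (E (t - s) (E (s + 0) (U 0 (s + 0) ψ))) t)
    have hVc : Tendsto
        (fun a => ((U (t + a) 0).comp ((E (-(t + a))).comp (E (t - s))))
          (Complex.I • SF s (E s (U 0 s ψ)))) (𝓝 0)
        (𝓝 (((U (t + 0) 0).comp ((E (-(t + 0))).comp (E (t - s))))
          (Complex.I • SF s (E s (U 0 s ψ))))) :=
      (hVfcont (E (t - s) (Complex.I • SF s (E s (U 0 s ψ)))) (t + 0)).comp
        ((continuous_const.add continuous_id).tendsto 0)
    have hprod := aux_prod
      (fun a => (U (t + a) 0).comp ((E (-(t + a))).comp (E (t - s))))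
      (fun a ψ' => by
        simp only [ContinuousLinearMap.comp_apply]; rw [hUnorm, hEnorm, hEnorm])
      hVc hVd hu
    have hfun : (fun a => ((U (t + a) 0).comp ((E (-(t + a))).comp (E (t - s))))
          (E (s + a) (U 0 (s + a) ψ)))
        = fun a => U (t + a) 0 (U 0 (s + a) ψ) := by
      funext a
      simp only [ContinuousLinearMap.comp_apply]
      rw [hEap, hEap, show (-(t + a) + (t - s) + (s + a) : ℝ) = 0 by ring, hE0ap]
    have hval : ((U (t + 0) 0).comp ((E (-(t + 0))).comp (E (t - s))))
          (Complex.I • SF s (E s (U 0 s ψ)))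
        + (-Complex.I) • (U t 0 (E (-t)
          (SF t (E (t - s) (E (s + 0) (U 0 (s + 0) ψ))))))
        = (-Complex.I) • (U t 0 (E (-t) (SF t (E t (U 0 s ψ)))))
          + Complex.I • (U t 0 (E (-s) (SF s (E s (U 0 s ψ))))) := by
      simp only [ContinuousLinearMap.comp_apply, map_smul, add_zero, hEap]
      rw [show (-t + (t - s) : ℝ) = -s by ring, show (t - s + s : ℝ) = t by ring, add_comm]
    rw [hfun, hval] at hprod
    exact hprod
  refine ⟨hUdom t s, ?_⟩
  refine ⟨((U t 0).comp ((E (-t)).comp ((SF t).comp ((E t).comp (U 0 s)))))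
      - ((U t 0).comp ((E (-s)).comp ((SF s).comp ((E s).comp (U 0 s))))), ?_, ?_⟩
  · -- norm bound
    refine ContinuousLinearMap.opNorm_le_bound _ (by positivity) fun ψ => ?_
    simp only [ContinuousLinearMap.sub_apply, ContinuousLinearMap.comp_apply]
    calc ‖U t 0 (E (-t) (SF t (E t (U 0 s ψ)))) - U t 0 (E (-s) (SF s (E s (U 0 s ψ))))‖
        ≤ ‖U t 0 (E (-t) (SF t (E t (U 0 s ψ))))‖
          + ‖U t 0 (E (-s) (SF s (E s (U 0 s ψ))))‖ := norm_sub_le _ _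
      _ ≤ M * ‖ψ‖ + M * ‖ψ‖ := by
          gcongr <;>
          · rw [hUnorm, hEnorm]
            calc ‖SF _ (E _ (U 0 s ψ))‖ ≤ ‖SF _‖ * ‖E _ (U 0 s ψ)‖ :=
                  (SF _).le_opNorm _
              _ ≤ M * ‖ψ‖ := by
                  rw [hEnorm, hUnorm]
                  exact mul_le_mul_of_nonneg_right (hM _) (norm_nonneg ψ)
      _ = 2 * M * ‖ψ‖ := by ring
  · -- the identity on D0
    intro ψ hψ h
    simp only [ContinuousLinearMap.sub_apply, ContinuousLinearMap.comp_apply]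
    have hf : HasDerivAt (fun a => U (t + a) s ψ)
        ((-Complex.I) • (Hop t ⟨U t s ψ, h⟩ : ℋ)) 0 := aux_shift t (hSchr s ψ hψ t)
    have hu2 : HasDerivAt (fun a => U (s + a) s ψ)
        ((-Complex.I) • (Hop s ⟨ψ, hψ⟩ : ℋ)) 0 := by
      have h0 := hSchr s ψ hψ s
      have e : (⟨U s s ψ, hUdom s s ψ hψ⟩ : D0) = ⟨ψ, hψ⟩ := Subtype.ext (hUidap s ψ)
      rw [e] at h0
      exact aux_shift s h0
    have hg1 : HasDerivAt (fun a => U (t + a) s ψ - U (t + a) 0 (U 0 (s + a) ψ))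
        ((-Complex.I) • (Hop t ⟨U t s ψ, h⟩ : ℋ)
          - ((-Complex.I) • (U t 0 (E (-t) (SF t (E t (U 0 s ψ)))))
            + Complex.I • (U t 0 (E (-s) (SF s (E s (U 0 s ψ))))))) 0 :=
      hf.sub (hWD ψ)
    have hg2 : HasDerivAt (fun a => U (t + a) s ψ - U (t + a) 0 (U 0 (s + a) ψ))
        ((-Complex.I) • (U t s (Hop s ⟨ψ, hψ⟩ : ℋ))) 0 := by
      rw [hasDerivAt_iff_tendsto_slope]
      have key : ∀ a, slope (fun b => U (t + b) s ψ - U (t + b) 0 (U 0 (s + b) ψ)) 0 a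
          = U (t + a) 0 (U 0 (s + a) (slope (fun b => U (s + b) s ψ) 0 a)) := by
        intro a
        rw [slope_def_module, slope_def_module,
          (U 0 (s + a)).map_smul_of_tower, (U (t + a) 0).map_smul_of_tower]
        congr 1
        simp only [add_zero]
        rw [map_sub, map_sub, hUap 0 (s + a) s, hUap (t + a) 0 s, hUidap s,
          hUap t 0 s, sub_self, sub_zero]
      have hslope : Tendsto (slope (fun b => U (s + b) s ψ) 0) (𝓝[≠] 0)
          (𝓝 ((-Complex.I) • (Hop s ⟨ψ, hψ⟩ : ℋ))) :=
        hasDerivAt_iff_tendsto_slope.mp hu2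
      have hVc : Tendsto (fun a => U (t + a) 0 (U 0 (s + a)
            ((-Complex.I) • (Hop s ⟨ψ, hψ⟩ : ℋ)))) (𝓝 0)
          (𝓝 (U (t + 0) 0 (U 0 (s + 0) ((-Complex.I) • (Hop s ⟨ψ, hψ⟩ : ℋ))))) :=
        aux_tendsto (fun a => U (t + a) 0)
          (fun a x => hUnorm (t + a) 0 x)
          (((hUc2 0 ((-Complex.I) • (Hop s ⟨ψ, hψ⟩ : ℋ))).comp
            (continuous_const.add continuous_id)).tendsto 0)
          (((hUc1 0 (U 0 (s + 0) ((-Complex.I) • (Hop s ⟨ψ, hψ⟩ : ℋ)))).comp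
            (continuous_const.add continuous_id)).tendsto 0)
      have hlim := aux_tendsto (fun a => (U (t + a) 0).comp (U 0 (s + a)))
        (fun a x => by simp only [ContinuousLinearMap.comp_apply]; rw [hUnorm, hUnorm])
        hslope (hVc.mono_left nhdsWithin_le_nhds)
      have hfin : U (t + 0) 0 (U 0 (s + 0) ((-Complex.I) • (Hop s ⟨ψ, hψ⟩ : ℋ)))
          = (-Complex.I) • (U t s (Hop s ⟨ψ, hψ⟩ : ℋ)) := by
        rw [map_smul, map_smul, add_zero, add_zero, hUap t 0 s]
      rw [hfin] at hlim
      exact Tendsto.congr (fun a => (key a).symm) hlim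
    have huniq := hg1.unique hg2
    have h5 : U t s (Hop s ⟨ψ, hψ⟩ : ℋ)
        = Complex.I • ((-Complex.I) • (Hop t ⟨U t s ψ, h⟩ : ℋ)
          - ((-Complex.I) • (U t 0 (E (-t) (SF t (E t (U 0 s ψ)))))
            + Complex.I • (U t 0 (E (-s) (SF s (E s (U 0 s ψ))))))) := by
      rw [huniq, smul_smul, mul_neg, Complex.I_mul_I, neg_neg, one_smul]
    rw [h5]
    simp only [smul_sub, smul_add, smul_smul, mul_neg, Complex.I_mul_I, neg_neg,
      one_smul, neg_one_smul]
    abel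
end

section
/- Assume the Floquet decomposition U(t,0) = U_F(t)e^{−itH_F} is continuously differentiable in the strong sense. Let E_n(t) be an eigenvalue of H(t) and E_m(s) an eigenvalue of H(s) with E_n(t) ≠ E_m(s), and let P_n(t) and P_m(s) denote the orthogonal projections onto the corresponding eigenspaces ker(H(t) − E_n(t)) and ker(H(s) − E_m(s)). Then ‖P_n(t)U(t,s)P_m(s)‖ ≤ 2‖S_F‖ / |E_n(t) − E_m(s)|, where ‖S_F‖ = sup_{t∈ℝ}‖S_F(t)‖. -/
open Filter

/-- if the Floquet decomposition is continuously differentiable in the strong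
sense, `E_n(t)` and `E_m(s)` are distinct eigenvalues of `H(t)` resp. `H(s)`, and `P`, `Q`
are the orthogonal projections onto the corresponding eigenspaces, then
`‖P U(t,s) Q‖ ≤ 2‖S_F‖ / |E_n(t) − E_m(s)|`, where `M` is any bound with `‖S_F(u)‖ ≤ M`
for all `u`. -/
theorem stmt_9
    {ℋ : Type*} [NormedAddCommGroup ℋ] [InnerProductSpace ℂ ℋ] [CompleteSpace ℋ]
    [SecondCountableTopology ℋ]
    (T : ℝ) (hT : 0 < T)
    -- the family H(t) of self-adjoint operators with common domain D0
    (D0 : Submodule ℂ ℋ) (hD0dense : Dense (D0 : Set ℋ))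
    (Hop : ℝ → ↥D0 →ₗ[ℂ] ℋ)
    (hHsym : ∀ t : ℝ, ∀ u v : ↥D0, (inner ℂ (Hop t u) (v : ℋ) : ℂ) = inner ℂ (u : ℋ) (Hop t v))
    (hHmax : ∀ t : ℝ, ∀ v w : ℋ,
      (∀ u : ↥D0, (inner ℂ (Hop t u) v : ℂ) = inner ℂ (u : ℋ) w) → v ∈ D0)
    (hHper : ∀ t : ℝ, Hop (t + T) = Hop t)
    -- the propagator U(t,s)
    (U : ℝ → ℝ → ℋ →L[ℂ] ℋ)
    (hUcont : ∀ ψ : ℋ, Continuous fun p : ℝ × ℝ => U p.1 p.2 ψ)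
    (hUnorm : ∀ t s : ℝ, ∀ ψ : ℋ, ‖U t s ψ‖ = ‖ψ‖)
    (hUid : ∀ t : ℝ, U t t = 1)
    (hUck : ∀ t r s : ℝ, (U t r).comp (U r s) = U t s)
    (hUper : ∀ t s : ℝ, U (t + T) (s + T) = U t s)
    (hUdom : ∀ t s : ℝ, ∀ ψ ∈ D0, U t s ψ ∈ D0)
    (hSchr : ∀ (s : ℝ) (ψ : ℋ) (hψ : ψ ∈ D0) (t : ℝ),
      HasDerivAt (fun τ => U τ s ψ)
        ((-Complex.I) • (Hop t ⟨U t s ψ, hUdom t s ψ hψ⟩ : ℋ)) t)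
    -- the self-adjoint operator H_F with domain DF and its unitary group E t = e^{-itH_F}
    (DF : Submodule ℂ ℋ) (hDFdense : Dense (DF : Set ℋ))
    (HF : ↥DF →ₗ[ℂ] ℋ)
    (hHFsym : ∀ u v : ↥DF, (inner ℂ (HF u) (v : ℋ) : ℂ) = inner ℂ (u : ℋ) (HF v))
    (hHFmax : ∀ v w : ℋ, (∀ u : ↥DF, (inner ℂ (HF u) v : ℂ) = inner ℂ (u : ℋ) w) → v ∈ DF)
    (E : ℝ → ℋ →L[ℂ] ℋ)
    (hE0 : E 0 = 1)
    (hEgrp : ∀ t s : ℝ, (E t).comp (E s) = E (t + s))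
    (hEnorm : ∀ t : ℝ, ∀ ψ : ℋ, ‖E t ψ‖ = ‖ψ‖)
    (hEcont : ∀ ψ : ℋ, Continuous fun t => E t ψ)
    (hEdom : ∀ t : ℝ, ∀ ψ ∈ DF, E t ψ ∈ DF)
    (hEderiv : ∀ (ψ : ℋ) (hψ : ψ ∈ DF) (t : ℝ),
      HasDerivAt (fun τ => E τ ψ) ((-Complex.I) • (HF ⟨E t ψ, hEdom t ψ hψ⟩ : ℋ)) t)
    (hMonodromy : U T 0 = E T)
    -- the Floquet decomposition U(t,0) = U_F(t) e^{-itH_F}, U_F(t) = U(t,0) E(-t), is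
    -- continuously differentiable in the strong sense, with bounded Hermitian S_F(t) and
    -- derivative ∂_t U_F(t)ψ = -i U_F(t) (S_F(t) ψ) for every ψ ∈ ℋ
    (SF : ℝ → ℋ →L[ℂ] ℋ)
    (hSFsa : ∀ t : ℝ, IsSelfAdjoint (SF t))
    (hUFderiv : ∀ (ψ : ℋ) (t : ℝ),
      HasDerivAt (fun τ => U τ 0 (E (-τ) ψ))
        ((-Complex.I) • (U t 0 (E (-t) (SF t ψ)))) t)
    (hSFcont : ∀ ψ : ℋ, Continuous fun t => U t 0 (E (-t) (SF t ψ)))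
    (t s : ℝ) (En Em : ℝ) (hne : En ≠ Em)
    (P Q : ℋ →L[ℂ] ℋ)
    (hPsa : IsSelfAdjoint P) (hPidem : P.comp P = P)
    (hQsa : IsSelfAdjoint Q) (hQidem : Q.comp Q = Q)
    (hPrange : ∀ x : ℋ, P x = x ↔ ∃ h : x ∈ D0, (Hop t ⟨x, h⟩ : ℋ) = (En : ℂ) • x)
    (hQrange : ∀ x : ℋ, Q x = x ↔ ∃ h : x ∈ D0, (Hop s ⟨x, h⟩ : ℋ) = (Em : ℂ) • x) :
    ∀ M : ℝ, (∀ u : ℝ, ‖SF u‖ ≤ M) →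
      ‖P.comp ((U t s).comp Q)‖ ≤ 2 * M / |En - Em| := by
  intro M hM
  have hM0 : 0 ≤ M := le_trans (norm_nonneg _) (hM 0)
  have hΔ : 0 < |En - Em| := abs_pos.mpr (sub_ne_zero.mpr hne)
  -- inner-product preservation
  have hUinner : ∀ a b : ℝ, ∀ x y : ℋ, (inner ℂ (U a b x) (U a b y) : ℂ) = inner ℂ x y := by
    intro a b x y
    exact (⟨(U a b).toLinearMap, fun z => hUnorm a b z⟩ : ℋ →ₗᵢ[ℂ] ℋ).inner_map_map x y
  have hEinner : ∀ a : ℝ, ∀ x y : ℋ, (inner ℂ (E a x) (E a y) : ℂ) = inner ℂ x y := by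
    intro a x y
    exact (⟨(E a).toLinearMap, fun z => hEnorm a z⟩ : ℋ →ₗᵢ[ℂ] ℋ).inner_map_map x y
  have hUinv : ∀ a b : ℝ, ∀ x : ℋ, U a b (U b a x) = x := by
    intro a b x
    have h := congrArg (fun A : ℋ →L[ℂ] ℋ => A x) ((hUck a b a).trans (hUid a))
    simpa using h
  have hEinv : ∀ a : ℝ, ∀ x : ℋ, E a (E (-a) x) = x := by
    intro a x
    have h := congrArg (fun A : ℋ →L[ℂ] ℋ => A x) (hEgrp a (-a))
    simp only [ContinuousLinearMap.comp_apply, add_neg_cancel, hE0] at h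
    simpa using h
  have hUadj : ∀ a b : ℝ, ∀ x y : ℋ, (inner ℂ (U a b x) y : ℂ) = inner ℂ x (U b a y) := by
    intro a b x y
    conv_lhs => rw [← hUinv a b y]
    exact hUinner a b x (U b a y)
  have hEadj : ∀ a : ℝ, ∀ x y : ℋ, (inner ℂ (E a x) y : ℂ) = inner ℂ x (E (-a) y) := by
    intro a x y
    conv_lhs => rw [show y = E a (E (-a) y) from (hEinv a y).symm]
    exact hEinner a x (E (-a) y)
  have hSFsym : ∀ (r : ℝ) (x y : ℋ), (inner ℂ (SF r x) y : ℂ) = inner ℂ x (SF r y) :=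
    fun r => ContinuousLinearMap.isSelfAdjoint_iff_isSymmetric.mp (hSFsa r)
  -- KEY: eigenvectors of H(r) give "eigenvectors" of H_F up to the S_F correction
  have key : ∀ (r Er : ℝ) (φ : ℋ) (hφ : φ ∈ D0), (Hop r ⟨φ, hφ⟩ : ℋ) = (Er : ℂ) • φ →
      ∃ hχ : U 0 r φ ∈ DF, (HF ⟨U 0 r φ, hχ⟩ : ℋ)
        = (Er : ℂ) • (U 0 r φ) - E (-r) (SF r (E r (U 0 r φ))) := by
    intro r Er φ hφ heig
    set χ := U 0 r φ with hχdef
    set w : ℋ := (Er : ℂ) • χ - E (-r) (SF r (E r χ)) with hw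
    have main : ∀ u : ↥DF, (inner ℂ (HF u) χ : ℂ) = inner ℂ (u : ℋ) w := by
      intro u
      have hf := hUFderiv (E r (u : ℋ)) r
      have hg := hSchr r φ hφ r
      have hUrr : U r r φ = φ := by rw [hUid]; rfl
      have hgval : (Hop r ⟨U r r φ, hUdom r r φ hφ⟩ : ℋ) = (Er : ℂ) • φ := by
        rw [show (⟨U r r φ, hUdom r r φ hφ⟩ : ↥D0) = ⟨φ, hφ⟩ from Subtype.ext hUrr, heig]
      rw [hgval] at hg
      have h1 := hf.inner ℂ hg
      have hfun : (fun τ => (inner ℂ (U τ 0 (E (-τ) (E r (u : ℋ)))) (U τ r φ) : ℂ))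
          = fun τ => (inner ℂ (E (r - τ) (u : ℋ)) χ : ℂ) := by
        funext τ
        have h2 : E (-τ) (E r (u : ℋ)) = E (r - τ) (u : ℋ) := by
          have h := congrArg (fun A : ℋ →L[ℂ] ℋ => A (u : ℋ)) (hEgrp (-τ) r)
          simpa [neg_add_eq_sub] using h
        have h3 : U τ r φ = U τ 0 χ := by
          have h := congrArg (fun A : ℋ →L[ℂ] ℋ => A φ) (hUck τ 0 r)
          simpa using h.symm
        rw [h2, h3, hUinner]
      rw [hfun] at h1
      have hp : HasDerivAt (fun τ => E (r - τ) (u : ℋ))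
          ((-1 : ℝ) • ((-Complex.I) • (HF u : ℋ))) r := by
        have hout := hEderiv (u : ℋ) u.2 0
        have h0 : (⟨E 0 (u : ℋ), hEdom 0 (u : ℋ) u.2⟩ : ↥DF) = u := by
          apply Subtype.ext
          show E 0 (u : ℋ) = (u : ℋ)
          rw [hE0]; rfl
        rw [h0] at hout
        have hin : HasDerivAt (fun τ : ℝ => r - τ) (-1 : ℝ) r := by
          have := (hasDerivAt_const r r).sub (hasDerivAt_id' r); rwa [zero_sub] at this
        exact HasDerivAt.scomp_of_eq r hout hin (by simp)
      have h2 := hp.inner ℂ (hasDerivAt_const (𝕜 := ℝ) r χ)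
      have heq := h1.unique h2
      have e1 : E (-r) (E r (u : ℋ)) = (u : ℋ) := by
        have h := congrArg (fun A : ℋ →L[ℂ] ℋ => A (u : ℋ)) (hEgrp (-r) r)
        simp only [ContinuousLinearMap.comp_apply, neg_add_cancel, hE0] at h
        simpa using h
      rw [hUrr, e1, sub_self] at heq
      have e2 : ((-1 : ℝ) • ((-Complex.I) • (HF u : ℋ))) = Complex.I • (HF u : ℋ) := by
        rw [neg_one_smul ℝ, ← neg_smul, neg_neg]
      rw [e2] at heq
      have L1 : (inner ℂ (U r 0 (u : ℋ)) ((-Complex.I) • ((Er : ℂ) • φ)) : ℂ)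
          = (-Complex.I) * ((Er : ℂ) * inner ℂ (u : ℋ) χ) := by
        rw [inner_smul_right, inner_smul_right, hUadj]
      have L2 : (inner ℂ ((-Complex.I) • (U r 0 (E (-r) (SF r (E r (u : ℋ)))))) φ : ℂ)
          = Complex.I * inner ℂ (u : ℋ) (E (-r) (SF r (E r χ))) := by
        rw [inner_smul_left]
        have h4 : (inner ℂ (U r 0 (E (-r) (SF r (E r (u : ℋ))))) φ : ℂ)
            = inner ℂ (u : ℋ) (E (-r) (SF r (E r χ))) := by
          rw [hUadj, hEadj, neg_neg, hSFsym, ← hEadj]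
        rw [h4]; simp
      have R2 : (inner ℂ (Complex.I • (HF u : ℋ)) χ : ℂ)
          = (-Complex.I) * inner ℂ (HF u : ℋ) χ := by
        rw [inner_smul_left]; simp
      rw [L1, L2, R2, inner_zero_right, zero_add] at heq
      have hfin : (inner ℂ (HF u : ℋ) χ : ℂ)
          = (Er : ℂ) * inner ℂ (u : ℋ) χ - inner ℂ (u : ℋ) (E (-r) (SF r (E r χ))) := by
        linear_combination (-Complex.I) * heq +
          ((inner ℂ (HF u : ℋ) χ : ℂ) + inner ℂ (u : ℋ) (E (-r) (SF r (E r χ)))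
            - (Er : ℂ) * inner ℂ (u : ℋ) χ) * Complex.I_sq
      rw [hfin, hw, inner_sub_right, inner_smul_right]
    have hχDF : χ ∈ DF := hHFmax χ w main
    refine ⟨hχDF, ?_⟩
    set z : ℋ := (HF ⟨χ, hχDF⟩ : ℋ) - w with hz
    have hzero : ∀ u : ↥DF, (inner ℂ (u : ℋ) z : ℂ) = 0 := by
      intro u
      rw [hz, inner_sub_right, ← hHFsym u ⟨χ, hχDF⟩, main u]
      exact sub_self _
    have hzall : ∀ x : ℋ, (inner ℂ x z : ℂ) = 0 := by
      have hc : Continuous fun x : ℋ => (inner ℂ x z : ℂ) := continuous_id.inner continuous_const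
      have hcl : IsClosed {x : ℋ | (inner ℂ x z : ℂ) = 0} := isClosed_eq hc continuous_const
      have hsub : (DF : Set ℋ) ⊆ {x : ℋ | (inner ℂ x z : ℂ) = 0} := fun x hx => hzero ⟨x, hx⟩
      have hsub2 : (Set.univ : Set ℋ) ⊆ {x : ℋ | (inner ℂ x z : ℂ) = 0} := by
        rw [← hDFdense.closure_eq]
        exact closure_minimal hsub hcl
      exact fun x => hsub2 (Set.mem_univ x)
    have hz0 : z = 0 := by
      have h6 := hzall z
      rwa [inner_self_eq_zero] at h6
    exact sub_eq_zero.mp hz0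
  -- scalar bound for eigenvectors
  have bound : ∀ (φ ψ : ℋ) (hφ : φ ∈ D0) (hψ : ψ ∈ D0),
      (Hop t ⟨φ, hφ⟩ : ℋ) = (En : ℂ) • φ → (Hop s ⟨ψ, hψ⟩ : ℋ) = (Em : ℂ) • ψ →
      |En - Em| * ‖(inner ℂ φ (U t s ψ) : ℂ)‖ ≤ 2 * M * ‖φ‖ * ‖ψ‖ := by
    intro φ ψ hφ hψ heφ heψ
    obtain ⟨hχ, hHFχ⟩ := key t En φ hφ heφ
    obtain ⟨hχ', hHFχ'⟩ := key s Em ψ hψ heψ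
    set χ := U 0 t φ
    set χ' := U 0 s ψ
    set B : ℋ := E (-t) (SF t (E t χ))
    set B' : ℋ := E (-s) (SF s (E s χ'))
    -- ⟪φ, U t s ψ⟫ = ⟪χ, χ'⟫
    have hip : (inner ℂ φ (U t s ψ) : ℂ) = inner ℂ χ χ' := by
      have h3 : U t s ψ = U t 0 χ' := by
        have h := congrArg (fun A : ℋ →L[ℂ] ℋ => A ψ) (hUck t 0 s)
        simpa using h.symm
      conv_lhs => rw [show φ = U t 0 χ from (hUinv t 0 φ).symm, h3, hUinner]
    -- symmetry of HF
    have hsym := hHFsym ⟨χ, hχ⟩ ⟨χ', hχ'⟩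
    rw [hHFχ, hHFχ'] at hsym
    have halg : ((En : ℂ) - (Em : ℂ)) * inner ℂ χ χ'
        = (inner ℂ B χ' : ℂ) - inner ℂ χ B' := by
      simp only [inner_sub_left, inner_sub_right, inner_smul_left, inner_smul_right,
        Complex.conj_ofReal] at hsym
      linear_combination hsym
    have hnB : ‖B‖ ≤ M * ‖χ‖ := by
      calc ‖B‖ = ‖SF t (E t χ)‖ := hEnorm _ _
        _ ≤ ‖SF t‖ * ‖E t χ‖ := (SF t).le_opNorm _
        _ = ‖SF t‖ * ‖χ‖ := by rw [hEnorm]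
        _ ≤ M * ‖χ‖ := mul_le_mul_of_nonneg_right (hM t) (norm_nonneg _)
    have hnB' : ‖B'‖ ≤ M * ‖χ'‖ := by
      calc ‖B'‖ = ‖SF s (E s χ')‖ := hEnorm _ _
        _ ≤ ‖SF s‖ * ‖E s χ'‖ := (SF s).le_opNorm _
        _ = ‖SF s‖ * ‖χ'‖ := by rw [hEnorm]
        _ ≤ M * ‖χ'‖ := mul_le_mul_of_nonneg_right (hM s) (norm_nonneg _)
    have hχn : ‖χ‖ = ‖φ‖ := hUnorm _ _ _
    have hχ'n : ‖χ'‖ = ‖ψ‖ := hUnorm _ _ _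
    have hnorm1 : ‖((En : ℂ) - (Em : ℂ))‖ = |En - Em| := by
      rw [← Complex.ofReal_sub, Complex.norm_real, Real.norm_eq_abs]
    calc |En - Em| * ‖(inner ℂ φ (U t s ψ) : ℂ)‖
        = ‖((En : ℂ) - (Em : ℂ)) * inner ℂ χ χ'‖ := by
          rw [norm_mul, hnorm1, hip]
      _ = ‖(inner ℂ B χ' : ℂ) - inner ℂ χ B'‖ := by rw [halg]
      _ ≤ ‖(inner ℂ B χ' : ℂ)‖ + ‖(inner ℂ χ B' : ℂ)‖ := norm_sub_le _ _
      _ ≤ ‖B‖ * ‖χ'‖ + ‖χ‖ * ‖B'‖ := add_le_add (norm_inner_le_norm _ _) (norm_inner_le_norm _ _)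
      _ ≤ (M * ‖χ‖) * ‖χ'‖ + ‖χ‖ * (M * ‖χ'‖) := by
          gcongr
      _ = 2 * M * ‖φ‖ * ‖ψ‖ := by rw [hχn, hχ'n]; ring
  -- contractivity of Q
  have hQcontr : ∀ y : ℋ, ‖Q y‖ ≤ ‖y‖ := by
    intro y
    have hQQ : Q (Q y) = Q y := by
      have h := congrArg (fun A : ℋ →L[ℂ] ℋ => A y) hQidem
      simpa using h
    have hQsym := ContinuousLinearMap.isSelfAdjoint_iff_isSymmetric.mp hQsa
    have hinner : (inner ℂ (Q y) (Q y) : ℂ) = inner ℂ y (Q y) := by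
      have h := hQsym y (Q y)
      simp only [ContinuousLinearMap.coe_coe] at h
      rw [h, hQQ]
    have h1 : ‖Q y‖ * ‖Q y‖ ≤ ‖y‖ * ‖Q y‖ := by
      calc ‖Q y‖ * ‖Q y‖ = ‖(inner ℂ (Q y) (Q y) : ℂ)‖ := by
            rw [inner_self_eq_norm_sq_to_K]
            simp [sq, abs_of_nonneg (mul_nonneg (norm_nonneg _) (norm_nonneg _))]
        _ = ‖(inner ℂ y (Q y) : ℂ)‖ := by rw [hinner]
        _ ≤ ‖y‖ * ‖Q y‖ := norm_inner_le_norm _ _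
    rcases eq_or_lt_of_le (norm_nonneg (Q y)) with h | h
    · rw [← h]; exact norm_nonneg y
    · exact le_of_mul_le_mul_right h1 h
  -- final bound
  have hC : 0 ≤ 2 * M / |En - Em| := div_nonneg (by linarith) (le_of_lt hΔ)
  apply ContinuousLinearMap.opNorm_le_bound _ hC
  intro y
  set z := P (U t s (Q y)) with hzdef
  have hPz : P z = z := by
    have h := congrArg (fun A : ℋ →L[ℂ] ℋ => A (U t s (Q y))) hPidem
    simpa using h
  have hQQ : Q (Q y) = Q y := by
    have h := congrArg (fun A : ℋ →L[ℂ] ℋ => A y) hQidem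
    simpa using h
  obtain ⟨hzD0, hzeig⟩ := (hPrange z).mp hPz
  obtain ⟨hqD0, hqeig⟩ := (hQrange (Q y)).mp hQQ
  have hb := bound z (Q y) hzD0 hqD0 hzeig hqeig
  have hzz : (inner ℂ z (U t s (Q y)) : ℂ) = inner ℂ z z := by
    calc (inner ℂ z (U t s (Q y)) : ℂ) = inner ℂ (P z) (U t s (Q y)) := by rw [hPz]
      _ = inner ℂ z (P (U t s (Q y))) :=
          (ContinuousLinearMap.isSelfAdjoint_iff_isSymmetric.mp hPsa) _ _
      _ = inner ℂ z z := rfl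
  have hnz : ‖(inner ℂ z (U t s (Q y)) : ℂ)‖ = ‖z‖ * ‖z‖ := by
    rw [hzz, inner_self_eq_norm_sq_to_K]
    simp [sq, abs_of_nonneg (mul_nonneg (norm_nonneg _) (norm_nonneg _))]
  rw [hnz] at hb
  -- |Δ| * (‖z‖*‖z‖) ≤ 2M‖z‖‖Qy‖ ≤ 2M‖z‖‖y‖
  have hz1 : |En - Em| * (‖z‖ * ‖z‖) ≤ 2 * M * ‖z‖ * ‖y‖ := by
    calc |En - Em| * (‖z‖ * ‖z‖) ≤ 2 * M * ‖z‖ * ‖Q y‖ := hb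
      _ ≤ 2 * M * ‖z‖ * ‖y‖ := by
          apply mul_le_mul_of_nonneg_left (hQcontr y)
          positivity
  show ‖z‖ ≤ 2 * M / |En - Em| * ‖y‖
  rcases eq_or_lt_of_le (norm_nonneg z) with h | h
  · rw [← h]; positivity
  · rw [div_mul_eq_mul_div, le_div_iff₀ hΔ]
    exact le_of_mul_le_mul_right
      (by nlinarith : ‖z‖ * |En - Em| * ‖z‖ ≤ 2 * M * ‖y‖ * ‖z‖) h
end

section
/- Let A be a self-adjoint operator in ℋ, n ∈ ℤ₊, and X ∈ C_n(A). Then X(Dom(A^k)) ⊆ Dom(A^k) for every k = 0, 1, …, n. -/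
set_option linter.unusedSectionVars false
set_option maxHeartbeats 1000000


open scoped ComplexOrder
open Classical

variable {ℋ : Type*} [NormedAddCommGroup ℋ] [InnerProductSpace ℂ ℋ] [CompleteSpace ℋ]

/-- The everywhere-defined extension (by `0` outside the domain) of an unbounded operator
`Aop` with domain the submodule `D`. -/
noncomputable def Aext (D : Submodule ℂ ℋ) (Aop : ↥D →ₗ[ℂ] ℋ) (ψ : ℋ) : ℋ :=
  if h : ψ ∈ D then Aop ⟨ψ, h⟩ else 0

/-- `Dom(A^n)`: the set of vectors to which `A` can be applied `n` times. -/
def domPow (D : Submodule ℂ ℋ) (Aop : ↥D →ₗ[ℂ] ℋ) (n : ℕ) : Set ℋ :=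
  {ψ : ℋ | ∀ k, k < n → (Aext D Aop)^[k] ψ ∈ D}

/-- The sesquilinear form `α_n(ξ,η) = Σ_{k=0}^{n} C(n,k)(−1)^k ⟨X A^k ξ, A^{n−k} η⟩`,
defined (meaningfully) on `Dom(A^n)`. -/
noncomputable def commForm (D : Submodule ℂ ℋ) (Aop : ↥D →ₗ[ℂ] ℋ)
    (X : ℋ →L[ℂ] ℋ) (n : ℕ) (ξ η : ℋ) : ℂ :=
  ∑ k ∈ Finset.range (n + 1),
    (n.choose k : ℂ) * (-1) ^ k *
      (inner ℂ (X ((Aext D Aop)^[k] ξ)) ((Aext D Aop)^[n - k] η) : ℂ)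

/-- `ad_A^n X` exists in `B(ℋ)` and equals the bounded operator `Z`: the form `α_n` is
represented by `Z` on `Dom(A^n)`. -/
def AdExistsN (D : Submodule ℂ ℋ) (Aop : ↥D →ₗ[ℂ] ℋ) (n : ℕ) (X Z : ℋ →L[ℂ] ℋ) : Prop :=
  ∀ ξ ∈ domPow D Aop n, ∀ η ∈ domPow D Aop n,
    commForm D Aop X n ξ η = (inner ℂ (Z ξ) η : ℂ)

/-- `X ∈ C_n(A)`: the multiple commutators `ad_A^k X` exist in `B(ℋ)` for `k = 0,…,n`. -/
def InCn (D : Submodule ℂ ℋ) (Aop : ↥D →ₗ[ℂ] ℋ) (n : ℕ) (X : ℋ →L[ℂ] ℋ) : Prop :=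
  ∀ k, k ≤ n → ∃ Z : ℋ →L[ℂ] ℋ, AdExistsN D Aop k X Z

/-- Self-adjointness of the (in general unbounded) operator `Aop` with domain `D`:
it is densely defined, symmetric, and its domain is maximal. -/
def IsSelfAdjointOp (D : Submodule ℂ ℋ) (Aop : ↥D →ₗ[ℂ] ℋ) : Prop :=
  Dense (D : Set ℋ) ∧
    (∀ u v : ↥D, (inner ℂ (Aop u) (v : ℋ) : ℂ) = inner ℂ (u : ℋ) (Aop v)) ∧
    ∀ v w : ℋ, (∀ u : ↥D, (inner ℂ (Aop u) v : ℂ) = inner ℂ (u : ℋ) w) → v ∈ D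

section Aux

local notation "⟪" x ", " y "⟫" => @inner ℂ _ _ x y

variable (D : Submodule ℂ ℋ) (Aop : ↥D →ₗ[ℂ] ℋ)

lemma Aext_coe (ψ : ℋ) (h : ψ ∈ D) : Aext D Aop ψ = Aop ⟨ψ, h⟩ := dif_pos h

lemma Aext_symm (hA : IsSelfAdjointOp D Aop) {ψ φ : ℋ} (hψ : ψ ∈ D) (hφ : φ ∈ D) :
    ⟪Aext D Aop ψ, φ⟫ = ⟪ψ, Aext D Aop φ⟫ := by
  rw [Aext_coe D Aop ψ hψ, Aext_coe D Aop φ hφ]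
  exact hA.2.1 ⟨ψ, hψ⟩ ⟨φ, hφ⟩

lemma domPow_mono {k m : ℕ} (h : k ≤ m) : domPow D Aop m ⊆ domPow D Aop k :=
  fun _ hψ j hj => hψ j (lt_of_lt_of_le hj h)

lemma domPow_mem {m : ℕ} {ψ : ℋ} (hψ : ψ ∈ domPow D Aop m) (hm : 0 < m) : ψ ∈ D := by
  simpa using hψ 0 hm

lemma domPow_iter {m r : ℕ} {ψ : ℋ} (hψ : ψ ∈ domPow D Aop m) :
    (Aext D Aop)^[r] ψ ∈ domPow D Aop (m - r) := by
  intro j hj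
  rw [← Function.iterate_add_apply]
  exact hψ (j + r) (by omega)

lemma inner_zero_of_dense (hA : IsSelfAdjointOp D Aop) (z : ℋ)
    (h : ∀ u : D, ⟪(u : ℋ), z⟫ = 0) : z = 0 := by
  have hc : IsClosed {x : ℋ | ⟪x, z⟫ = 0} :=
    isClosed_eq (continuous_id.inner continuous_const) continuous_const
  have hsub : closure (D : Set ℋ) ⊆ {x : ℋ | ⟪x, z⟫ = 0} :=
    closure_minimal (fun u hu => h ⟨u, hu⟩) hc
  have hz : ⟪z, z⟫ = 0 := hsub (by rw [hA.1.closure_eq]; trivial)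
  exact inner_self_eq_zero.mp hz

lemma weak_mem (hA : IsSelfAdjointOp D Aop) {v w : ℋ}
    (h : ∀ u : D, ⟪Aop u, v⟫ = ⟪(u : ℋ), w⟫) :
    ∃ hv : v ∈ D, Aop ⟨v, hv⟩ = w := by
  have hv : v ∈ D := hA.2.2 v w h
  refine ⟨hv, ?_⟩
  have h0 : ∀ u : D, ⟪(u : ℋ), Aop ⟨v, hv⟩ - w⟫ = 0 := by
    intro u
    rw [inner_sub_right, ← hA.2.1 u ⟨v, hv⟩, h u, sub_self]
  have := inner_zero_of_dense D Aop hA _ h0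
  exact sub_eq_zero.mp this

/-- the operator `1 + iεA` on `D`. -/
noncomputable def resB (ε : ℝ) : ↥D →ₗ[ℂ] ℋ :=
  D.subtype + ((ε : ℂ) * Complex.I) • Aop

lemma resB_apply (ε : ℝ) (u : ↥D) :
    resB D Aop ε u = (u : ℋ) + ((ε : ℂ) * Complex.I) • Aop u := rfl

lemma resB_norm_sq (hA : IsSelfAdjointOp D Aop) (ε : ℝ) (u : ↥D) :
    ‖resB D Aop ε u‖ ^ 2 = ‖(u : ℋ)‖ ^ 2 + ε ^ 2 * ‖Aop u‖ ^ 2 := by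
  have him : (⟪(u : ℋ), Aop u⟫).im = 0 := by
    have h1 : (starRingEnd ℂ) ⟪(u : ℋ), Aop u⟫ = ⟪(u : ℋ), Aop u⟫ := by
      rw [inner_conj_symm]; exact hA.2.1 u u
    have := Complex.conj_eq_iff_im.mp h1
    exact this
  have hre : RCLike.re ⟪(u : ℋ), ((ε : ℂ) * Complex.I) • Aop u⟫ = 0 := by
    rw [inner_smul_right]
    simp only [RCLike.re_to_complex, Complex.mul_re, Complex.mul_im, Complex.ofReal_re,
      Complex.ofReal_im, Complex.I_re, Complex.I_im, him]
    ring
  rw [resB_apply, @norm_add_sq ℂ _ _ _ _ (u : ℋ) _, hre, norm_smul]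
  have : ‖(ε : ℂ) * Complex.I‖ = |ε| := by
    simp [norm_mul, Complex.norm_real]
  rw [this]
  rw [mul_pow, sq_abs]
  ring

lemma resB_norm_le (hA : IsSelfAdjointOp D Aop) (ε : ℝ) (u : ↥D) :
    ‖(u : ℋ)‖ ≤ ‖resB D Aop ε u‖ := by
  have h := resB_norm_sq D Aop hA ε u
  nlinarith [norm_nonneg (resB D Aop ε u), norm_nonneg ((u : ℋ)), sq_nonneg (ε * ‖Aop u‖),
    sq_nonneg (‖(u : ℋ)‖ - ‖resB D Aop ε u‖), sq_nonneg (‖(u : ℋ)‖ + ‖resB D Aop ε u‖)]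

lemma resB_surj (hA : IsSelfAdjointOp D Aop) {ε : ℝ} (hε : 0 < ε) (y : ℋ) :
    ∃ u : ↥D, resB D Aop ε u = y := by
  set c : ℂ := (ε : ℂ) * Complex.I with hc
  have hcne : c ≠ 0 := by
    simp [hc, Complex.ext_iff]
    exact ne_of_gt hε
  set K := LinearMap.range (resB D Aop ε) with hK
  have hclosed : IsClosed (K : Set ℋ) := by
    apply IsSeqClosed.isClosed
    intro ys y0 hys hlim
    choose us hus using fun n => LinearMap.mem_range.mp (hys n)
    have hyC : CauchySeq ys := hlim.cauchySeq
    have hcauchy : CauchySeq (fun n => ((us n : ℋ))) := by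
      rw [Metric.cauchySeq_iff] at hyC ⊢
      intro δ hδ
      obtain ⟨N, hN⟩ := hyC δ hδ
      refine ⟨N, fun m hm n hn => lt_of_le_of_lt ?_ (hN m hm n hn)⟩
      rw [dist_eq_norm, dist_eq_norm, ← hus m, ← hus n, ← map_sub]
      have := resB_norm_le D Aop hA ε (us m - us n)
      simpa using this
    obtain ⟨v, hvlim⟩ := cauchySeq_tendsto_of_complete hcauchy
    have hAop : ∀ n, Aop (us n) = c⁻¹ • (ys n - (us n : ℋ)) := by
      intro n
      have h1 : ys n = (us n : ℋ) + c • Aop (us n) := by rw [← hus n]; rfl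
      rw [h1]
      simp [smul_smul, inv_mul_cancel₀ hcne]
    have hwlim : Filter.Tendsto (fun n => Aop (us n)) Filter.atTop
        (nhds (c⁻¹ • (y0 - v))) := by
      simp only [hAop]
      exact ((hlim.sub hvlim).const_smul c⁻¹)
    have hweak : ∀ u : D, ⟪Aop u, v⟫ = ⟪(u : ℋ), c⁻¹ • (y0 - v)⟫ := by
      intro u
      have l1 : Filter.Tendsto (fun n => ⟪Aop u, (us n : ℋ)⟫) Filter.atTop
          (nhds ⟪Aop u, v⟫) := (Filter.Tendsto.inner tendsto_const_nhds hvlim)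
      have l2 : Filter.Tendsto (fun n => ⟪(u : ℋ), Aop (us n)⟫) Filter.atTop
          (nhds ⟪(u : ℋ), c⁻¹ • (y0 - v)⟫) := (Filter.Tendsto.inner tendsto_const_nhds hwlim)
      have heq : (fun n => ⟪Aop u, (us n : ℋ)⟫) = fun n => ⟪(u : ℋ), Aop (us n)⟫ := by
        funext n; exact hA.2.1 u (us n)
      rw [heq] at l1
      exact tendsto_nhds_unique l1 l2
    obtain ⟨hv, hAv⟩ := weak_mem D Aop hA hweak
    refine LinearMap.mem_range.mpr ⟨⟨v, hv⟩, ?_⟩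
    rw [resB_apply]
    show v + c • Aop ⟨v, hv⟩ = y0
    rw [hAv, smul_smul, mul_inv_cancel₀ hcne, one_smul]
    abel
  have horto : Kᗮ = ⊥ := by
    rw [Submodule.eq_bot_iff]
    intro z hz
    have h1 : ∀ u : D, ⟪Aop u, z⟫ = ⟪(u : ℋ), c⁻¹ • z⟫ := by
      intro u
      have h0 : ⟪resB D Aop ε u, z⟫ = 0 :=
        (Submodule.mem_orthogonal K z).mp hz _ (LinearMap.mem_range.mpr ⟨u, rfl⟩)
      rw [resB_apply, inner_add_left, inner_smul_left] at h0
      have hcconj : (starRingEnd ℂ) c = -c := by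
        simp [hc]
      rw [hcconj] at h0
      rw [inner_smul_right]
      have : c * (c⁻¹ * ⟪(u : ℋ), z⟫) = c * ⟪Aop u, z⟫ := by
        rw [← mul_assoc, mul_inv_cancel₀ hcne, one_mul]
        linear_combination h0
      exact (mul_left_cancel₀ hcne this).symm
    obtain ⟨hzD, hAz⟩ := weak_mem D Aop hA h1
    have hsym := hA.2.1 ⟨z, hzD⟩ ⟨z, hzD⟩
    rw [hAz] at hsym
    rw [inner_smul_left, inner_smul_right] at hsym
    have hconj : (starRingEnd ℂ) c⁻¹ = -c⁻¹ := by
      rw [map_inv₀]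
      have : (starRingEnd ℂ) c = -c := by simp [hc]
      rw [this, inv_neg]
    rw [hconj] at hsym
    have h2 : (2 : ℂ) * (c⁻¹ * ⟪z, z⟫) = 0 := by linear_combination -hsym
    have h3 : ⟪z, z⟫ = 0 := by
      rcases mul_eq_zero.mp h2 with h | h
      · norm_num at h
      · rcases mul_eq_zero.mp h with h' | h'
        · exact absurd h' (inv_ne_zero hcne)
        · exact h'
    simpa using inner_self_eq_zero.mp h3
  have : CompleteSpace K := hclosed.completeSpace_coe
  have hKtop : K = ⊤ := Submodule.orthogonal_eq_bot_iff.mp horto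
  have hy : y ∈ K := by rw [hKtop]; trivial
  exact LinearMap.mem_range.mp hy

/-- the resolvent-type operator `(1 + iεA)⁻¹`. -/
noncomputable def resT (ε : ℝ) (y : ℋ) : ℋ :=
  if h : ∃ u : ↥D, resB D Aop ε u = y then ((h.choose : ↥D) : ℋ) else 0

lemma resT_unique (hA : IsSelfAdjointOp D Aop) {ε : ℝ} (hε : 0 < ε) (y : ℋ) (v : ↥D) (hv : resB D Aop ε v = y) :
    (v : ℋ) = resT D Aop ε y := by
  have hex : ∃ u : ↥D, resB D Aop ε u = y := ⟨v, hv⟩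
  rw [resT, dif_pos hex]
  have h1 : resB D Aop ε hex.choose = y := hex.choose_spec
  have h2 := resB_norm_le D Aop hA ε (v - hex.choose)
  rw [map_sub, hv, h1, sub_self, norm_zero] at h2
  have h3 : ((v : ℋ) - (hex.choose : ℋ)) = 0 := by
    rw [← Submodule.coe_sub]
    exact norm_le_zero_iff.mp h2
  exact sub_eq_zero.mp h3

lemma resT_mem (hA : IsSelfAdjointOp D Aop) {ε : ℝ} (hε : 0 < ε) (y : ℋ) : resT D Aop ε y ∈ D := by
  have hex := resB_surj D Aop hA hε y
  rw [resT, dif_pos hex]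
  exact hex.choose.2

lemma resT_B (hA : IsSelfAdjointOp D Aop) {ε : ℝ} (hε : 0 < ε) (y : ℋ)
    (h : resT D Aop ε y ∈ D) : resB D Aop ε ⟨resT D Aop ε y, h⟩ = y := by
  have hex := resB_surj D Aop hA hε y
  have h0 : resT D Aop ε y = ((hex.choose : ↥D) : ℋ) := by rw [resT, dif_pos hex]
  have h1 : (⟨resT D Aop ε y, h⟩ : ↥D) = hex.choose := Subtype.ext h0
  rw [h1]
  exact hex.choose_spec

lemma resT_spec (hA : IsSelfAdjointOp D Aop) {ε : ℝ} (hε : 0 < ε) (y : ℋ) :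
    resT D Aop ε y + ((ε : ℂ) * Complex.I) • Aext D Aop (resT D Aop ε y) = y := by
  have hm := resT_mem D Aop hA hε y
  have h1 := resT_B D Aop hA hε y hm
  rw [resB_apply] at h1
  rw [Aext_coe D Aop _ hm]
  exact h1

lemma resT_norm (hA : IsSelfAdjointOp D Aop) {ε : ℝ} (hε : 0 < ε) (y : ℋ) : ‖resT D Aop ε y‖ ≤ ‖y‖ := by
  have hm := resT_mem D Aop hA hε y
  have h := resB_norm_le D Aop hA ε ⟨resT D Aop ε y, hm⟩
  rw [resT_B D Aop hA hε y hm] at h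
  exact h

lemma resT_sub (hA : IsSelfAdjointOp D Aop) {ε : ℝ} (hε : 0 < ε) (y y' : ℋ) :
    resT D Aop ε (y - y') = resT D Aop ε y - resT D Aop ε y' := by
  have hm := resT_mem D Aop hA hε y
  have hm' := resT_mem D Aop hA hε y'
  have h : resB D Aop ε ((⟨resT D Aop ε y, hm⟩ : ↥D) - ⟨resT D Aop ε y', hm'⟩) = y - y' := by
    rw [map_sub, resT_B D Aop hA hε y hm, resT_B D Aop hA hε y' hm']
  have := resT_unique D Aop hA hε (y - y') _ h
  rw [← this]
  simp

lemma resT_comm (hA : IsSelfAdjointOp D Aop) {ε : ℝ} (hε : 0 < ε) {z : ℋ} (hz : z ∈ D) :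
    Aext D Aop (resT D Aop ε z) ∈ D ∧
      Aext D Aop (resT D Aop ε z) = resT D Aop ε (Aext D Aop z) := by
  set c : ℂ := (ε : ℂ) * Complex.I with hc
  have hcne : c ≠ 0 := by
    simp [hc, Complex.ext_iff]
    exact ne_of_gt hε
  have hm := resT_mem D Aop hA hε z
  set Tz : ↥D := ⟨resT D Aop ε z, hm⟩ with hTz
  set zz : ↥D := ⟨z, hz⟩ with hzz
  have h1 : (Tz : ℋ) + c • Aop Tz = z := by
    have := resT_B D Aop hA hε z hm
    rw [resB_apply] at this
    exact this
  have hATz : Aop Tz = c⁻¹ • (z - (Tz : ℋ)) := by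
    have h2 : c • Aop Tz = z - (Tz : ℋ) := eq_sub_of_add_eq' h1
    rw [← h2, smul_smul, inv_mul_cancel₀ hcne, one_smul]
  set u2 : ↥D := c⁻¹ • (zz - Tz) with hu2
  have hu2c : (u2 : ℋ) = Aop Tz := by
    rw [hu2, hATz]
    push_cast
    rfl
  have hAextTz : Aext D Aop (resT D Aop ε z) = Aop Tz := Aext_coe D Aop _ hm
  have hru2 : resB D Aop ε u2 = Aop zz := by
    rw [resB_apply, hu2c]
    have hAu2 : Aop u2 = c⁻¹ • (Aop zz - Aop Tz) := by rw [hu2, map_smul, map_sub]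
    rw [hAu2, smul_smul, mul_inv_cancel₀ hcne, one_smul]
    abel
  have hzeq : Aext D Aop z = Aop zz := Aext_coe D Aop _ hz
  constructor
  · rw [hAextTz, ← hu2c]; exact u2.2
  · rw [hAextTz, ← hu2c, hzeq]
    exact resT_unique D Aop hA hε _ _ hru2

lemma resT_dom (hA : IsSelfAdjointOp D Aop) {ε : ℝ} (hε : 0 < ε) : ∀ (k : ℕ) {y : ℋ},
    y ∈ domPow D Aop k →
    resT D Aop ε y ∈ domPow D Aop (k + 1) ∧
      ∀ i ≤ k, (Aext D Aop)^[i] (resT D Aop ε y) = resT D Aop ε ((Aext D Aop)^[i] y) := by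
  intro k
  induction k with
  | zero =>
    intro y _
    refine ⟨?_, ?_⟩
    · intro j hj
      interval_cases j
      simpa using resT_mem D Aop hA hε y
    · intro i hi
      interval_cases i
      simp
  | succ k ih =>
    intro y hy
    obtain ⟨ihm, ihid⟩ := ih (domPow_mono D Aop (Nat.le_succ k) hy)
    have hid : ∀ i ≤ k + 1,
        (Aext D Aop)^[i] (resT D Aop ε y) = resT D Aop ε ((Aext D Aop)^[i] y) := by
      intro i hi
      match i with
      | 0 => simp
      | (i + 1) =>
        rw [Function.iterate_succ_apply', ihid i (by omega),
          (resT_comm D Aop hA hε (hy i (by omega))).2,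
          ← Function.iterate_succ_apply' (Aext D Aop) i y]
    refine ⟨?_, hid⟩
    intro j hj
    rcases Nat.lt_or_ge j (k + 1) with h | h
    · exact ihm j h
    · have hjk : j = k + 1 := by omega
      subst hjk
      rw [Function.iterate_succ_apply', ihid k (le_refl k)]
      exact (resT_comm D Aop hA hε (hy k (by omega))).1

lemma resT_iter_dom (hA : IsSelfAdjointOp D Aop) {ε : ℝ} (hε : 0 < ε) (k : ℕ) {u : ℋ} (hu : u ∈ D) :
    (resT D Aop ε)^[k] u ∈ domPow D Aop (k + 1) ∧
      Aext D Aop ((resT D Aop ε)^[k] u) = (resT D Aop ε)^[k] (Aext D Aop u) := by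
  induction k with
  | zero =>
    refine ⟨?_, by simp⟩
    intro j hj
    interval_cases j
    simpa using hu
  | succ k ih =>
    obtain ⟨ihm, ihid⟩ := ih
    rw [Function.iterate_succ_apply']
    refine ⟨(resT_dom D Aop hA hε (k + 1) ihm).1, ?_⟩
    have hmemD : (resT D Aop ε)^[k] u ∈ D := domPow_mem D Aop ihm (by omega)
    rw [(resT_comm D Aop hA hε hmemD).2, ihid,
      ← Function.iterate_succ_apply' (resT D Aop ε) k (Aext D Aop u)]

lemma resT_approx (hA : IsSelfAdjointOp D Aop) {ε : ℝ} (hε : 0 < ε) {z : ℋ} (hz : z ∈ D) :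
    ‖resT D Aop ε z - z‖ ≤ ε * ‖Aext D Aop z‖ := by
  have hzT : (z : ℋ) = resT D Aop ε (resB D Aop ε ⟨z, hz⟩) :=
    resT_unique D Aop hA hε _ ⟨z, hz⟩ rfl
  have h1 : resT D Aop ε z - z = resT D Aop ε (z - resB D Aop ε ⟨z, hz⟩) := by
    rw [resT_sub D Aop hA hε, ← hzT]
  rw [h1]
  have h2 := resT_norm D Aop hA hε (z - resB D Aop ε ⟨z, hz⟩)
  refine le_trans h2 ?_
  rw [resB_apply, Aext_coe D Aop z hz]
  have : z - ((z : ℋ) + ((ε : ℂ) * Complex.I) • Aop ⟨z, hz⟩)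
      = -(((ε : ℂ) * Complex.I) • Aop ⟨z, hz⟩) := by abel
  rw [this, norm_neg, norm_smul]
  have hnc : ‖(ε : ℂ) * Complex.I‖ = |ε| := by simp [norm_mul, Complex.norm_real]
  rw [hnc, abs_of_pos hε]

lemma resT_iter_lip (hA : IsSelfAdjointOp D Aop) {ε : ℝ} (hε : 0 < ε) (k : ℕ) (a b : ℋ) :
    ‖(resT D Aop ε)^[k] a - (resT D Aop ε)^[k] b‖ ≤ ‖a - b‖ := by
  induction k with
  | zero => simp
  | succ k ih =>
    rw [Function.iterate_succ_apply', Function.iterate_succ_apply']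
    rw [← resT_sub D Aop hA hε]
    exact le_trans (resT_norm D Aop hA hε _) ih

lemma resT_iter_approx (hA : IsSelfAdjointOp D Aop) {ε : ℝ} (hε : 0 < ε) (k : ℕ) (y : ℋ) :
    ‖(resT D Aop ε)^[k] y - y‖ ≤ k * ‖resT D Aop ε y - y‖ := by
  induction k with
  | zero => simp
  | succ k ih =>
    have h1 : (resT D Aop ε)^[k + 1] y - y
        = ((resT D Aop ε)^[k] (resT D Aop ε y) - (resT D Aop ε)^[k] y)
          + ((resT D Aop ε)^[k] y - y) := by
      rw [Function.iterate_succ_apply]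
      abel
    rw [h1]
    refine le_trans (norm_add_le _ _) ?_
    have h2 := resT_iter_lip D Aop hA hε k (resT D Aop ε y) y
    push_cast
    nlinarith [norm_nonneg (resT D Aop ε y - y)]

lemma resT_iter_tendsto (hA : IsSelfAdjointOp D Aop) (k : ℕ) (y : ℋ) :
    Filter.Tendsto (fun j : ℕ => (resT D Aop (1 / (j + 1)))^[k] y)
      Filter.atTop (nhds y) := by
  rw [Metric.tendsto_atTop]
  intro δ hδ
  have hyc : y ∈ closure (D : Set ℋ) := hA.1 y
  rw [Metric.mem_closure_iff] at hyc
  obtain ⟨u, huD, hud⟩ := hyc (δ / (4 * (k + 1))) (by positivity)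
  set C : ℝ := ‖Aext D Aop u‖ with hC
  obtain ⟨N, hN⟩ := exists_nat_gt (2 * (k + 1) * C / δ)
  refine ⟨N, fun j hj => ?_⟩
  have hεj : (0 : ℝ) < 1 / ((j : ℝ) + 1) := by positivity
  set e : ℝ := 1 / ((j : ℝ) + 1) with he
  set T := resT D Aop (1 / ((j : ℝ) + 1)) with hT
  have h1 : dist ((fun j : ℕ => (resT D Aop (1 / (j + 1)))^[k] y) j) y = ‖T^[k] y - y‖ := by
    rw [dist_eq_norm]
  rw [h1]
  have h2 : ‖T^[k] y - y‖ ≤ k * ‖T y - y‖ := resT_iter_approx D Aop hA hεj k y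
  set d : ℝ := dist y u with hd
  have hd0 : 0 ≤ d := dist_nonneg
  have hC0 : 0 ≤ C := norm_nonneg _
  have b1 : ‖T y - T u‖ ≤ d := by
    rw [← resT_sub D Aop hA hεj, hd, dist_eq_norm]
    exact resT_norm D Aop hA hεj _
  have b2 : ‖T u - u‖ ≤ e * C := resT_approx D Aop hA hεj huD
  have b3 : ‖u - y‖ = d := by rw [hd, dist_eq_norm, norm_sub_rev]
  have h3 : ‖T y - y‖ ≤ 2 * d + e * C := by
    have e1 : T y - y = (T y - T u) + (T u - u) + (u - y) := by abel
    rw [e1]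
    have := norm_add_le (T y - T u + (T u - u)) (u - y)
    have := norm_add_le (T y - T u) (T u - u)
    rw [b3] at *
    linarith
  -- arithmetic
  have hdδ : d < δ / (4 * ((k : ℝ) + 1)) := hud
  have hNδ : 2 * ((k : ℝ) + 1) * C < N * δ := by
    rw [div_lt_iff₀ hδ] at hN
    exact hN
  have ge1 : e ≤ 1 / ((N : ℝ) + 1) := by
    apply one_div_le_one_div_of_le (by positivity)
    push_cast
    have : (N : ℝ) ≤ (j : ℝ) := Nat.cast_le.mpr hj
    linarith
  have ge2 : e * C ≤ C / ((N : ℝ) + 1) := by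
    calc e * C ≤ (1 / ((N : ℝ) + 1)) * C := mul_le_mul_of_nonneg_right ge1 hC0
    _ = C / ((N : ℝ) + 1) := by ring
  have ge3 : C / ((N : ℝ) + 1) < δ / (2 * ((k : ℝ) + 1)) := by
    rw [div_lt_div_iff₀ (by positivity) (by positivity)]
    nlinarith
  have key : 2 * d + e * C < δ / ((k : ℝ) + 1) := by
    have : 2 * d < δ / (2 * ((k : ℝ) + 1)) := by
      rw [lt_div_iff₀ (by positivity)] at hdδ ⊢
      linarith
    have hsplit : δ / (2 * ((k : ℝ) + 1)) + δ / (2 * ((k : ℝ) + 1)) = δ / ((k : ℝ) + 1) := by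
      field_simp
      ring
    linarith
  have hx0 : 0 ≤ 2 * d + e * C := by positivity
  calc ‖T^[k] y - y‖ ≤ (k : ℝ) * ‖T y - y‖ := h2
    _ ≤ (k : ℝ) * (2 * d + e * C) := by
        apply mul_le_mul_of_nonneg_left h3 (by positivity)
    _ ≤ ((k : ℝ) + 1) * (2 * d + e * C) := by nlinarith
    _ < ((k : ℝ) + 1) * (δ / ((k : ℝ) + 1)) := by
        apply mul_lt_mul_of_pos_left key (by positivity)
    _ = δ := by field_simp

/-- The key "core" property: it suffices to test membership in `D` against `Dom(A^{m+1})`. -/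
lemma core_lemma (hA : IsSelfAdjointOp D Aop) (m : ℕ) (v w : ℋ)
    (h : ∀ η ∈ domPow D Aop (m + 1), ⟪Aext D Aop η, v⟫ = ⟪η, w⟫) : v ∈ D := by
  apply hA.2.2 v w
  intro u
  have key : ∀ j : ℕ, ⟪(resT D Aop (1 / (j + 1)))^[m] (Aop u), v⟫
      = ⟪(resT D Aop (1 / (j + 1)))^[m] (u : ℋ), w⟫ := by
    intro j
    have hεj : (0 : ℝ) < 1 / ((j : ℝ) + 1) := by positivity
    obtain ⟨hmem, hid⟩ := resT_iter_dom D Aop hA hεj m u.2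
    have h2 := h _ hmem
    rw [hid] at h2
    have hAu : Aext D Aop (u : ℋ) = Aop u := by
      rw [Aext_coe D Aop _ u.2]
    rw [hAu] at h2
    exact h2
  have l1 : Filter.Tendsto (fun j : ℕ => ⟪(resT D Aop (1 / (j + 1)))^[m] (Aop u), v⟫)
      Filter.atTop (nhds ⟪Aop u, v⟫) :=
    Filter.Tendsto.inner (resT_iter_tendsto D Aop hA m (Aop u)) tendsto_const_nhds
  have l2 : Filter.Tendsto (fun j : ℕ => ⟪(resT D Aop (1 / (j + 1)))^[m] (u : ℋ), w⟫)
      Filter.atTop (nhds ⟪(u : ℋ), w⟫) :=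
    Filter.Tendsto.inner (resT_iter_tendsto D Aop hA m (u : ℋ)) tendsto_const_nhds
  have : (fun j : ℕ => ⟪(resT D Aop (1 / (j + 1)))^[m] (Aop u), v⟫)
      = fun j : ℕ => ⟪(resT D Aop (1 / (j + 1)))^[m] (u : ℋ), w⟫ := funext key
  rw [this] at l1
  exact tendsto_nhds_unique l1 l2

end Aux

section Alg

local notation "⟪" x ", " y "⟫" => @inner ℂ _ _ x y

variable (D : Submodule ℂ ℋ) (Aop : ↥D →ₗ[ℂ] ℋ)

/-- moving powers of `A` across the inner product. -/
lemma shift (hA : IsSelfAdjointOp D Aop) : ∀ (M : ℕ) {x η : ℋ},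
    x ∈ domPow D Aop M → η ∈ domPow D Aop (M + 1) →
    ⟪x, (Aext D Aop)^[M + 1] η⟫ = ⟪(Aext D Aop)^[M] x, Aext D Aop η⟫ := by
  intro M
  induction M with
  | zero =>
    intro x η _ _
    simp
  | succ M ih =>
    intro x η hx hη
    have hη' : Aext D Aop η ∈ domPow D Aop (M + 1) := by
      intro i hi
      rw [← Function.iterate_succ_apply]
      exact hη (i + 1) (by omega)
    have h1 : (Aext D Aop)^[M + 2] η = (Aext D Aop)^[M + 1] (Aext D Aop η) :=
      Function.iterate_succ_apply _ _ _
    rw [h1, ih (domPow_mono D Aop (Nat.le_succ M) hx) hη']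
    have hxM : (Aext D Aop)^[M] x ∈ D := hx M (by omega)
    have hηD : Aext D Aop η ∈ D := by
      have := hη 1 (by omega)
      simpa using this
    rw [← Aext_symm D Aop hA hxM hηD, ← Function.iterate_succ_apply' (Aext D Aop) M x]

/-- the collapsing binomial coefficient sum. -/
lemma coeff_sum (M s : ℕ) (hs : s ≤ M) :
    (∑ j ∈ Finset.range (M + 1),
      if s ≤ j then ((M.choose j : ℂ) * (j.choose s : ℂ) * (-1) ^ (j - s)) else 0)
      = if s = M then 1 else 0 := by
  rw [Finset.range_eq_Ico,
    ← Finset.sum_Ico_consecutive _ (Nat.zero_le s) (by omega : s ≤ M + 1)]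
  have h1 : (∑ j ∈ Finset.Ico 0 s,
      if s ≤ j then ((M.choose j : ℂ) * (j.choose s : ℂ) * (-1) ^ (j - s)) else 0) = 0 := by
    apply Finset.sum_eq_zero
    intro j hj
    rw [Finset.mem_Ico] at hj
    rw [if_neg (by omega)]
  rw [h1, zero_add, Finset.sum_Ico_eq_sum_range]
  have h2 : ∀ t ∈ Finset.range (M + 1 - s),
      (if s ≤ s + t then ((M.choose (s + t) : ℂ) * ((s + t).choose s : ℂ) * (-1) ^ (s + t - s))
        else 0)
      = (M.choose s : ℂ) * (((M - s).choose t : ℂ) * (-1) ^ t) := by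
    intro t ht
    rw [Finset.mem_range] at ht
    rw [if_pos (by omega)]
    have hc := Nat.choose_mul (n := M) (show s ≤ s + t by omega)
    have hst : s + t - s = t := by omega
    rw [hst]
    have hcast : (M.choose (s + t) : ℂ) * ((s + t).choose s : ℂ)
        = (M.choose s : ℂ) * ((M - s).choose (s + t - s) : ℂ) := by
      exact_mod_cast hc
    rw [hcast, hst]
    ring
  rw [Finset.sum_congr rfl h2, ← Finset.mul_sum]
  have h3 : M + 1 - s = (M - s) + 1 := by omega
  rw [h3]
  have h4 : (∑ t ∈ Finset.range ((M - s) + 1), (((M - s).choose t : ℂ) * (-1) ^ t))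
      = if M - s = 0 then 1 else 0 := by
    have := Int.alternating_sum_range_choose (n := M - s)
    have hcast := congrArg (Int.cast : ℤ → ℂ) this
    push_cast at hcast
    rw [← hcast]
    apply Finset.sum_congr rfl
    intro t _
    ring
  rw [h4]
  by_cases hMs : s = M
  · rw [if_pos (by omega), if_pos hMs]
    subst hMs
    simp
  · rw [if_neg (by omega), if_neg hMs, mul_zero]


/-- the binomial-inversion identity. -/
lemma inversion (X : ℋ →L[ℂ] ℋ) (M : ℕ) (Z : ℕ → (ℋ →L[ℂ] ℋ))
    (hZ : ∀ j, j ≤ M → AdExistsN D Aop j X (Z j))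
    {ψ η : ℋ} (hψ : ψ ∈ domPow D Aop M) (hη : η ∈ domPow D Aop M) :
    ⟪X ψ, (Aext D Aop)^[M] η⟫ =
      ∑ j ∈ Finset.range (M + 1),
        (M.choose j : ℂ) * ⟪Z j ((Aext D Aop)^[M - j] ψ), η⟫ := by
  symm
  set G : ℕ → ℂ := fun s => ⟪X ((Aext D Aop)^[M - s] ψ), (Aext D Aop)^[s] η⟫ with hG
  have step1 : ∀ j ∈ Finset.range (M + 1),
      (M.choose j : ℂ) * ⟪Z j ((Aext D Aop)^[M - j] ψ), η⟫
      = ∑ s ∈ Finset.range (M + 1),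
          (if s ≤ j then ((M.choose j : ℂ) * (j.choose s : ℂ) * (-1) ^ (j - s)) else 0)
            * G s := by
    intro j hj
    rw [Finset.mem_range] at hj
    have hj' : j ≤ M := by omega
    have hξ : (Aext D Aop)^[M - j] ψ ∈ domPow D Aop j := by
      have h0 := domPow_iter D Aop (r := M - j) hψ
      have hMj : M - (M - j) = j := by omega
      rwa [hMj] at h0
    have hηj : η ∈ domPow D Aop j := domPow_mono D Aop hj' hη
    have hrel := hZ j hj' _ hξ η hηj
    rw [← hrel]
    simp only [commForm]
    rw [Finset.mul_sum]
    rw [← Finset.sum_range_reflect (fun i => (M.choose j : ℂ) *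
      ((j.choose i : ℂ) * (-1) ^ i *
        ⟪X ((Aext D Aop)^[i] ((Aext D Aop)^[M - j] ψ)), (Aext D Aop)^[j - i] η⟫)) (j + 1)]
    have hss : Finset.range (j + 1) ⊆ Finset.range (M + 1) :=
      Finset.range_subset_range.mpr (by omega)
    rw [← Finset.sum_subset hss ?hzero]
    case hzero =>
      intro s _ hs
      rw [Finset.mem_range, not_lt] at hs
      rw [if_neg (by omega), zero_mul]
    apply Finset.sum_congr rfl
    intro s hs
    rw [Finset.mem_range] at hs
    have hsj : s ≤ j := by omega
    have h1 : j + 1 - 1 - s = j - s := by omega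
    rw [h1]
    have h2 : (Aext D Aop)^[j - s] ((Aext D Aop)^[M - j] ψ) = (Aext D Aop)^[M - s] ψ := by
      rw [← Function.iterate_add_apply]
      congr 1
      omega
    have h3 : j - (j - s) = s := by omega
    rw [h2, h3, Nat.choose_symm hsj, if_pos hsj, hG]
    ring
  rw [Finset.sum_congr rfl step1, Finset.sum_comm]
  have step2 : ∀ s ∈ Finset.range (M + 1),
      (∑ j ∈ Finset.range (M + 1),
        (if s ≤ j then ((M.choose j : ℂ) * (j.choose s : ℂ) * (-1) ^ (j - s)) else 0) * G s)
      = (if s = M then G s else 0) := by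
    intro s hs
    rw [Finset.mem_range] at hs
    rw [← Finset.sum_mul, coeff_sum M s (by omega)]
    by_cases hsM : s = M
    · rw [if_pos hsM, if_pos hsM, one_mul]
    · rw [if_neg hsM, if_neg hsM, zero_mul]
  rw [Finset.sum_congr rfl step2, Finset.sum_ite_eq' (Finset.range (M + 1)) M G,
    if_pos (Finset.self_mem_range_succ M)]
  rw [hG]
  simp

end Alg

/-- if `A` is self-adjoint and `X ∈ C_n(A)` then
`X(Dom(A^k)) ⊆ Dom(A^k)` for every `k = 0,1,…,n`. -/
theorem stmt_12 {ℋ : Type*} [NormedAddCommGroup ℋ] [InnerProductSpace ℂ ℋ] [CompleteSpace ℋ]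
    (D : Submodule ℂ ℋ) (Aop : ↥D →ₗ[ℂ] ℋ) (hA : IsSelfAdjointOp D Aop)
    (n : ℕ) (X : ℋ →L[ℂ] ℋ) (hX : InCn D Aop n X) :
    ∀ k, k ≤ n → ∀ ψ ∈ domPow D Aop k, X ψ ∈ domPow D Aop k := by
  choose! Z hZ using hX
  intro k
  induction k with
  | zero =>
    intro _ ψ _ j hj
    omega
  | succ k ih =>
    intro hk ψ hψ
    have hk' : k ≤ n := by omega
    have hψk : ψ ∈ domPow D Aop k := domPow_mono D Aop (Nat.le_succ k) hψ
    have hXk : X ψ ∈ domPow D Aop k := ih hk' ψ hψk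
    intro j hj
    rcases Nat.lt_or_ge j k with h | h
    · exact hXk j h
    · have hjk : j = k := by omega
      subst hjk
      set w : ℋ := ∑ i ∈ Finset.range (j + 2),
        ((j + 1).choose i : ℂ) • Z i ((Aext D Aop)^[j + 1 - i] ψ) with hw
      apply core_lemma D Aop hA j ((Aext D Aop)^[j] (X ψ)) w
      intro η hη
      have hZ' : ∀ i, i ≤ j + 1 → AdExistsN D Aop i X (Z i) := fun i hi =>
        hZ i (le_trans hi hk)
      have h1 := inversion D Aop X (j + 1) Z hZ' hψ hη
      have h2 := shift D Aop hA j hXk hη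
      have h3 : (inner ℂ w η : ℂ) = ∑ i ∈ Finset.range (j + 2),
          ((j + 1).choose i : ℂ) * (inner ℂ (Z i ((Aext D Aop)^[j + 1 - i] ψ)) η : ℂ) := by
        rw [hw, sum_inner]
        apply Finset.sum_congr rfl
        intro i _
        rw [inner_smul_left]
        norm_num
      have h4 : (inner ℂ ((Aext D Aop)^[j] (X ψ)) (Aext D Aop η) : ℂ) = inner ℂ w η := by
        rw [h3, ← h1, ← h2]
      rw [← inner_conj_symm (Aext D Aop η) ((Aext D Aop)^[j] (X ψ)), h4, inner_conj_symm]
end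

section
/- Let A be a self-adjoint operator in ℋ, n ∈ ℤ₊, and X ∈ B(ℋ). Then X ∈ C_{n+1}(A) if and only if ad_A X exists in B(ℋ) and ad_A X ∈ C_n(A); moreover, in that case ad_A^k(ad_A X) = ad_A^{k+1} X for k = 0, 1, …, n. -/
set_option linter.unusedSectionVars false
set_option maxHeartbeats 1600000
open Complex Filter


open scoped ComplexOrder
open Classical

variable {ℋ : Type*} [NormedAddCommGroup ℋ] [InnerProductSpace ℂ ℋ] [CompleteSpace ℋ]

section Aux

variable {D : Submodule ℂ ℋ} {Aop : ↥D →ₗ[ℂ] ℋ}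

lemma dense_sep (hdense : Dense (D : Set ℋ)) {a b : ℋ}
    (h : ∀ u : ↥D, (inner ℂ (u : ℋ) a : ℂ) = inner ℂ (u : ℋ) b) : a = b := by
  have hcl : IsClosed {z : ℋ | (inner ℂ z (a - b) : ℂ) = 0} :=
    isClosed_eq (Continuous.inner continuous_id continuous_const) continuous_const
  have hsub : (D : Set ℋ) ⊆ {z : ℋ | (inner ℂ z (a - b) : ℂ) = 0} := by
    intro z hz
    have := h ⟨z, hz⟩
    simp only [Set.mem_setOf_eq, inner_sub_right, this]
    ring
  have hall : ∀ z : ℋ, (inner ℂ z (a - b) : ℂ) = 0 := by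
    intro z
    have := hcl.closure_subset_iff.mpr hsub
    exact this (by rw [hdense.closure_eq]; trivial)
  have := hall (a - b)
  rw [inner_self_eq_zero, sub_eq_zero] at this
  exact this

lemma inner_Aop_self_real (hsym : ∀ u v : ↥D, (inner ℂ (Aop u) (v : ℋ) : ℂ) = inner ℂ (u : ℋ) (Aop v))
    (u : ↥D) : ((inner ℂ (Aop u) (u : ℋ) : ℂ)).im = 0 := by
  have h1 : (inner ℂ (Aop u) (u : ℋ) : ℂ) = inner ℂ (u : ℋ) (Aop u) := hsym u u
  have h2 : (inner ℂ ((u : ℋ)) (Aop u) : ℂ) = starRingEnd ℂ (inner ℂ (Aop u) (u : ℋ)) :=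
    (inner_conj_symm _ _).symm
  have : (inner ℂ (Aop u) (u : ℋ) : ℂ) = starRingEnd ℂ (inner ℂ (Aop u) (u : ℋ)) := h1.trans h2
  have := congrArg Complex.im this
  simpa using by linarith [this, Complex.conj_im (inner ℂ (Aop u) (u : ℋ) : ℂ)]

lemma normL_sq (hsym : ∀ u v : ↥D, (inner ℂ (Aop u) (v : ℋ) : ℂ) = inner ℂ (u : ℋ) (Aop v))
    (t : ℝ) (u : ↥D) :
    ‖(Aop u : ℋ) + ((t : ℂ) * Complex.I) • (u : ℋ)‖ ^ 2
      = ‖(Aop u : ℋ)‖ ^ 2 + t ^ 2 * ‖(u : ℋ)‖ ^ 2 := by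
  have hre : RCLike.re (inner ℂ (Aop u) (((t : ℂ) * Complex.I) • (u : ℋ)) : ℂ) = 0 := by
    rw [inner_smul_right]
    have him := inner_Aop_self_real hsym u
    simp only [RCLike.re_to_complex, Complex.mul_re, Complex.mul_im]
    simp [him]
  rw [@norm_add_sq ℂ]
  rw [hre]
  have : ‖((t : ℂ) * Complex.I) • (u : ℋ)‖ = |t| * ‖(u : ℋ)‖ := by
    rw [norm_smul]; simp
  rw [this]
  rw [mul_pow, _root_.sq_abs]
  ring

lemma exists_unique_sol (hA : IsSelfAdjointOp D Aop) {t : ℝ} (ht : 0 < t) (y : ℋ) :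
    ∃! u : ↥D, (Aop u : ℋ) + ((t : ℂ) * Complex.I) • (u : ℋ) = y := by
  obtain ⟨hdense, hsym, hmax⟩ := hA
  set c : ℂ := (t : ℂ) * Complex.I with hc
  set L : ↥D →ₗ[ℂ] ℋ := Aop + c • D.subtype with hL
  have hLapp : ∀ u : ↥D, L u = (Aop u : ℋ) + c • (u : ℋ) := fun u => rfl
  have hnorm : ∀ u : ↥D, ‖L u‖ ^ 2 = ‖(Aop u : ℋ)‖ ^ 2 + t ^ 2 * ‖(u : ℋ)‖ ^ 2 := by
    intro u; rw [hLapp]; exact normL_sq hsym t u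
  have hlow : ∀ u : ↥D, t * ‖(u : ℋ)‖ ≤ ‖L u‖ := by
    intro u
    nlinarith [hnorm u, norm_nonneg (L u), norm_nonneg ((u : ℋ)), norm_nonneg ((Aop u : ℋ)),
      mul_pos ht ht]
  have hAle : ∀ u : ↥D, ‖(Aop u : ℋ)‖ ≤ ‖L u‖ := by
    intro u
    nlinarith [hnorm u, norm_nonneg (L u), norm_nonneg ((u : ℋ)), norm_nonneg ((Aop u : ℋ))]
  have huniq : ∀ u₁ u₂ : ↥D, L u₁ = L u₂ → u₁ = u₂ := by
    intro u₁ u₂ h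
    have h0 : L (u₁ - u₂) = 0 := by rw [map_sub, h, sub_self]
    have h1 := hlow (u₁ - u₂)
    rw [h0, norm_zero] at h1
    have hn : ‖((u₁ - u₂ : ↥D) : ℋ)‖ = 0 := by
      nlinarith [norm_nonneg (((u₁ - u₂ : ↥D)) : ℋ)]
    have h2 : ((u₁ - u₂ : ↥D) : ℋ) = 0 := norm_eq_zero.mp hn
    have h3 : (u₁ : ℋ) = (u₂ : ℋ) := by
      have : (u₁ : ℋ) - (u₂ : ℋ) = 0 := by simpa using h2
      exact sub_eq_zero.mp this
    exact Subtype.ext h3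
  set K : Submodule ℂ ℋ := LinearMap.range L with hK
  -- K is closed
  have hclosed : IsClosed (K : Set ℋ) := by
    rw [← closure_subset_iff_isClosed]
    intro z hz
    rw [mem_closure_iff_seq_limit] at hz
    obtain ⟨g, hg, hgz⟩ := hz
    choose u hu using hg
    have hgc : CauchySeq g := hgz.cauchySeq
    have huc : CauchySeq (fun n => ((u n : ℋ))) := by
      rw [Metric.cauchySeq_iff] at hgc ⊢
      intro ε hε
      obtain ⟨N, hN⟩ := hgc (t * ε) (by positivity)
      refine ⟨N, fun m hm n hn => ?_⟩
      have h1 := hlow (u m - u n)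
      have h2 : L (u m - u n) = g m - g n := by rw [map_sub, hu, hu]
      rw [h2] at h1
      have h3 : dist (g m) (g n) < t * ε := hN m hm n hn
      rw [dist_eq_norm] at h3
      have : dist ((u m : ℋ)) ((u n : ℋ)) = ‖((u m : ℋ)) - ((u n : ℋ))‖ := dist_eq_norm _ _
      rw [this]
      have h4 : ‖((u m : ℋ)) - ((u n : ℋ))‖ = ‖((u m - u n : ↥D) : ℋ)‖ := by norm_cast
      rw [h4]
      nlinarith [norm_nonneg (((u m - u n : ↥D)) : ℋ)]
    have hac : CauchySeq (fun n => (Aop (u n) : ℋ)) := by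
      rw [Metric.cauchySeq_iff] at hgc ⊢
      intro ε hε
      obtain ⟨N, hN⟩ := hgc ε hε
      refine ⟨N, fun m hm n hn => ?_⟩
      have h1 := hAle (u m - u n)
      have h2 : L (u m - u n) = g m - g n := by rw [map_sub, hu, hu]
      rw [h2] at h1
      have h3 := hN m hm n hn
      rw [dist_eq_norm] at h3 ⊢
      have h4 : (Aop (u m) : ℋ) - (Aop (u n) : ℋ) = (Aop (u m - u n) : ℋ) := by
        rw [map_sub]
      rw [h4]
      linarith
    obtain ⟨x, hx⟩ := cauchySeq_tendsto_of_complete huc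
    obtain ⟨w, hw⟩ := cauchySeq_tendsto_of_complete hac
    -- z = w + c • x
    have hzwx : z = w + c • x := by
      have h1 : Tendsto (fun n => (Aop (u n) : ℋ) + c • ((u n : ℋ))) atTop (nhds (w + c • x)) :=
        hw.add (hx.const_smul c)
      have h2 : Tendsto g atTop (nhds (w + c • x)) := by
        refine h1.congr fun n => ?_
        rw [← hLapp, hu]
      exact tendsto_nhds_unique hgz h2
    -- x ∈ D and Aop x = w
    have hinner : ∀ v : ↥D, (inner ℂ (Aop v) x : ℂ) = inner ℂ (v : ℋ) w := by
      intro v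
      have h1 : Tendsto (fun n => (inner ℂ (Aop v) ((u n : ℋ)) : ℂ)) atTop
          (nhds (inner ℂ (Aop v) x)) := Filter.Tendsto.inner tendsto_const_nhds hx
      have h2 : Tendsto (fun n => (inner ℂ ((v : ℋ)) (Aop (u n) : ℋ) : ℂ)) atTop
          (nhds (inner ℂ ((v : ℋ)) w)) := Filter.Tendsto.inner tendsto_const_nhds hw
      have h3 : (fun n => (inner ℂ (Aop v) ((u n : ℋ)) : ℂ))
          = fun n => (inner ℂ ((v : ℋ)) (Aop (u n) : ℋ) : ℂ) := by
        funext n; exact hsym v (u n)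
      rw [h3] at h1
      exact tendsto_nhds_unique h1 h2
    have hxD : x ∈ D := hmax x w hinner
    have hAx : (Aop ⟨x, hxD⟩ : ℋ) = w := by
      apply dense_sep hdense
      intro v
      rw [← hsym v ⟨x, hxD⟩]
      exact hinner v
    refine ⟨⟨x, hxD⟩, ?_⟩
    rw [hLapp, hAx, hzwx]
  -- Kᗮ = ⊥
  have hKbot : Kᗮ = ⊥ := by
    rw [Submodule.eq_bot_iff]
    intro v hv
    rw [Submodule.mem_orthogonal] at hv
    have hv' : ∀ u : ↥D, (inner ℂ (Aop u) v : ℂ) = inner ℂ ((u : ℋ)) (c • v) := by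
      intro u
      have h0 : (inner ℂ (L u) v : ℂ) = 0 := hv (L u) (LinearMap.mem_range_self L u)
      rw [hLapp, inner_add_left, inner_smul_left] at h0
      rw [inner_smul_right]
      have hcc : starRingEnd ℂ c = -c := by
        simp [hc, Complex.ext_iff]
      rw [hcc] at h0
      linear_combination h0
    have hvD : v ∈ D := hmax v (c • v) hv'
    have hAv : (Aop ⟨v, hvD⟩ : ℋ) = c • v := by
      apply dense_sep hdense
      intro u
      rw [← hsym u ⟨v, hvD⟩]
      exact hv' u
    have him := inner_Aop_self_real hsym ⟨v, hvD⟩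
    rw [hAv] at him
    have : (inner ℂ (c • v) v : ℂ) = starRingEnd ℂ c * (inner ℂ v v : ℂ) := inner_smul_left _ _ _
    rw [this] at him
    have hinn : (inner ℂ v v : ℂ) = ((‖v‖ : ℂ)) ^ 2 := by
      rw [inner_self_eq_norm_sq_to_K]; norm_cast
    rw [hinn] at him
    have hcc : starRingEnd ℂ c = -((t:ℂ) * Complex.I) := by simp [hc, Complex.ext_iff]
    rw [hcc] at him
    have h5 : (-((t:ℂ) * Complex.I) * ((‖v‖:ℂ)) ^ 2).im = -(t * ‖v‖^2) := by
      simp only [← Complex.ofReal_pow, Complex.neg_im, Complex.mul_im, Complex.ofReal_re,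
        Complex.ofReal_im, Complex.mul_re, Complex.I_re, Complex.I_im]
      ring
    rw [h5] at him
    have hv0 : ‖v‖ ^ 2 = 0 := by nlinarith
    have : ‖v‖ = 0 := sq_eq_zero_iff.mp hv0
    simpa using norm_eq_zero.mp this
  -- K = ⊤
  haveI : CompleteSpace K := hclosed.completeSpace_coe
  have hKtop : K = ⊤ := by
    have h1 : Kᗮᗮ = K := Submodule.orthogonal_orthogonal K
    rw [hKbot] at h1
    rw [← h1, Submodule.bot_orthogonal_eq_top]
  have hyK : y ∈ K := by rw [hKtop]; trivial
  obtain ⟨u, hu⟩ := hyK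
  refine ⟨u, ?_, ?_⟩
  · show (Aop u : ℋ) + c • (u : ℋ) = y
    rw [← hLapp]; exact hu
  · intro u' hu'
    have hu'' : (Aop u' : ℋ) + c • (u' : ℋ) = y := hu'
    apply huniq
    rw [hLapp u', hu'', hu]


lemma Aext_of_mem {ψ : ℋ} (h : ψ ∈ D) : Aext D Aop ψ = Aop ⟨ψ, h⟩ := dif_pos h

lemma Aext_smul {ψ : ℋ} (h : ψ ∈ D) (c : ℂ) : Aext D Aop (c • ψ) = c • Aext D Aop ψ := by
  rw [Aext_of_mem (D.smul_mem c h), Aext_of_mem h]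
  have : (⟨c • ψ, D.smul_mem c h⟩ : ↥D) = c • ⟨ψ, h⟩ := rfl
  rw [this, map_smul]

lemma domPow_anti {k l : ℕ} (hkl : k ≤ l) {ψ : ℋ} (h : ψ ∈ domPow D Aop l) :
    ψ ∈ domPow D Aop k := fun j hj => h j (lt_of_lt_of_le hj hkl)

lemma mem_D_iter {ψ : ℋ} {k j : ℕ} (h : ψ ∈ domPow D Aop k) (hj : j < k) :
    (Aext D Aop)^[j] ψ ∈ D := h j hj


noncomputable def cst (m : ℕ) : ℂ := (((m : ℝ) + 1 : ℝ) : ℂ) * Complex.I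

lemma cst_norm (m : ℕ) : ‖cst m‖ = (m : ℝ) + 1 := by
  rw [cst, norm_mul, Complex.norm_I, mul_one, Complex.norm_real, Real.norm_eq_abs,
    _root_.abs_of_nonneg (by positivity : (0:ℝ) ≤ (m:ℝ)+1)]

noncomputable def solm (hA : IsSelfAdjointOp D Aop) (m : ℕ) (y : ℋ) : ↥D :=
  (exists_unique_sol hA (t := (m : ℝ) + 1) (by positivity) y).exists.choose

lemma solm_spec (hA : IsSelfAdjointOp D Aop) (m : ℕ) (y : ℋ) :
    (Aop (solm hA m y) : ℋ) + cst m • ((solm hA m y : ℋ)) = y :=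
  (exists_unique_sol hA (t := (m : ℝ) + 1) (by positivity) y).exists.choose_spec

lemma solm_unique (hA : IsSelfAdjointOp D Aop) (m : ℕ) (y : ℋ) (u : ↥D)
    (h : (Aop u : ℋ) + cst m • ((u : ℋ)) = y) : u = solm hA m y := by
  have hEU := exists_unique_sol hA (t := (m : ℝ) + 1) (by positivity) y
  exact hEU.unique h (solm_spec hA m y)

lemma solm_norm (hA : IsSelfAdjointOp D Aop) (m : ℕ) (y : ℋ) :
    ((m : ℝ) + 1) * ‖((solm hA m y : ℋ))‖ ≤ ‖y‖ := by
  have hs := solm_spec hA m y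
  have hn := normL_sq hA.2.1 ((m : ℝ) + 1) (solm hA m y)
  rw [show (((m : ℝ) + 1 : ℝ) : ℂ) * Complex.I = cst m from rfl] at hn
  rw [hs] at hn
  nlinarith [norm_nonneg ((solm hA m y : ℋ)), norm_nonneg ((Aop (solm hA m y) : ℋ)),
    norm_nonneg y, (Nat.cast_nonneg m : (0:ℝ) ≤ m)]

lemma solm_Aop_norm (hA : IsSelfAdjointOp D Aop) (m : ℕ) (y : ℋ) :
    ‖(Aop (solm hA m y) : ℋ)‖ ≤ ‖y‖ := by
  have hs := solm_spec hA m y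
  have hn := normL_sq hA.2.1 ((m : ℝ) + 1) (solm hA m y)
  rw [show (((m : ℝ) + 1 : ℝ) : ℂ) * Complex.I = cst m from rfl] at hn
  rw [hs] at hn
  nlinarith [norm_nonneg ((solm hA m y : ℋ)), norm_nonneg ((Aop (solm hA m y) : ℋ)),
    norm_nonneg y, (Nat.cast_nonneg m : (0:ℝ) ≤ m)]

lemma solm_smul_norm (hA : IsSelfAdjointOp D Aop) (m : ℕ) (y : ℋ) :
    ‖cst m • ((solm hA m y : ℋ))‖ ≤ ‖y‖ := by
  rw [norm_smul, cst_norm]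
  exact solm_norm hA m y

lemma solm_sub (hA : IsSelfAdjointOp D Aop) (m : ℕ) (y y' : ℋ) :
    solm hA m y - solm hA m y' = solm hA m (y - y') := by
  apply solm_unique
  rw [map_sub]
  have h1 := solm_spec hA m y
  have h2 := solm_spec hA m y'
  push_cast
  rw [smul_sub]
  abel_nf
  linear_combination (norm := module) h1 - h2

lemma solm_comm (hA : IsSelfAdjointOp D Aop) (m : ℕ) {y : ℋ} (hy : y ∈ D) :
    (Aop (solm hA m y) : ℋ) = ((solm hA m (Aop ⟨y, hy⟩) : ℋ)) := by
  set u := solm hA m y with hu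
  have hs : (Aop u : ℋ) + cst m • ((u : ℋ)) = y := solm_spec hA m y
  have hmem : (Aop u : ℋ) ∈ D := by
    have : (Aop u : ℋ) = y - cst m • ((u : ℋ)) := by linear_combination (norm := module) hs
    rw [this]
    exact D.sub_mem hy (D.smul_mem _ u.2)
  set v : ↥D := ⟨(Aop u : ℋ), hmem⟩ with hv
  have hveq : v = ⟨y, hy⟩ - cst m • u := by
    apply Subtype.ext
    push_cast
    linear_combination (norm := module) hs
  have hsolv : (Aop v : ℋ) + cst m • ((v : ℋ)) = Aop ⟨y, hy⟩ := by
    have h1 : (Aop v : ℋ) = Aop ⟨y, hy⟩ - cst m • (Aop u : ℋ) := by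
      rw [hveq, map_sub, map_smul]
    have h2 : ((v : ℋ)) = (Aop u : ℋ) := rfl
    rw [h2, h1]
    abel
  have := solm_unique hA m (Aop ⟨y, hy⟩) v hsolv
  rw [← this]

lemma tendsto_solm_mem (hA : IsSelfAdjointOp D Aop) {y : ℋ} (hy : y ∈ D) :
    Tendsto (fun m => cst m • ((solm hA m y : ℋ))) atTop (nhds y) := by
  rw [tendsto_iff_norm_sub_tendsto_zero]
  have hb : ∀ m : ℕ, ‖cst m • ((solm hA m y : ℋ)) - y‖ ≤ ‖(Aop ⟨y, hy⟩ : ℋ)‖ / ((m : ℝ) + 1) := by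
    intro m
    have hs := solm_spec hA m y
    have h1 : cst m • ((solm hA m y : ℋ)) - y = -(Aop (solm hA m y) : ℋ) := by
      linear_combination (norm := module) hs
    rw [h1, norm_neg, solm_comm hA m hy]
    have h2 := solm_norm hA m (Aop ⟨y, hy⟩)
    rw [le_div_iff₀ (by positivity : (0:ℝ) < (m : ℝ) + 1)]
    linarith
  have hbt : Tendsto (fun m : ℕ => ‖(Aop ⟨y, hy⟩ : ℋ)‖ / ((m : ℝ) + 1)) atTop (nhds 0) := by
    have h3 := (tendsto_const_div_atTop_nhds_zero_nat ‖(Aop ⟨y, hy⟩ : ℋ)‖).comp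
      (tendsto_add_atTop_nat 1)
    refine h3.congr fun m => ?_
    have hmc : ((m + 1 : ℕ) : ℝ) = (m : ℝ) + 1 := by push_cast; ring
    simp [Function.comp, hmc]
  exact squeeze_zero (fun m => norm_nonneg _) hb hbt

lemma tendsto_solm (hA : IsSelfAdjointOp D Aop) (y : ℋ) :
    Tendsto (fun m => cst m • ((solm hA m y : ℋ))) atTop (nhds y) := by
  rw [Metric.tendsto_atTop]
  intro ε hε
  obtain ⟨y', hy', hclose⟩ : ∃ y' ∈ D, dist y y' < ε / 3 := by
    have hmem : y ∈ closure (D : Set ℋ) := by rw [hA.1.closure_eq]; trivial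
    exact Metric.mem_closure_iff.mp hmem (ε / 3) (by linarith)
  have ht := tendsto_solm_mem hA hy'
  rw [Metric.tendsto_atTop] at ht
  obtain ⟨N, hN⟩ := ht (ε / 3) (by linarith)
  refine ⟨N, fun m hm => ?_⟩
  have h1 := hN m hm
  rw [dist_eq_norm] at h1 ⊢
  have hsplit : cst m • ((solm hA m y : ℋ)) - y =
      (cst m • ((solm hA m (y - y') : ℋ))) + (cst m • ((solm hA m y' : ℋ)) - y') + (y' - y) := by
    rw [← solm_sub hA m y y']
    push_cast
    rw [smul_sub]
    abel
  rw [hsplit]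
  have b1 : ‖cst m • ((solm hA m (y - y') : ℋ))‖ ≤ ‖y - y'‖ := solm_smul_norm hA m (y - y')
  have b3 : ‖y' - y‖ = ‖y - y'‖ := norm_sub_rev _ _
  have b4 : ‖y - y'‖ < ε / 3 := by rw [← dist_eq_norm]; exact hclose
  calc ‖cst m • ((solm hA m (y - y') : ℋ)) + (cst m • ((solm hA m y' : ℋ)) - y') + (y' - y)‖
      ≤ ‖cst m • ((solm hA m (y - y') : ℋ))‖ + ‖cst m • ((solm hA m y' : ℋ)) - y'‖ + ‖y' - y‖ :=
        norm_add₃_le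
    _ < ε := by rw [b3]; linarith

noncomputable def app (hA : IsSelfAdjointOp D Aop) (ξ : ℋ) (m : ℕ) : ℋ :=
  cst m • ((solm hA m ξ : ℋ))

lemma iter_app (hA : IsSelfAdjointOp D Aop) {ξ : ℋ} {k : ℕ} (hξ : ξ ∈ domPow D Aop k) (m : ℕ) :
    ∀ j, j ≤ k →
      (Aext D Aop)^[j] (app hA ξ m) = cst m • ((solm hA m ((Aext D Aop)^[j] ξ) : ℋ)) := by
  intro j
  induction j with
  | zero => intro _; rfl
  | succ j ih =>
    intro hjk
    have hj : j ≤ k := le_of_lt (Nat.lt_of_succ_le hjk)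
    rw [Function.iterate_succ_apply', ih hj]
    have hmemD : (Aext D Aop)^[j] ξ ∈ D := hξ j (Nat.lt_of_succ_le hjk)
    have hsm : cst m • ((solm hA m ((Aext D Aop)^[j] ξ) : ℋ)) ∈ D :=
      D.smul_mem _ (solm hA m ((Aext D Aop)^[j] ξ)).2
    rw [Aext_of_mem hsm]
    have heq : (⟨cst m • ((solm hA m ((Aext D Aop)^[j] ξ) : ℋ)), hsm⟩ : ↥D)
        = cst m • solm hA m ((Aext D Aop)^[j] ξ) := rfl
    rw [heq, map_smul]
    have h2 : (Aop (solm hA m ((Aext D Aop)^[j] ξ)) : ℋ)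
        = ((solm hA m (Aop ⟨(Aext D Aop)^[j] ξ, hmemD⟩) : ℋ)) := solm_comm hA m hmemD
    rw [h2]
    congr 2
    rw [Function.iterate_succ_apply', Aext_of_mem hmemD]

lemma app_mem_domPow (hA : IsSelfAdjointOp D Aop) {ξ : ℋ} {k : ℕ}
    (hξ : ξ ∈ domPow D Aop k) (m : ℕ) : app hA ξ m ∈ domPow D Aop (k + 1) := by
  intro j hj
  rw [iter_app hA hξ m j (Nat.lt_succ_iff.mp hj)]
  exact D.smul_mem _ (solm hA m _).2

lemma tendsto_iter_app (hA : IsSelfAdjointOp D Aop) {ξ : ℋ} {k : ℕ}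
    (hξ : ξ ∈ domPow D Aop k) {j : ℕ} (hj : j ≤ k) :
    Tendsto (fun m => (Aext D Aop)^[j] (app hA ξ m)) atTop (nhds ((Aext D Aop)^[j] ξ)) :=
  (tendsto_solm hA ((Aext D Aop)^[j] ξ)).congr fun m => (iter_app hA hξ m j hj).symm

lemma pascal_sum (f : ℕ → ℂ) (k : ℕ) :
    ∑ i ∈ Finset.range (k + 2), ((k + 1).choose i : ℂ) * f i
      = ∑ j ∈ Finset.range (k + 1), (k.choose j : ℂ) * (f j + f (j + 1)) := by
  have h1 : ∑ i ∈ Finset.range (k + 2), ((k + 1).choose i : ℂ) * f i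
      = (∑ i ∈ Finset.range (k + 1), ((k + 1).choose (i + 1) : ℂ) * f (i + 1))
        + ((k + 1).choose 0 : ℂ) * f 0 := Finset.sum_range_succ' _ (k + 1)
  have h2 : ∑ i ∈ Finset.range (k + 2), (k.choose i : ℂ) * f i
      = (∑ i ∈ Finset.range (k + 1), (k.choose (i + 1) : ℂ) * f (i + 1))
        + (k.choose 0 : ℂ) * f 0 := Finset.sum_range_succ' _ (k + 1)
  have h3 : ∑ i ∈ Finset.range (k + 2), (k.choose i : ℂ) * f i
      = ∑ i ∈ Finset.range (k + 1), (k.choose i : ℂ) * f i := by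
    rw [Finset.sum_range_succ]
    simp [Nat.choose_eq_zero_of_lt (Nat.lt_succ_self k)]
  simp only [Nat.choose_zero_right, Nat.cast_one, one_mul] at h1 h2
  have e4 : ∑ i ∈ Finset.range (k + 1), ((k + 1).choose (i + 1) : ℂ) * f (i + 1)
      = (∑ i ∈ Finset.range (k + 1), (k.choose i : ℂ) * f (i + 1))
        + ∑ i ∈ Finset.range (k + 1), (k.choose (i + 1) : ℂ) * f (i + 1) := by
    rw [← Finset.sum_add_distrib]
    refine Finset.sum_congr rfl fun i _ => ?_
    rw [Nat.choose_succ_succ]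
    push_cast
    ring
  have e7 : ∑ j ∈ Finset.range (k + 1), (k.choose j : ℂ) * (f j + f (j + 1))
      = (∑ j ∈ Finset.range (k + 1), (k.choose j : ℂ) * f j)
        + ∑ j ∈ Finset.range (k + 1), (k.choose j : ℂ) * f (j + 1) := by
    rw [← Finset.sum_add_distrib]
    exact Finset.sum_congr rfl fun j _ => by ring
  linear_combination h1 + e4 - e7 + h3 - h2

lemma ad1_apply {X Z : ℋ →L[ℂ] ℋ} (hZ : AdExistsN D Aop 1 X Z) {u v : ℋ}
    (hu : u ∈ D) (hv : v ∈ D) :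
    (inner ℂ (Z u) v : ℂ)
      = (inner ℂ (X u) (Aext D Aop v) : ℂ) - (inner ℂ (X (Aext D Aop u)) v : ℂ) := by
  have hu1 : u ∈ domPow D Aop 1 := by
    intro j hj
    have hj0 : j = 0 := Nat.lt_one_iff.mp hj
    subst hj0
    simpa using hu
  have hv1 : v ∈ domPow D Aop 1 := by
    intro j hj
    have hj0 : j = 0 := Nat.lt_one_iff.mp hj
    subst hj0
    simpa using hv
  have h := hZ u hu1 v hv1
  simp only [commForm, Finset.sum_range_succ, Finset.sum_range_zero, Function.iterate_zero_apply,
    Function.iterate_one, Nat.choose_zero_right, Nat.choose_one_right, Nat.choose_self,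
    Nat.cast_one, pow_zero, pow_one, Nat.sub_self, Nat.sub_zero] at h
  linear_combination -h

lemma commForm_step {X Z : ℋ →L[ℂ] ℋ} (hZ : AdExistsN D Aop 1 X Z) {k : ℕ} {ξ η : ℋ}
    (hξ : ξ ∈ domPow D Aop (k + 1)) (hη : η ∈ domPow D Aop (k + 1)) :
    commForm D Aop X (k + 1) ξ η = commForm D Aop Z k ξ η := by
  have hL : commForm D Aop X (k + 1) ξ η
      = ∑ i ∈ Finset.range (k + 2),
          ((k + 1).choose i : ℂ) *
            ((-1) ^ i * (inner ℂ (X ((Aext D Aop)^[i] ξ)) ((Aext D Aop)^[(k + 1) - i] η) : ℂ)) := by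
    unfold commForm
    exact Finset.sum_congr rfl fun i _ => by ring
  have hR : commForm D Aop Z k ξ η
      = ∑ j ∈ Finset.range (k + 1),
          (k.choose j : ℂ) *
            (((-1) ^ j * (inner ℂ (X ((Aext D Aop)^[j] ξ)) ((Aext D Aop)^[(k + 1) - j] η) : ℂ))
              + ((-1) ^ (j + 1) *
                (inner ℂ (X ((Aext D Aop)^[j + 1] ξ)) ((Aext D Aop)^[(k + 1) - (j + 1)] η) : ℂ))) := by
    unfold commForm
    refine Finset.sum_congr rfl fun j hj => ?_
    have hjk : j ≤ k := Nat.lt_succ_iff.mp (Finset.mem_range.mp hj)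
    have hξj : (Aext D Aop)^[j] ξ ∈ D := hξ j (Nat.lt_succ_of_le hjk)
    have hηj : (Aext D Aop)^[k - j] η ∈ D := hη (k - j) (Nat.lt_succ_of_le (Nat.sub_le k j))
    have h1 := ad1_apply hZ hξj hηj
    rw [h1]
    have e1 : (Aext D Aop)^[(k + 1) - j] η = Aext D Aop ((Aext D Aop)^[k - j] η) := by
      have hh : (k + 1) - j = (k - j) + 1 := by omega
      rw [hh, Function.iterate_succ_apply']
    have e2 : (Aext D Aop)^[j + 1] ξ = Aext D Aop ((Aext D Aop)^[j] ξ) :=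
      Function.iterate_succ_apply' _ j ξ
    have e3 : (k + 1) - (j + 1) = k - j := Nat.succ_sub_succ k j
    rw [e1, e2, e3]
    ring
  rw [hL, hR, pascal_sum (fun i => (-1) ^ i *
    (inner ℂ (X ((Aext D Aop)^[i] ξ)) ((Aext D Aop)^[(k + 1) - i] η) : ℂ)) k]

end Aux

/-- `X ∈ C_{n+1}(A)` iff `ad_A X` exists in `B(ℋ)` and belongs to `C_n(A)`;
moreover in that case `ad_A^k (ad_A X) = ad_A^{k+1} X` for `k = 0,1,…,n`. -/
theorem stmt_13 {ℋ : Type*} [NormedAddCommGroup ℋ] [InnerProductSpace ℂ ℋ] [CompleteSpace ℋ]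
    (D : Submodule ℂ ℋ) (Aop : ↥D →ₗ[ℂ] ℋ) (hA : IsSelfAdjointOp D Aop)
    (n : ℕ) (X : ℋ →L[ℂ] ℋ) :
    (InCn D Aop (n + 1) X ↔ ∃ Z : ℋ →L[ℂ] ℋ, AdExistsN D Aop 1 X Z ∧ InCn D Aop n Z) ∧
      ∀ Z : ℋ →L[ℂ] ℋ, AdExistsN D Aop 1 X Z → ∀ k, k ≤ n →
        ∀ W : ℋ →L[ℂ] ℋ, AdExistsN D Aop k Z W → AdExistsN D Aop (k + 1) X W := by
  obtain ⟨hdense, hsym, hmax⟩ := id hA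
  have part2 : ∀ Z : ℋ →L[ℂ] ℋ, AdExistsN D Aop 1 X Z → ∀ k, k ≤ n →
      ∀ W : ℋ →L[ℂ] ℋ, AdExistsN D Aop k Z W → AdExistsN D Aop (k + 1) X W := by
    intro Z hZ k _ W hW ξ hξ η hη
    rw [commForm_step hZ hξ hη]
    exact hW ξ (domPow_anti (Nat.le_succ k) hξ) η (domPow_anti (Nat.le_succ k) hη)
  have keylim : ∀ (Y W : ℋ →L[ℂ] ℋ) (k : ℕ),
      (∀ ξ' ∈ domPow D Aop (k + 1), ∀ η' ∈ domPow D Aop (k + 1),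
        commForm D Aop Y k ξ' η' = (inner ℂ (W ξ') η' : ℂ)) →
      AdExistsN D Aop k Y W := by
    intro Y W k h ξ hξ η hη
    have h1 : Tendsto (fun m => commForm D Aop Y k (app hA ξ m) (app hA η m)) atTop
        (nhds (commForm D Aop Y k ξ η)) := by
      unfold commForm
      apply tendsto_finset_sum
      intro i hi
      have hik : i ≤ k := Nat.lt_succ_iff.mp (Finset.mem_range.mp hi)
      have ta : Tendsto (fun m => (Aext D Aop)^[i] (app hA ξ m)) atTop
          (nhds ((Aext D Aop)^[i] ξ)) := tendsto_iter_app hA hξ hik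
      have tb : Tendsto (fun m => (Aext D Aop)^[k - i] (app hA η m)) atTop
          (nhds ((Aext D Aop)^[k - i] η)) := tendsto_iter_app hA hη (Nat.sub_le k i)
      have tc : Tendsto (fun m => Y ((Aext D Aop)^[i] (app hA ξ m))) atTop
          (nhds (Y ((Aext D Aop)^[i] ξ))) := (Y.continuous.tendsto _).comp ta
      exact (Filter.Tendsto.inner tc tb).const_mul _
    have taξ : Tendsto (fun m => app hA ξ m) atTop (nhds ξ) := by
      have := tendsto_iter_app hA hξ (Nat.zero_le k)
      simpa using this
    have taη : Tendsto (fun m => app hA η m) atTop (nhds η) := by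
      have := tendsto_iter_app hA hη (Nat.zero_le k)
      simpa using this
    have h2 : Tendsto (fun m => (inner ℂ (W (app hA ξ m)) (app hA η m) : ℂ)) atTop
        (nhds (inner ℂ (W ξ) η : ℂ)) :=
      Filter.Tendsto.inner ((W.continuous.tendsto _).comp taξ) taη
    have h3 : ∀ m, commForm D Aop Y k (app hA ξ m) (app hA η m)
        = (inner ℂ (W (app hA ξ m)) (app hA η m) : ℂ) := fun m =>
      h _ (app_mem_domPow hA hξ m) _ (app_mem_domPow hA hη m)
    exact tendsto_nhds_unique (h1.congr fun m => h3 m) h2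
  refine ⟨⟨?_, ?_⟩, part2⟩
  · intro hX
    obtain ⟨Z, hZ⟩ := hX 1 (by omega)
    refine ⟨Z, hZ, ?_⟩
    intro k hk
    obtain ⟨W, hW⟩ := hX (k + 1) (by omega)
    refine ⟨W, keylim Z W k ?_⟩
    intro ξ' hξ' η' hη'
    rw [← commForm_step hZ hξ' hη']
    exact hW ξ' hξ' η' hη'
  · rintro ⟨Z, hZ, hZC⟩
    intro k hk
    match k, hk with
    | 0, _ => exact ⟨X, fun ξ _ η _ => by simp [commForm]⟩
    | j + 1, hk =>
      obtain ⟨W, hW⟩ := hZC j (by omega)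
      exact ⟨W, part2 Z hZ j (by omega) W hW⟩
end
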